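/- arXiv:1411.1701 — 7 statements merged into one kernel-verified Lean document; each statement's English description precedes it below -/
import Mathlib

section
/- For every m×n transportation polytope P(u,v) with positive margins and any two vertices O and F of P(u,v), there exists a feasible circuit walk from O to F of length at most m + n − 1. In particular, the feasible circuit diameter of every m×n transportation polytope is at most the Hirsch bound m + n − 1. -/
def TP (m n : ℕ) (u : Fin m → ℝ) (v : Fin n → ℝ) : Set (Matrix (Fin m) (Fin n) ℝ) :=
  {y | (∀ i j, 0 ≤ y i j) ∧ (∀ i, ∑ j, y i j = u i) ∧ (∀ j, ∑ i, y i j = v j)}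

def IsCircuit (m n : ℕ) (g : Matrix (Fin m) (Fin n) ℝ) : Prop :=
  g ≠ 0 ∧ (∀ i, ∑ j, g i j = 0) ∧ (∀ j, ∑ i, g i j = 0) ∧
    ∀ h : Matrix (Fin m) (Fin n) ℝ, h ≠ 0 → (∀ i, ∑ j, h i j = 0) →
      (∀ j, ∑ i, h i j = 0) →
      {p : Fin m × Fin n | h p.1 p.2 ≠ 0} ⊆ {p : Fin m × Fin n | g p.1 p.2 ≠ 0} →
      {p : Fin m × Fin n | h p.1 p.2 ≠ 0} = {p : Fin m × Fin n | g p.1 p.2 ≠ 0}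

namespace TPAux

abbrev Mat (m n : ℕ) := Matrix (Fin m) (Fin n) ℝ

def msupp {m n : ℕ} (d : Mat m n) : Set (Fin m × Fin n) := {p | d p.1 p.2 ≠ 0}

/-- zero-row/col-sum matrices supported in T -/
def V (m n : ℕ) (T : Set (Fin m × Fin n)) : Submodule ℝ (Mat m n) where
  carrier := {x | (∀ p : Fin m × Fin n, p ∉ T → x p.1 p.2 = 0) ∧
    (∀ i, ∑ j, x i j = 0) ∧ (∀ j, ∑ i, x i j = 0)}
  add_mem' := by
    rintro a b ⟨ha1, ha2, ha3⟩ ⟨hb1, hb2, hb3⟩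
    refine ⟨fun p hp => ?_, fun i => ?_, fun j => ?_⟩
    · simp [Matrix.add_apply, ha1 p hp, hb1 p hp]
    · simp [Matrix.add_apply, Finset.sum_add_distrib, ha2 i, hb2 i]
    · simp [Matrix.add_apply, Finset.sum_add_distrib, ha3 j, hb3 j]
  zero_mem' := by
    refine ⟨fun p _ => rfl, fun i => ?_, fun j => ?_⟩ <;> simp
  smul_mem' := by
    rintro c a ⟨ha1, ha2, ha3⟩
    refine ⟨fun p hp => ?_, fun i => ?_, fun j => ?_⟩
    · simp [Matrix.smul_apply, ha1 p hp]
    · simp [Matrix.smul_apply, ← Finset.mul_sum, ha2 i]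
    · simp [Matrix.smul_apply, ← Finset.mul_sum, ha3 j]

lemma V_mono {m n : ℕ} {T T' : Set (Fin m × Fin n)} (h : T ⊆ T') : V m n T ≤ V m n T' := by
  rintro x ⟨h1, h2, h3⟩
  exact ⟨fun p hp => h1 p (fun hc => hp (h hc)), h2, h3⟩

lemma mem_V {m n : ℕ} {T : Set (Fin m × Fin n)} {x : Mat m n} :
    x ∈ V m n T ↔ (∀ p : Fin m × Fin n, p ∉ T → x p.1 p.2 = 0) ∧
      (∀ i, ∑ j, x i j = 0) ∧ (∀ j, ∑ i, x i j = 0) := Iff.rfl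

lemma sub_mem_V {m n : ℕ} {u : Fin m → ℝ} {v : Fin n → ℝ} {y F : Mat m n}
    (hy : y ∈ TP m n u v) (hF : F ∈ TP m n u v) :
    F - y ∈ V m n (msupp (F - y)) := by
  refine ⟨fun p hp => by simpa [msupp] using hp, fun i => ?_, fun j => ?_⟩
  · simp [Matrix.sub_apply, Finset.sum_sub_distrib, hy.2.1 i, hF.2.1 i]
  · simp [Matrix.sub_apply, Finset.sum_sub_distrib, hy.2.2 j, hF.2.2 j]

/-- extreme point ⇒ no nonzero zero-sum matrix supported inside its support -/
lemma extreme_V_trivial {m n : ℕ} {u : Fin m → ℝ} {v : Fin n → ℝ} {O : Mat m n}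
    (hO : O ∈ Set.extremePoints ℝ (TP m n u v)) :
    ∀ x ∈ V m n (msupp O), x = 0 := by
  classical
  intro g hg
  by_contra hg0
  obtain ⟨hg1, hg2, hg3⟩ := hg
  have hOmem : O ∈ TP m n u v := hO.1
  set s : Finset (Fin m × Fin n) := Finset.univ.filter (fun p => g p.1 p.2 ≠ 0) with hs
  have hne : s.Nonempty := by
    by_contra hempty
    apply hg0
    ext i j
    have : (i, j) ∉ s := fun hmem => hempty ⟨_, hmem⟩
    simpa [hs] using this
  set ε : ℝ := s.inf' hne (fun p => O p.1 p.2 / |g p.1 p.2|) with hε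
  have hOpos : ∀ p ∈ s, 0 < O p.1 p.2 := by
    intro p hp
    have hgp : g p.1 p.2 ≠ 0 := by simpa [hs] using hp
    have hOne : O p.1 p.2 ≠ 0 := by
      intro h0
      exact hgp (hg1 p (by simp [msupp, h0]))
    exact lt_of_le_of_ne (hOmem.1 p.1 p.2) (Ne.symm hOne)
  have hεpos : 0 < ε := by
    rw [hε, Finset.lt_inf'_iff]
    intro p hp
    have hgp : g p.1 p.2 ≠ 0 := by simpa [hs] using hp
    exact div_pos (hOpos p hp) (abs_pos.mpr hgp)
  have hbound : ∀ p : Fin m × Fin n, ε * |g p.1 p.2| ≤ O p.1 p.2 := by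
    intro p
    by_cases hgp : g p.1 p.2 = 0
    · simp [hgp]
      exact (hOmem.1 p.1 p.2)
    · have hp : p ∈ s := by simp [hs, hgp]
      have := Finset.inf'_le (b := p) (fun q => O q.1 q.2 / |g q.1 q.2|) hp
      rw [← hε] at this
      exact (le_div_iff₀ (abs_pos.mpr hgp)).mp this
  have hmem1 : O + ε • g ∈ TP m n u v := by
    refine ⟨fun i j => ?_, fun i => ?_, fun j => ?_⟩
    · have h1 := hbound (i, j)
      have h2 : ε * (-(|g i j|)) ≤ ε * g i j :=
        mul_le_mul_of_nonneg_left (neg_abs_le _) hεpos.le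
      simp only [Matrix.add_apply, Matrix.smul_apply, smul_eq_mul]
      simp at h1 h2 ⊢
      linarith
    · simp [Matrix.add_apply, Matrix.smul_apply, Finset.sum_add_distrib, smul_eq_mul,
        ← Finset.mul_sum, hg2 i, hOmem.2.1 i]
    · simp [Matrix.add_apply, Matrix.smul_apply, Finset.sum_add_distrib, smul_eq_mul,
        ← Finset.mul_sum, hg3 j, hOmem.2.2 j]
  have hmem2 : O - ε • g ∈ TP m n u v := by
    refine ⟨fun i j => ?_, fun i => ?_, fun j => ?_⟩
    · have h1 := hbound (i, j)
      have h2 : ε * g i j ≤ ε * |g i j| :=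
        mul_le_mul_of_nonneg_left (le_abs_self _) hεpos.le
      simp only [Matrix.sub_apply, Matrix.smul_apply, smul_eq_mul]
      linarith
    · simp [Matrix.sub_apply, Matrix.smul_apply, Finset.sum_sub_distrib, smul_eq_mul,
        ← Finset.mul_sum, hg2 i, hOmem.2.1 i]
    · simp [Matrix.sub_apply, Matrix.smul_apply, Finset.sum_sub_distrib, smul_eq_mul,
        ← Finset.mul_sum, hg3 j, hOmem.2.2 j]
  have hseg : O ∈ openSegment ℝ (O - ε • g) (O + ε • g) := by
    refine ⟨1/2, 1/2, by norm_num, by norm_num, by norm_num, ?_⟩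
    module
  have := hO.2 hmem2 hmem1 hseg
  have hεg : ε • g = 0 := by
    have h' : O - ε • g = O := this
    linear_combination (norm := module) -h'
  exact hg0 (by simpa [hεpos.ne'] using (smul_eq_zero.mp hεg))


open Classical in
/-- row/col sums of the restriction to the support of O -/
noncomputable def phiO {m n : ℕ} (O : Mat m n) :
    Mat m n →ₗ[ℝ] (Fin m → ℝ) × (Fin n → ℝ) where
  toFun x := (fun i => ∑ j, if O i j = 0 then 0 else x i j,
              fun j => ∑ i, if O i j = 0 then 0 else x i j)
  map_add' a b := by
    refine Prod.ext ?_ ?_ <;> funext k <;>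
      · simp only [Prod.fst_add, Prod.snd_add, Pi.add_apply, Matrix.add_apply,
          ← Finset.sum_add_distrib]
        refine Finset.sum_congr rfl fun _ _ => ?_
        split <;> simp
  map_smul' c a := by
    refine Prod.ext ?_ ?_ <;> funext k <;>
      · simp only [Prod.smul_fst, Prod.smul_snd, Pi.smul_apply, Matrix.smul_apply,
          smul_eq_mul, RingHom.id_apply, Finset.mul_sum]
        refine Finset.sum_congr rfl fun _ _ => ?_
        split <;> simp

def Lmap (m n : ℕ) : ((Fin m → ℝ) × (Fin n → ℝ)) →ₗ[ℝ] ℝ where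
  toFun p := ∑ i, p.1 i - ∑ j, p.2 j
  map_add' a b := by simp [Finset.sum_add_distrib]; ring
  map_smul' c a := by simp [← Finset.mul_sum]; ring

lemma finrank_ker_Lmap (m n : ℕ) (hm : 0 < m) :
    Module.finrank ℝ (LinearMap.ker (Lmap m n)) = m + n - 1 := by
  have hrn := LinearMap.finrank_range_add_finrank_ker (Lmap m n)
  have hsurj : LinearMap.range (Lmap m n) = ⊤ := by
    rw [LinearMap.range_eq_top]
    intro c
    exact ⟨(Pi.single ⟨0, hm⟩ c, 0), by simp [Lmap, Finset.sum_pi_single']⟩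
  rw [hsurj, finrank_top] at hrn
  have hP : Module.finrank ℝ ((Fin m → ℝ) × (Fin n → ℝ)) = m + n := by
    simp [Module.finrank_prod, Module.finrank_pi]
  have hR : Module.finrank ℝ ℝ = 1 := Module.finrank_self ℝ
  omega

lemma phiO_mem_ker {m n : ℕ} (O : Mat m n) (x : Mat m n) :
    phiO O x ∈ LinearMap.ker (Lmap m n) := by
  classical
  simp only [LinearMap.mem_ker, Lmap, phiO, LinearMap.coe_mk, AddHom.coe_mk, sub_eq_zero]
  exact Finset.sum_comm

lemma finrank_V_union_le {m n : ℕ} (hm : 0 < m) (O F : Mat m n)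
    (hVO : ∀ x ∈ V m n (msupp O), x = 0) (hVF : ∀ x ∈ V m n (msupp F), x = 0) :
    Module.finrank ℝ (V m n (msupp O ∪ msupp F)) ≤ m + n - 1 := by
  classical
  set S : Set (Fin m × Fin n) := msupp O ∪ msupp F with hS
  set Z := LinearMap.ker (Lmap m n) with hZ
  let f : (V m n S) →ₗ[ℝ] Z :=
    LinearMap.codRestrict Z ((phiO O).comp (V m n S).subtype)
      (fun x => phiO_mem_ker O x.val)
  have hker : ∀ x : V m n S, f x = 0 → x = 0 := by
    rintro ⟨x, hx⟩ h0
    obtain ⟨hx1, hx2, hx3⟩ := mem_V.mp hx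
    have h0' : phiO O x = 0 := by
      have := congrArg Subtype.val h0
      simpa [f, LinearMap.codRestrict] using this
    have hrow : ∀ i, ∑ j, (if O i j = 0 then 0 else x i j) = 0 := by
      intro i
      have := congrFun (congrArg Prod.fst h0') i
      simpa [phiO] using this
    have hcol : ∀ j, ∑ i, (if O i j = 0 then 0 else x i j) = 0 := by
      intro j
      have := congrFun (congrArg Prod.snd h0') j
      simpa [phiO] using this
    set t : Mat m n := Matrix.of (fun i j => if O i j = 0 then 0 else x i j) with ht
    have htmem : t ∈ V m n (msupp O) := by
      rw [mem_V]
      refine ⟨fun p hp => ?_, hrow, hcol⟩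
      have : O p.1 p.2 = 0 := by simpa [msupp] using hp
      simp [ht, this]
    have ht0 : t = 0 := hVO t htmem
    have hxO : ∀ p : Fin m × Fin n, O p.1 p.2 ≠ 0 → x p.1 p.2 = 0 := by
      intro p hO0
      have := congrFun (congrFun ht0 p.1) p.2
      simpa [ht, hO0] using this
    have hxF : x ∈ V m n (msupp F) := by
      rw [mem_V]
      refine ⟨fun p hp => ?_, hx2, hx3⟩
      by_contra hxp
      have hmem : p ∈ S := by
        by_contra hns
        exact hxp (hx1 p hns)
      rcases hmem with hpo | hpf
      · exact hxp (hxO p hpo)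
      · exact hp hpf
    have := hVF x hxF
    exact Subtype.ext this
  have hinj : Function.Injective f :=
    LinearMap.ker_eq_bot.mp (LinearMap.ker_eq_bot'.mpr hker)
  have hle := LinearMap.finrank_le_finrank_of_injective hinj
  rwa [hZ, finrank_ker_Lmap m n hm] at hle


/-- g is sign-compatible with d on its support -/
def Conformal {m n : ℕ} (d g : Mat m n) : Prop :=
  ∀ p : Fin m × Fin n, g p.1 p.2 ≠ 0 → 0 < g p.1 p.2 * d p.1 p.2

lemma matrix_ne_zero_iff {m n : ℕ} {h : Mat m n} :
    h ≠ 0 ↔ ∃ p : Fin m × Fin n, h p.1 p.2 ≠ 0 := by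
  constructor
  · intro hne
    by_contra hall
    push_neg at hall
    exact hne (by ext i j; exact hall (i, j))
  · rintro ⟨p, hp⟩ h0
    exact hp (by simp [h0])

/-- reduction step: given a conformal h and a kernel element h' with strictly smaller
support interacting positively with h somewhere, produce a conformal element with
strictly smaller support. -/
lemma reduce {m n : ℕ} (d h h' : Mat m n)
    (hh2 : ∀ i, ∑ j, h i j = 0) (hh3 : ∀ j, ∑ i, h i j = 0) (hhc : Conformal d h)
    (hr : ∀ i, ∑ j, h' i j = 0) (hc : ∀ j, ∑ i, h' i j = 0)
    (hsub : ∀ p : Fin m × Fin n, h' p.1 p.2 ≠ 0 → h p.1 p.2 ≠ 0)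
    (e0 : Fin m × Fin n) (he0 : h e0.1 e0.2 ≠ 0) (he0' : h' e0.1 e0.2 = 0)
    (e1 : Fin m × Fin n) (he1 : 0 < h e1.1 e1.2 * h' e1.1 e1.2) :
    ∃ h₂ : Mat m n, (h₂ ≠ 0 ∧ (∀ i, ∑ j, h₂ i j = 0) ∧ (∀ j, ∑ i, h₂ i j = 0) ∧
        Conformal d h₂) ∧
      {p : Fin m × Fin n | h₂ p.1 p.2 ≠ 0}.ncard < {p : Fin m × Fin n | h p.1 p.2 ≠ 0}.ncard := by
  classical
  set E : Finset (Fin m × Fin n) :=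
    Finset.univ.filter (fun p => 0 < h p.1 p.2 * h' p.1 p.2) with hE
  have hEne : E.Nonempty := ⟨e1, by simp [hE, he1]⟩
  set t : ℝ := E.inf' hEne (fun p => h p.1 p.2 / h' p.1 p.2) with htdef
  have hratio : ∀ p ∈ E, 0 < h p.1 p.2 / h' p.1 p.2 := by
    intro p hp
    have hp' : 0 < h p.1 p.2 * h' p.1 p.2 := by simpa [hE] using hp
    rcases mul_pos_iff.mp hp' with ⟨h1, h2⟩ | ⟨h1, h2⟩
    · exact div_pos h1 h2
    · exact div_pos_of_neg_of_neg h1 h2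
  have ht : 0 < t := by
    rw [htdef, Finset.lt_inf'_iff]
    exact hratio
  obtain ⟨estar, hestar, hteq⟩ := Finset.exists_mem_eq_inf' hEne
    (fun p => h p.1 p.2 / h' p.1 p.2)
  have hestar' : 0 < h estar.1 estar.2 * h' estar.1 estar.2 := by simpa [hE] using hestar
  have hbstar : h' estar.1 estar.2 ≠ 0 := by
    intro h0; rw [h0] at hestar'; simp at hestar'
  set h₂ : Mat m n := h - t • h' with hh₂
  have h₂app : ∀ p : Fin m × Fin n, h₂ p.1 p.2 = h p.1 p.2 - t * h' p.1 p.2 := by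
    intro p; simp [hh₂, Matrix.sub_apply, Matrix.smul_apply, smul_eq_mul]
  -- key conformality with h
  have hkey : ∀ p : Fin m × Fin n, h₂ p.1 p.2 ≠ 0 →
      0 < h₂ p.1 p.2 * h p.1 p.2 := by
    intro p hp2
    set a := h p.1 p.2 with ha
    set b := h' p.1 p.2 with hb
    have hane : a ≠ 0 := by
      intro ha0
      have hb0 : b = 0 := by
        by_contra hb0
        exact (hsub p hb0) ha0
      exact hp2 (by rw [h₂app p, ← ha, ← hb, ha0, hb0]; ring)
    rw [h₂app p, ← ha, ← hb] at hp2 ⊢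
    by_cases hcase : 0 < a * b
    · have hpE : p ∈ E := by simp [hE, ← ha, ← hb, hcase]
      have htle : t ≤ a / b := by
        rw [htdef]
        exact Finset.inf'_le _ hpE
      have hbne : b ≠ 0 := by intro h0; rw [h0] at hcase; simp at hcase
      have h1 : t * (a * b) ≤ (a / b) * (a * b) :=
        mul_le_mul_of_nonneg_right htle hcase.le
      have h2 : (a / b) * (a * b) = a * a := by field_simp
      have hge : 0 ≤ (a - t * b) * a := by nlinarith
      have hne : (a - t * b) * a ≠ 0 := mul_ne_zero hp2 hane
      exact lt_of_le_of_ne hge (Ne.symm hne)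
    · push_neg at hcase
      have h1 : t * (a * b) ≤ 0 := mul_nonpos_of_nonneg_of_nonpos ht.le hcase
      have h2 : 0 < a * a := mul_self_pos.mpr hane
      nlinarith
  have hsupp2 : ∀ p : Fin m × Fin n, h₂ p.1 p.2 ≠ 0 → h p.1 p.2 ≠ 0 := by
    intro p hp2
    intro ha0
    have := hkey p hp2
    rw [ha0, mul_zero] at this
    exact lt_irrefl 0 this
  have hconf2 : Conformal d h₂ := by
    intro p hp2
    have hk := hkey p hp2
    have hane : h p.1 p.2 ≠ 0 := hsupp2 p hp2
    have hd := hhc p hane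
    nlinarith [mul_pos hk hd, mul_self_pos.mpr hane]
  have hzero_star : h₂ estar.1 estar.2 = 0 := by
    have hteq' : t = h estar.1 estar.2 / h' estar.1 estar.2 := by rw [htdef, hteq]
    rw [h₂app, hteq']
    field_simp
    ring
  have hne2 : h₂ ≠ 0 := by
    rw [matrix_ne_zero_iff]
    exact ⟨e0, by rw [h₂app, he0']; simpa using he0⟩
  refine ⟨h₂, ⟨hne2, fun i => ?_, fun j => ?_, hconf2⟩, ?_⟩
  · simp [hh₂, Matrix.sub_apply, Matrix.smul_apply, smul_eq_mul, Finset.sum_sub_distrib,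
      ← Finset.mul_sum, hh2 i, hr i]
  · simp [hh₂, Matrix.sub_apply, Matrix.smul_apply, smul_eq_mul, Finset.sum_sub_distrib,
      ← Finset.mul_sum, hh3 j, hc j]
  · refine Set.ncard_lt_ncard ?_ (Set.toFinite _)
    constructor
    · intro p hp
      exact hsupp2 p hp
    · intro hcon
      have hmem : estar ∈ {p : Fin m × Fin n | h p.1 p.2 ≠ 0} := by
        intro ha0; rw [ha0] at hestar'; simp at hestar'
      have := hcon hmem
      exact this hzero_star

lemma exists_conformal_circuit {m n : ℕ} (d : Mat m n) (hd : d ≠ 0)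
    (h2 : ∀ i, ∑ j, d i j = 0) (h3 : ∀ j, ∑ i, d i j = 0) :
    ∃ g : Mat m n, IsCircuit m n g ∧ Conformal d g := by
  classical
  set Q : Mat m n → Prop := fun h => h ≠ 0 ∧ (∀ i, ∑ j, h i j = 0) ∧
    (∀ j, ∑ i, h i j = 0) ∧ Conformal d h with hQ
  have hQd : Q d := ⟨hd, h2, h3, fun p hp => mul_self_pos.mpr hp⟩
  set S : Set ℕ := {k | ∃ h, Q h ∧ {p : Fin m × Fin n | h p.1 p.2 ≠ 0}.ncard = k} with hSdef
  have hSne : S.Nonempty := ⟨_, d, hQd, rfl⟩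
  obtain ⟨h, hQh, hcard⟩ := Nat.sInf_mem hSne
  have hmin : ∀ h' : Mat m n, Q h' →
      {p : Fin m × Fin n | h p.1 p.2 ≠ 0}.ncard ≤ {p : Fin m × Fin n | h' p.1 p.2 ≠ 0}.ncard := by
    intro h' hQ'
    rw [hcard]
    exact Nat.sInf_le ⟨h', hQ', rfl⟩
  obtain ⟨hne, hrow, hcol, hconf⟩ := hQh
  refine ⟨h, ⟨hne, hrow, hcol, ?_⟩, hconf⟩
  intro h' hne' hrow' hcol' hsubset
  by_contra hneq
  have hss : {p : Fin m × Fin n | h' p.1 p.2 ≠ 0} ⊂ {p : Fin m × Fin n | h p.1 p.2 ≠ 0} :=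
    ⟨hsubset, fun hsup => hneq (le_antisymm hsubset hsup)⟩
  obtain ⟨e0, he0, he0'⟩ := Set.exists_of_ssubset hss
  have he0'' : h' e0.1 e0.2 = 0 := not_not.mp he0'
  have hsub' : ∀ p : Fin m × Fin n, h' p.1 p.2 ≠ 0 → h p.1 p.2 ≠ 0 :=
    fun p hp => hsubset hp
  obtain ⟨e1, he1⟩ := matrix_ne_zero_iff.mp hne'
  have hprod : h e1.1 e1.2 * h' e1.1 e1.2 ≠ 0 := mul_ne_zero (hsub' e1 he1) he1
  rcases hprod.lt_or_gt with hlt | hgt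
  · -- use -h'
    obtain ⟨h₂, hQ₂, hlt₂⟩ := reduce d h (-h') hrow hcol hconf
      (fun i => by simp [Matrix.neg_apply, Finset.sum_neg_distrib, hrow' i])
      (fun j => by simp [Matrix.neg_apply, Finset.sum_neg_distrib, hcol' j])
      (fun p hp => hsub' p (by simpa [Matrix.neg_apply] using hp))
      e0 he0 (by simp [Matrix.neg_apply, he0''])
      e1 (by simp [Matrix.neg_apply]; linarith)
    have := hmin h₂ hQ₂
    omega
  · obtain ⟨h₂, hQ₂, hlt₂⟩ := reduce d h h' hrow hcol hconf hrow' hcol' hsub'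
      e0 he0 he0'' e1 hgt
    have := hmin h₂ hQ₂
    omega


lemma step {m n : ℕ} {u : Fin m → ℝ} {v : Fin n → ℝ} {y F : Mat m n}
    (hy : y ∈ TP m n u v) (hFt : F ∈ TP m n u v) (hd : F - y ≠ 0) :
    ∃ g : Mat m n, ∃ α : ℝ, IsCircuit m n g ∧ 0 < α ∧ (y + α • g ∈ TP m n u v) ∧
      Module.finrank ℝ (V m n (msupp (F - (y + α • g)))) <
        Module.finrank ℝ (V m n (msupp (F - y))) := by
  classical
  obtain ⟨hd1, hd2, hd3⟩ := mem_V.mp (sub_mem_V hy hFt)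
  obtain ⟨g, hgc, hgconf⟩ := exists_conformal_circuit (F - y) hd hd2 hd3
  obtain ⟨hgne, hg2, hg3, hgmin⟩ := hgc
  set s : Finset (Fin m × Fin n) := Finset.univ.filter (fun p => g p.1 p.2 ≠ 0) with hs
  have hne : s.Nonempty := by
    obtain ⟨p, hp⟩ := matrix_ne_zero_iff.mp hgne
    exact ⟨p, by simp [hs, hp]⟩
  set α : ℝ := s.inf' hne (fun p => (F - y) p.1 p.2 / g p.1 p.2) with hαdef
  have hratio : ∀ p ∈ s, 0 < (F - y) p.1 p.2 / g p.1 p.2 := by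
    intro p hp
    have hgp : g p.1 p.2 ≠ 0 := by simpa [hs] using hp
    have := hgconf p hgp
    rcases mul_pos_iff.mp this with ⟨ha, hb⟩ | ⟨ha, hb⟩
    · exact div_pos hb ha
    · exact div_pos_of_neg_of_neg hb ha
  have hα : 0 < α := by
    rw [hαdef, Finset.lt_inf'_iff]
    exact hratio
  obtain ⟨estar, hestar, hteq⟩ := Finset.exists_mem_eq_inf' hne
    (fun p => (F - y) p.1 p.2 / g p.1 p.2)
  have hgstar : g estar.1 estar.2 ≠ 0 := by simpa [hs] using hestar
  have hαeq : α = (F - y) estar.1 estar.2 / g estar.1 estar.2 := by rw [hαdef, hteq]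
  have hαle : ∀ p ∈ s, α ≤ (F - y) p.1 p.2 / g p.1 p.2 := by
    intro p hp
    rw [hαdef]
    exact Finset.inf'_le _ hp
  have hTP : y + α • g ∈ TP m n u v := by
    refine ⟨fun i j => ?_, fun i => ?_, fun j => ?_⟩
    · by_cases hg0 : g i j = 0
      · simp [Matrix.add_apply, Matrix.smul_apply, hg0, hy.1 i j]
      · have hconfp := hgconf (i, j) hg0
        have hlep := hαle (i, j) (by simp [hs, hg0])
        simp only [Matrix.add_apply, Matrix.smul_apply, smul_eq_mul]
        rcases lt_trichotomy (g i j) 0 with hneg | hzero | hpos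
        · have hdle : (F - y) i j ≤ α * g i j := (le_div_iff_of_neg hneg).mp hlep
          have hFij : (F - y) i j = F i j - y i j := by simp [Matrix.sub_apply]
          have := hFt.1 i j
          rw [hFij] at hdle
          linarith
        · exact absurd hzero hg0
        · have := hy.1 i j
          nlinarith
    · simp [Matrix.add_apply, Matrix.smul_apply, smul_eq_mul, Finset.sum_add_distrib,
        ← Finset.mul_sum, hg2 i, hy.2.1 i]
    · simp [Matrix.add_apply, Matrix.smul_apply, smul_eq_mul, Finset.sum_add_distrib,
        ← Finset.mul_sum, hg3 j, hy.2.2 j]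
  have hd'eq : F - (y + α • g) = (F - y) - α • g := by abel
  have hd'app : ∀ p : Fin m × Fin n,
      (F - (y + α • g)) p.1 p.2 = (F - y) p.1 p.2 - α * g p.1 p.2 := by
    intro p
    rw [hd'eq]
    simp [Matrix.sub_apply, Matrix.smul_apply, smul_eq_mul]
  have hsupp' : msupp (F - (y + α • g)) ⊆ msupp (F - y) := by
    intro p hp
    simp only [msupp, Set.mem_setOf_eq] at hp ⊢
    intro hdp
    by_cases hg0 : g p.1 p.2 = 0
    · exact hp (by rw [hd'app p, hdp, hg0]; ring)
    · have := hgconf p hg0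
      rw [hdp, mul_zero] at this
      exact lt_irrefl 0 this
  have hgV : g ∈ V m n (msupp (F - y)) := by
    rw [mem_V]
    refine ⟨fun p hp => ?_, hg2, hg3⟩
    by_contra hg0
    have := hgconf p hg0
    have hdp : (F - y) p.1 p.2 = 0 := by simpa [msupp] using hp
    rw [hdp, mul_zero] at this
    exact lt_irrefl 0 this
  have hd'star : (F - (y + α • g)) estar.1 estar.2 = 0 := by
    rw [hd'app, hαeq]
    field_simp
    ring
  have hgnotV : g ∉ V m n (msupp (F - (y + α • g))) := by
    intro hmem
    have := (mem_V.mp hmem).1 estar (fun hc => hc hd'star)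
    exact hgstar this
  have hlt : V m n (msupp (F - (y + α • g))) < V m n (msupp (F - y)) := by
    refine lt_of_le_of_ne (V_mono hsupp') ?_
    intro heq
    rw [← heq] at hgV
    exact hgnotV hgV
  exact ⟨g, α, ⟨hgne, hg2, hg3, hgmin⟩, hα, hTP,
    Submodule.finrank_lt_finrank_of_lt hlt⟩

lemma walk_exists {m n : ℕ} {u : Fin m → ℝ} {v : Fin n → ℝ} {F : Mat m n}
    (hFt : F ∈ TP m n u v) :
    ∀ N : ℕ, ∀ y, y ∈ TP m n u v →
      Module.finrank ℝ (V m n (msupp (F - y))) ≤ N →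
      ∃ k ≤ N, ∃ w : ℕ → Mat m n, w 0 = y ∧ w k = F ∧
        (∀ i ≤ k, w i ∈ TP m n u v) ∧
        (∀ i < k, ∃ g : Mat m n, ∃ α : ℝ,
          IsCircuit m n g ∧ 0 < α ∧ w (i + 1) = w i + α • g) := by
  intro N
  induction N with
  | zero =>
    intro y hy hrank
    have h0 : V m n (msupp (F - y)) = ⊥ :=
      Submodule.finrank_eq_zero.mp (Nat.le_zero.mp hrank)
    have hd0 : F - y = 0 := by
      have := sub_mem_V hy hFt
      rw [h0] at this
      simpa using this
    have hyF : y = F := (sub_eq_zero.mp hd0).symm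
    exact ⟨0, le_refl 0, fun _ => y, rfl, by rw [hyF],
      fun i _ => hy, fun i hi => absurd hi (by omega)⟩
  | succ N ih =>
    intro y hy hrank
    by_cases hd : F - y = 0
    · have hyF : y = F := (sub_eq_zero.mp hd).symm
      exact ⟨0, by omega, fun _ => y, rfl, by rw [hyF],
        fun i _ => hy, fun i hi => absurd hi (by omega)⟩
    · obtain ⟨g, α, hgc, hα, hyTP, hltrank⟩ := step hy hFt hd
      have hle : Module.finrank ℝ (V m n (msupp (F - (y + α • g)))) ≤ N := by omega
      obtain ⟨k', hk', w, hw0, hwk, hwTP, hwstep⟩ := ih (y + α • g) hyTP hle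
      refine ⟨k' + 1, by omega, fun i => if i = 0 then y else w (i - 1), by simp, ?_, ?_, ?_⟩
      · simpa using hwk
      · intro i hi
        match i with
        | 0 => simpa using hy
        | (j + 1) => simpa using hwTP j (by omega)
      · intro i hi
        match i with
        | 0 => exact ⟨g, α, hgc, hα, by simp [hw0]⟩
        | (j + 1) =>
          obtain ⟨g', α', h1, h2, h3⟩ := hwstep j (by omega)
          exact ⟨g', α', h1, h2, by simpa using h3⟩


end TPAux

/-- every m×n transportation polytope with positive margins admits, between
any two vertices, a feasible circuit walk of length at most m + n - 1. -/
theorem stmt_0 (m n : ℕ) (hm : 0 < m) (hn : 0 < n)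
    (u : Fin m → ℝ) (v : Fin n → ℝ)
    (hu : ∀ i, 0 < u i) (hv : ∀ j, 0 < v j)
    (huv : ∑ i, u i = ∑ j, v j)
    (O F : Matrix (Fin m) (Fin n) ℝ)
    (hO : O ∈ Set.extremePoints ℝ (TP m n u v))
    (hF : F ∈ Set.extremePoints ℝ (TP m n u v)) :
    ∃ k ≤ m + n - 1, ∃ y : ℕ → Matrix (Fin m) (Fin n) ℝ,
      y 0 = O ∧ y k = F ∧
      (∀ i ≤ k, y i ∈ TP m n u v) ∧
      (∀ i < k, ∃ g : Matrix (Fin m) (Fin n) ℝ, ∃ α : ℝ,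
        IsCircuit m n g ∧ 0 < α ∧ y (i + 1) = y i + α • g) := by
  have hOt : O ∈ TP m n u v := hO.1
  have hFt : F ∈ TP m n u v := hF.1
  have hVO := TPAux.extreme_V_trivial hO
  have hVF := TPAux.extreme_V_trivial hF
  have hsub : TPAux.msupp (F - O) ⊆ TPAux.msupp O ∪ TPAux.msupp F := by
    intro p hp
    simp only [TPAux.msupp, Set.mem_setOf_eq, Set.mem_union] at hp ⊢
    by_contra hcon
    push_neg at hcon
    obtain ⟨h1, h2⟩ := hcon
    exact hp (by simp [Matrix.sub_apply, h1, h2])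
  have hrank : Module.finrank ℝ (TPAux.V m n (TPAux.msupp (F - O))) ≤ m + n - 1 :=
    le_trans (Submodule.finrank_mono (TPAux.V_mono hsub))
      (TPAux.finrank_V_union_le hm O F hVO hVF)
  exact TPAux.walk_exists hFt (m + n - 1) O hOt hrank
end

section
/- Let O and F be two vertices of a (possibly degenerate) 2×n transportation polytope P(u,v). Then there exists a feasible maximal circuit walk from O to F of length at most |supp(O) \ supp(F)|. -/
/-- The support of a matrix: the set of positions with positive entry. -/
noncomputable def suppF (m n : ℕ) (y : Matrix (Fin m) (Fin n) ℝ) : Finset (Fin m × Fin n) :=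
  Finset.univ.filter (fun p => 0 < y p.1 p.2)

/-- A feasible maximal circuit walk of length k from y 0 to y k in the m×n
transportation polytope: all points are feasible, each step applies a circuit with a
positive step length, and each step length is maximal subject to feasibility. -/
def FMCircuitWalk (m n : ℕ) (u : Fin m → ℝ) (v : Fin n → ℝ) (k : ℕ)
    (y : ℕ → Matrix (Fin m) (Fin n) ℝ) : Prop :=
  (∀ i ≤ k, y i ∈ TP m n u v) ∧
  ∀ i < k, ∃ g : Matrix (Fin m) (Fin n) ℝ, ∃ α : ℝ,
    IsCircuit m n g ∧ 0 < α ∧ y (i + 1) = y i + α • g ∧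
    ∀ β : ℝ, α < β → y i + β • g ∉ TP m n u v




/-- If sums agree and entries agree off `c`, entries agree at `c` too. -/
lemma agree_single {n : ℕ} (x b : Fin n → ℝ) (hsum : ∑ j, x j = ∑ j, b j)
    (c : Fin n) (h : ∀ l, l ≠ c → x l = b l) : x c = b c := by
  have h0 : ∑ l, (x l - b l) = 0 := by
    rw [Finset.sum_sub_distrib, hsum, sub_self]
  have h1 : ∑ l, (x l - b l) = x c - b c := by
    refine Finset.sum_eq_single c (fun l _ hl => by rw [h l hl, sub_self]) (by simp)
  have := h1.symm.trans h0
  linarith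

lemma core_walk {n : ℕ} (v b : Fin n → ℝ) (j0 : Fin n)
    (hb : ∀ j, 0 ≤ b j ∧ b j ≤ v j)
    (hpure : ∀ j, j ≠ j0 → b j = 0 ∨ b j = v j) :
    ∀ m : ℕ, ∀ x0 : Fin n → ℝ,
      (∀ j, 0 ≤ x0 j ∧ x0 j ≤ v j) →
      (∑ j, x0 j = ∑ j, b j) →
      (Finset.univ.filter (fun j => x0 j ≠ b j)).card = m →
      ∃ k ≤ m - 1, ∃ x : ℕ → Fin n → ℝ, x 0 = x0 ∧ x k = b ∧
        (∀ i ≤ k, ∀ j, 0 ≤ x i j ∧ x i j ≤ v j) ∧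
        (∀ i ≤ k, ∑ j, x i j = ∑ j, b j) ∧
        (∀ i < k, ∃ j j' : Fin n, j ≠ j' ∧ ∃ t : ℝ, 0 < t ∧
          (∀ l, x (i+1) l = x i l + t * (if l = j then 1 else if l = j' then -1 else 0)) ∧
          (x (i+1) j = v j ∨ x (i+1) j' = 0)) := by
  intro m
  induction m using Nat.strong_induction_on with
  | _ m IH =>
  intro x0 hx0 hsum hcard
  by_cases hm0 : m = 0
  · subst hm0
    have hDempty : (Finset.univ.filter (fun j => x0 j ≠ b j)) = ∅ :=
      Finset.card_eq_zero.mp hcard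
    have hxb : x0 = b := by
      funext l
      by_contra hne
      have : l ∈ Finset.univ.filter (fun j => x0 j ≠ b j) := by
        simp [hne]
      rw [hDempty] at this; exact absurd this (Finset.notMem_empty l)
    refine ⟨0, by omega, fun _ => x0, rfl, by rw [hxb], ?_, ?_, ?_⟩
    · intro i _ j; exact hx0 j
    · intro i _; exact hsum
    · intro i hi; omega
  -- m ≥ 1. First: m ≠ 1.
  have hm1 : m ≠ 1 := by
    intro h1
    subst h1
    obtain ⟨c, hc⟩ := Finset.card_eq_one.mp hcard
    have hcmem : c ∈ Finset.univ.filter (fun j => x0 j ≠ b j) := by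
      rw [hc]; exact Finset.mem_singleton_self c
    have hcne : x0 c ≠ b c := by simpa using hcmem
    have hoff : ∀ l, l ≠ c → x0 l = b l := by
      intro l hl
      by_contra hne
      have : l ∈ Finset.univ.filter (fun j => x0 j ≠ b j) := by simp [hne]
      rw [hc] at this
      exact hl (Finset.mem_singleton.mp this)
    exact hcne (agree_single x0 b hsum c hoff)
  have hm2 : 2 ≤ m := by omega
  -- a sink and a source exist
  have hDne : (Finset.univ.filter (fun j => x0 j ≠ b j)).Nonempty := by
    rw [← Finset.card_pos, hcard]; omega
  have hsum0 : ∑ l, (x0 l - b l) = 0 := by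
    rw [Finset.sum_sub_distrib, hsum, sub_self]
  have hsink : ∃ j, x0 j < b j := by
    by_contra hno
    push_neg at hno
    have hall : ∀ l ∈ Finset.univ, x0 l - b l = 0 := by
      have := (Finset.sum_eq_zero_iff_of_nonneg (fun l _ => by
        have := hno l; linarith)).mp hsum0
      exact this
    obtain ⟨c, hc⟩ := hDne
    have hcne : x0 c ≠ b c := by simpa using hc
    have := hall c (Finset.mem_univ c)
    exact hcne (by linarith)
  have hsource : ∃ j, b j < x0 j := by
    by_contra hno
    push_neg at hno
    have hall := (Finset.sum_eq_zero_iff_of_nonpos (fun l _ => by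
      have := hno l; linarith)).mp hsum0
    obtain ⟨c, hc⟩ := hDne
    have hcne : x0 c ≠ b c := by simpa using hc
    have := hall c (Finset.mem_univ c)
    exact hcne (by linarith)
  -- choose the move
  have hmove : ∃ j j' : Fin n, j ≠ j' ∧ ∃ t : ℝ, 0 < t ∧ t ≤ b j - x0 j ∧ t ≤ x0 j' - b j' ∧
      ((t = b j - x0 j ∧ b j = v j) ∨ (t = x0 j' - b j' ∧ b j' = 0)) := by
    by_cases hA : ∃ j, x0 j < b j ∧ j ≠ j0
    · obtain ⟨j, hj, hjj0⟩ := hA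
      have hbjv : b j = v j := by
        rcases hpure j hjj0 with h | h
        · exfalso; have := (hx0 j).1; linarith
        · exact h
      by_cases hB : ∃ j', b j' < x0 j' ∧ j' ≠ j0
      · obtain ⟨j', hj', hj'j0⟩ := hB
        have hjne : j ≠ j' := by intro h; rw [h] at hj; linarith
        have hbj'0 : b j' = 0 := by
          rcases hpure j' hj'j0 with h | h
          · exact h
          · exfalso; have := (hx0 j').2; linarith
        rcases le_total (b j - x0 j) (x0 j' - b j') with hle | hle
        · exact ⟨j, j', hjne, b j - x0 j, by linarith, le_refl _, hle, Or.inl ⟨rfl, hbjv⟩⟩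
        · exact ⟨j, j', hjne, x0 j' - b j', by linarith, hle, le_refl _, Or.inr ⟨rfl, hbj'0⟩⟩
      · -- all sources are j0
        push_neg at hB
        obtain ⟨s, hs⟩ := hsource
        have hsj0 : s = j0 := hB s hs
        have hjne : j ≠ j0 := hjj0
        have hns : ∀ l, l ≠ j0 → x0 l ≤ b l := by
          intro l hl
          by_contra h
          exact hl (hB l (by linarith))
        -- x0 j0 - b j0 = ∑_{l ≠ j0} (b l - x0 l) ≥ b j - x0 j
        have hbig : b j - x0 j ≤ x0 j0 - b j0 := by
          have hsplit : (x0 j0 - b j0) + ∑ l ∈ Finset.univ.erase j0, (x0 l - b l) = 0 := by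
            rw [← Finset.add_sum_erase _ _ (Finset.mem_univ j0)] at hsum0
            exact hsum0
          have hterm : ∀ l ∈ Finset.univ.erase j0, 0 ≤ b l - x0 l := by
            intro l hl
            have := hns l (Finset.ne_of_mem_erase hl)
            linarith
          have hsumge : b j - x0 j ≤ ∑ l ∈ Finset.univ.erase j0, (b l - x0 l) := by
            refine Finset.single_le_sum hterm ?_
            exact Finset.mem_erase.mpr ⟨hjj0, Finset.mem_univ j⟩
          have : ∑ l ∈ Finset.univ.erase j0, (b l - x0 l)
              = -∑ l ∈ Finset.univ.erase j0, (x0 l - b l) := by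
            rw [← Finset.sum_neg_distrib]; congr 1; funext l; ring
          rw [this] at hsumge
          linarith
        exact ⟨j, j0, hjne, b j - x0 j, by linarith, le_refl _, by linarith, Or.inl ⟨rfl, hbjv⟩⟩
    · -- all sinks are j0
      push_neg at hA
      obtain ⟨s, hs⟩ := hsink
      have hsj0 : s = j0 := hA s hs
      obtain ⟨j', hj'⟩ := hsource
      have hj'j0 : j' ≠ j0 := by
        intro h; rw [h] at hj'; rw [hsj0] at hs; linarith
      have hbj'0 : b j' = 0 := by
        rcases hpure j' hj'j0 with h | h
        · exact h
        · exfalso; have := (hx0 j').2; linarith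
      have hns : ∀ l, l ≠ j0 → b l ≤ x0 l := by
        intro l hl
        by_contra h
        exact hl (hA l (by linarith))
      have hbig : x0 j' - b j' ≤ b j0 - x0 j0 := by
        have hsplit : (x0 j0 - b j0) + ∑ l ∈ Finset.univ.erase j0, (x0 l - b l) = 0 := by
          rw [← Finset.add_sum_erase _ _ (Finset.mem_univ j0)] at hsum0
          exact hsum0
        have hterm : ∀ l ∈ Finset.univ.erase j0, 0 ≤ x0 l - b l := by
          intro l hl
          have := hns l (Finset.ne_of_mem_erase hl)
          linarith
        have hsumge : x0 j' - b j' ≤ ∑ l ∈ Finset.univ.erase j0, (x0 l - b l) := by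
          refine Finset.single_le_sum hterm ?_
          exact Finset.mem_erase.mpr ⟨hj'j0, Finset.mem_univ j'⟩
        linarith
      have hjne : j0 ≠ j' := fun h => hj'j0 h.symm
      exact ⟨j0, j', hjne, x0 j' - b j', by linarith, by rw [hsj0] at hs; linarith, le_refl _,
        Or.inr ⟨rfl, hbj'0⟩⟩
  obtain ⟨j, j', hjj', t, ht, h1, h2, hcomp⟩ := hmove
  -- the new point
  set x1 : Fin n → ℝ := fun l => x0 l + t * (if l = j then 1 else if l = j' then -1 else 0)
    with hx1def
  have hx1j : x1 j = x0 j + t := by simp [hx1def]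
  have hx1j' : x1 j' = x0 j' - t := by
    simp [hx1def, hjj'.symm]
    ring
  have hx1other : ∀ l, l ≠ j → l ≠ j' → x1 l = x0 l := by
    intro l hl hl'
    simp [hx1def, hl, hl']
  have hx1feas : ∀ l, 0 ≤ x1 l ∧ x1 l ≤ v l := by
    intro l
    by_cases hlj : l = j
    · subst hlj
      rw [hx1j]
      constructor
      · have := (hx0 l).1; linarith
      · have := (hb l).2; linarith
    by_cases hlj' : l = j'
    · subst hlj'
      rw [hx1j']
      constructor
      · have := (hb l).1; linarith
      · have := (hx0 l).2; linarith
    · rw [hx1other l hlj hlj']; exact hx0 l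
  have hsum1 : ∑ l, x1 l = ∑ l, b l := by
    have : ∑ l, x1 l = ∑ l, x0 l + ∑ l, t * (if l = j then 1 else if l = j' then -1 else 0) := by
      rw [← Finset.sum_add_distrib]
    rw [this, ← Finset.mul_sum]
    have hind : ∑ l, (if l = j then (1:ℝ) else if l = j' then -1 else 0) = 0 := by
      have heq : ∀ l, (if l = j then (1:ℝ) else if l = j' then -1 else 0)
          = (if l = j then (1:ℝ) else 0) + (if l = j' then (-1:ℝ) else 0) := by
        intro l
        by_cases hlj : l = j
        · subst hlj; simp [hjj']
        · by_cases hlj' : l = j' <;> simp [hlj, hlj', Ne.symm hjj']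
      rw [Finset.sum_congr rfl (fun l _ => heq l), Finset.sum_add_distrib]
      simp
    rw [hind, mul_zero, add_zero, hsum]
  -- completion event
  have hevent : x1 j = v j ∨ x1 j' = 0 := by
    rcases hcomp with ⟨hteq, hbv⟩ | ⟨hteq, hb0⟩
    · left; rw [hx1j, hteq]; linarith
    · right; rw [hx1j', hteq]; linarith
  -- diff set shrinks
  have hsub : (Finset.univ.filter (fun l => x1 l ≠ b l))
      ⊆ (Finset.univ.filter (fun l => x0 l ≠ b l)) := by
    intro l hl
    simp only [Finset.mem_filter, Finset.mem_univ, true_and] at hl ⊢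
    by_cases hlj : l = j
    · subst hlj; intro h; linarith
    by_cases hlj' : l = j'
    · subst hlj'; intro h; linarith
    · rw [hx1other l hlj hlj'] at hl; exact hl
  have hssub : (Finset.univ.filter (fun l => x1 l ≠ b l))
      ⊂ (Finset.univ.filter (fun l => x0 l ≠ b l)) := by
    refine Finset.ssubset_iff_of_subset hsub |>.mpr ?_
    rcases hcomp with ⟨hteq, _⟩ | ⟨hteq, _⟩
    · refine ⟨j, ?_, ?_⟩
      · simp only [Finset.mem_filter, Finset.mem_univ, true_and]
        intro h; linarith
      · simp only [Finset.mem_filter, Finset.mem_univ, true_and, not_not]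
        rw [hx1j, hteq]; ring
    · refine ⟨j', ?_, ?_⟩
      · simp only [Finset.mem_filter, Finset.mem_univ, true_and]
        intro h; linarith
      · simp only [Finset.mem_filter, Finset.mem_univ, true_and, not_not]
        rw [hx1j', hteq]; ring
  have hcardlt : (Finset.univ.filter (fun l => x1 l ≠ b l)).card < m := by
    rw [← hcard]; exact Finset.card_lt_card hssub
  obtain ⟨k', hk', x', hx'0, hx'k, hfeas', hsums', hstep'⟩ :=
    IH _ hcardlt x1 hx1feas hsum1 rfl
  refine ⟨k' + 1, by omega, fun i => match i with | 0 => x0 | Nat.succ i => x' i, rfl, hx'k,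
    ?_, ?_, ?_⟩
  · intro i hi
    match i with
    | 0 => exact hx0
    | Nat.succ i => exact hfeas' i (by omega)
  · intro i hi
    match i with
    | 0 => exact hsum
    | Nat.succ i => exact hsums' i (by omega)
  · intro i hi
    match i with
    | 0 =>
      refine ⟨j, j', hjj', t, ht, ?_, ?_⟩
      · intro l
        show x' 0 l = x0 l + _
        rw [hx'0]
      · show x' 0 j = v j ∨ x' 0 j' = 0
        rw [hx'0]; exact hevent
    | Nat.succ i => exact hstep' i (by omega)

lemma fin2_cases (i : Fin 2) : i = 0 ∨ i = 1 := by fin_cases i <;> simp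

/-- The basic 2×n circuit supported on columns j, j'. -/
def cmat {n : ℕ} (j j' : Fin n) : Matrix (Fin 2) (Fin n) ℝ :=
  fun i l => (if l = j then 1 else if l = j' then -1 else 0) * (if i = 0 then 1 else -1)

lemma ind_sum {n : ℕ} {j j' : Fin n} (hjj' : j ≠ j') :
    ∑ l, (if l = j then (1:ℝ) else if l = j' then -1 else 0) = 0 := by
  have heq : ∀ l, (if l = j then (1:ℝ) else if l = j' then -1 else 0)
      = (if l = j then (1:ℝ) else 0) + (if l = j' then (-1:ℝ) else 0) := by
    intro l
    by_cases hlj : l = j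
    · subst hlj; simp [hjj']
    · by_cases hlj' : l = j' <;> simp [hlj, hlj', Ne.symm hjj']
  rw [Finset.sum_congr rfl (fun l _ => heq l), Finset.sum_add_distrib]
  simp

lemma cmat_rowsum {n : ℕ} {j j' : Fin n} (hjj' : j ≠ j') (i : Fin 2) :
    ∑ l, cmat j j' i l = 0 := by
  unfold cmat
  rw [← Finset.sum_mul, ind_sum hjj', zero_mul]

lemma cmat_colsum {n : ℕ} (j j' : Fin n) (l : Fin n) :
    ∑ i, cmat j j' i l = 0 := by
  rw [Fin.sum_univ_two]
  unfold cmat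
  norm_num

lemma cmat_circuit {n : ℕ} {j j' : Fin n} (hjj' : j ≠ j') : IsCircuit 2 n (cmat j j') := by
  refine ⟨?_, cmat_rowsum hjj', cmat_colsum j j', ?_⟩
  · intro h0
    have : cmat j j' 0 j = 0 := by rw [h0]; rfl
    unfold cmat at this
    simp at this
  · intro h hne hrow hcol hsub
    have hgzero : ∀ i l, l ≠ j → l ≠ j' → cmat j j' i l = 0 := by
      intro i l h1 h2; unfold cmat; simp [h1, h2]
    have hzero : ∀ i l, l ≠ j → l ≠ j' → h i l = 0 := by
      intro i l h1 h2
      by_contra hc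
      have := hsub (show ((i, l) : Fin 2 × Fin n) ∈ {p | h p.1 p.2 ≠ 0} from hc)
      simp only [Set.mem_setOf_eq] at this
      exact this (hgzero i l h1 h2)
    set s := h 0 j with hs
    have hcolj : h 0 j + h 1 j = 0 := by
      have := hcol j; rwa [Fin.sum_univ_two] at this
    have hrow0 : h 0 j + h 0 j' = 0 := by
      have h' := hrow 0
      have : ∑ l, h 0 l = h 0 j + h 0 j' := by
        rw [← Finset.sum_pair hjj']
        refine (Finset.sum_subset (Finset.subset_univ _) ?_).symm
        intro l _ hl
        simp only [Finset.mem_insert, Finset.mem_singleton, not_or] at hl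
        exact hzero 0 l hl.1 hl.2
      rw [this] at h'
      exact h'
    have hcolj' : h 0 j' + h 1 j' = 0 := by
      have := hcol j'; rwa [Fin.sum_univ_two] at this
    have h1j : h 1 j = -s := by linarith
    have h0j' : h 0 j' = -s := by linarith
    have h1j' : h 1 j' = s := by linarith
    have hsne : s ≠ 0 := by
      intro hs0
      apply hne
      funext i l
      show h i l = (0 : Matrix (Fin 2) (Fin n) ℝ) i l
      have hrhs : (0 : Matrix (Fin 2) (Fin n) ℝ) i l = 0 := rfl
      rw [hrhs]
      by_cases hlj : l = j
      · subst hlj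
        rcases fin2_cases i with h | h <;> subst h
        · rw [← hs, hs0]
        · rw [h1j, hs0, neg_zero]
      by_cases hlj' : l = j'
      · subst hlj'
        rcases fin2_cases i with h | h <;> subst h
        · rw [h0j', hs0, neg_zero]
        · rw [h1j', hs0]
      · exact hzero i l hlj hlj'
    ext p
    obtain ⟨i, l⟩ := p
    simp only [Set.mem_setOf_eq]
    constructor
    · intro hp
      exact fun hg => hp (by
        by_cases hlj : l = j
        · exact absurd hg (by
            subst hlj
            unfold cmat
            rcases fin2_cases i with h | h <;> subst h <;> norm_num)
        by_cases hlj' : l = j'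
        · exact absurd hg (by
            subst hlj'
            unfold cmat
            rcases fin2_cases i with h | h <;> subst h <;> simp [Ne.symm hjj'])
        · exact hzero i l hlj hlj')
    · intro hg
      by_cases hlj : l = j
      · subst hlj
        rcases fin2_cases i with h | h <;> subst h
        · rw [← hs]; exact hsne
        · rw [h1j]; simpa using hsne
      by_cases hlj' : l = j'
      · subst hlj'
        rcases fin2_cases i with h | h <;> subst h
        · rw [h0j']; simpa using hsne
        · rw [h1j']; exact hsne
      · exact absurd (hgzero i l hlj hlj') hg

lemma cmat0 {n : ℕ} (j j' l : Fin n) :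
    cmat j j' 0 l = (if l = j then 1 else if l = j' then -1 else 0) := by
  unfold cmat; norm_num
lemma cmat1 {n : ℕ} (j j' l : Fin n) :
    cmat j j' 1 l = -(if l = j then 1 else if l = j' then -1 else 0) := by
  unfold cmat; simp


lemma exists_j0 {n : ℕ} (hn : 0 < n) (u : Fin 2 → ℝ) (v : Fin n → ℝ)
    (F : Matrix (Fin 2) (Fin n) ℝ)
    (hF : F ∈ Set.extremePoints ℝ (TP 2 n u v)) :
    ∃ j0 : Fin n, ∀ j, j ≠ j0 → F 0 j = 0 ∨ F 0 j = v j := by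
  obtain ⟨hFTP, hFext⟩ := hF
  obtain ⟨hnn, hrow, hcol⟩ := hFTP
  have hcol2 : ∀ l, F 0 l + F 1 l = v l := by
    intro l; have := hcol l; rwa [Fin.sum_univ_two] at this
  by_cases hall : ∀ j, F 0 j = 0 ∨ F 0 j = v j
  · exact ⟨⟨0, hn⟩, fun j _ => hall j⟩
  push_neg at hall
  obtain ⟨j', hj'⟩ := hall
  refine ⟨j', fun j hjne => ?_⟩
  by_contra hj
  push_neg at hj
  -- both j and j' are interior; perturb
  have hj'lo : 0 < F 0 j' := lt_of_le_of_ne (hnn 0 j') (Ne.symm hj'.1)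
  have hj'hi : F 0 j' < v j' := by
    have h1 := hnn 1 j'
    have := hcol2 j'
    rcases lt_or_eq_of_le (by linarith : F 0 j' ≤ v j') with h | h
    · exact h
    · exact absurd h hj'.2
  have hjlo : 0 < F 0 j := lt_of_le_of_ne (hnn 0 j) (Ne.symm hj.1)
  have hjhi : F 0 j < v j := by
    have h1 := hnn 1 j
    have := hcol2 j
    rcases lt_or_eq_of_le (by linarith : F 0 j ≤ v j) with h | h
    · exact h
    · exact absurd h hj.2
  set ε : ℝ := min (min (F 0 j) (v j - F 0 j)) (min (F 0 j') (v j' - F 0 j')) with hεdef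
  have hε : 0 < ε := by
    apply lt_min <;> apply lt_min <;> linarith
  have hεj1 : ε ≤ F 0 j := le_trans (min_le_left _ _) (min_le_left _ _)
  have hεj2 : ε ≤ v j - F 0 j := le_trans (min_le_left _ _) (min_le_right _ _)
  have hεj'1 : ε ≤ F 0 j' := le_trans (min_le_right _ _) (min_le_left _ _)
  have hεj'2 : ε ≤ v j' - F 0 j' := le_trans (min_le_right _ _) (min_le_right _ _)
  have hmem : ∀ s : ℝ, |s| ≤ ε → F + s • cmat j j' ∈ TP 2 n u v := by
    intro s hs
    have hsl : -ε ≤ s := neg_le_of_abs_le hs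
    have hsr : s ≤ ε := le_of_abs_le hs
    refine ⟨?_, ?_, ?_⟩
    · intro i l
      show 0 ≤ F i l + s * cmat j j' i l
      by_cases hlj : l = j
      · rcases fin2_cases i with h | h <;> subst h
        · have hc : cmat j j' 0 l = 1 := by unfold cmat; simp [hlj]
          rw [hc, hlj, mul_one]; linarith
        · have hc : cmat j j' 1 l = -1 := by unfold cmat; simp [hlj]
          rw [hc, hlj]; have := hcol2 j; nlinarith
      by_cases hlj' : l = j'
      · rcases fin2_cases i with h | h <;> subst h
        · have hc : cmat j j' 0 l = -1 := by unfold cmat; simp [hlj, hlj', Ne.symm hjne]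
          rw [hc, hlj']; nlinarith
        · have hc : cmat j j' 1 l = 1 := by unfold cmat; simp [hlj, hlj', Ne.symm hjne]
          rw [hc, hlj', mul_one]; have := hcol2 j'; linarith
      · have hc : cmat j j' i l = 0 := by unfold cmat; simp [hlj, hlj', Ne.symm hjne]
        rw [hc, mul_zero, add_zero]; exact hnn i l
    · intro i
      have : ∑ l, (F + s • cmat j j') i l = ∑ l, F i l + s * ∑ l, cmat j j' i l := by
        rw [Finset.mul_sum, ← Finset.sum_add_distrib]
        rfl
      rw [this, cmat_rowsum hjne i, mul_zero, add_zero]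
      exact hrow i
    · intro l
      have : ∑ i, (F + s • cmat j j') i l = ∑ i, F i l + s * ∑ i, cmat j j' i l := by
        rw [Finset.mul_sum, ← Finset.sum_add_distrib]
        rfl
      rw [this, cmat_colsum j j' l, mul_zero, add_zero]
      exact hcol l
  have h1 := hmem (-ε) (by rw [abs_neg, abs_of_pos hε])
  have h2 := hmem ε (by rw [abs_of_pos hε])
  have hseg : F ∈ openSegment ℝ (F + (-ε) • cmat j j') (F + ε • cmat j j') := by
    refine ⟨1/2, 1/2, by norm_num, by norm_num, by norm_num, ?_⟩
    funext i l
    show (1/2 : ℝ) * ((F i l) + (-ε) * cmat j j' i l) + (1/2 : ℝ) * ((F i l) + ε * cmat j j' i l) = F i l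
    ring
  have := hFext h1 h2 hseg
  have heval := congrFun (congrFun this 0) j
  have hc1 : cmat j j' 0 j = 1 := by unfold cmat; simp
  have : F 0 j + (-ε) * 1 = F 0 j := by
    have : (F + (-ε) • cmat j j') 0 j = F 0 j + (-ε) * cmat j j' 0 j := rfl
    rw [this, hc1] at heval
    exact heval
  linarith


/-- between any two vertices O, F of a (possibly degenerate) 2×n
transportation polytope there is a feasible maximal circuit walk of length at most
|supp(O) \ supp(F)|. -/
theorem stmt_4 (n : ℕ) (hn : 0 < n) (u : Fin 2 → ℝ) (v : Fin n → ℝ)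
    (hu : ∀ i, 0 < u i) (hv : ∀ j, 0 < v j) (huv : ∑ i, u i = ∑ j, v j)
    (O F : Matrix (Fin 2) (Fin n) ℝ)
    (hO : O ∈ Set.extremePoints ℝ (TP 2 n u v))
    (hF : F ∈ Set.extremePoints ℝ (TP 2 n u v)) :
    ∃ k ≤ (suppF 2 n O \ suppF 2 n F).card, ∃ y : ℕ → Matrix (Fin 2) (Fin n) ℝ,
      y 0 = O ∧ y k = F ∧ FMCircuitWalk 2 n u v k y := by
  obtain ⟨hOnn, hOrow, hOcol⟩ := hO.1
  obtain ⟨hFnn, hFrow, hFcol⟩ := hF.1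
  have hOcol2 : ∀ l, O 0 l + O 1 l = v l := by
    intro l; have := hOcol l; rwa [Fin.sum_univ_two] at this
  have hFcol2 : ∀ l, F 0 l + F 1 l = v l := by
    intro l; have := hFcol l; rwa [Fin.sum_univ_two] at this
  have hafeas : ∀ l, 0 ≤ O 0 l ∧ O 0 l ≤ v l := by
    intro l
    refine ⟨hOnn 0 l, ?_⟩
    have := hOnn 1 l; have := hOcol2 l; linarith
  have hbfeas : ∀ l, 0 ≤ F 0 l ∧ F 0 l ≤ v l := by
    intro l
    refine ⟨hFnn 0 l, ?_⟩
    have := hFnn 1 l; have := hFcol2 l; linarith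
  have hsum : ∑ l, O 0 l = ∑ l, F 0 l := by rw [hOrow 0, hFrow 0]
  obtain ⟨j0, hpure⟩ := exists_j0 hn u v F hF
  obtain ⟨k, hk, x, hx0, hxk, hfeas, hsums, hstep⟩ :=
    core_walk v (fun l => F 0 l) j0 hbfeas hpure
      (Finset.univ.filter (fun l => O 0 l ≠ F 0 l)).card (fun l => O 0 l)
      hafeas hsum rfl
  -- cardinality bound
  have hDbound : (Finset.univ.filter (fun l => O 0 l ≠ F 0 l)).card
      ≤ (suppF 2 n O \ suppF 2 n F).card + 1 := by
    set D := Finset.univ.filter (fun l => O 0 l ≠ F 0 l) with hD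
    have hmaps : ∀ l ∈ D.erase j0,
        (if F 0 l = 0 then ((0 : Fin 2), l) else ((1 : Fin 2), l)) ∈
          suppF 2 n O \ suppF 2 n F := by
      intro l hl
      rw [Finset.mem_erase] at hl
      obtain ⟨hlj0, hlD⟩ := hl
      have hlne : O 0 l ≠ F 0 l := by
        rw [hD] at hlD; simpa using hlD
      rw [Finset.mem_sdiff]
      by_cases hb0 : F 0 l = 0
      · rw [if_pos hb0]
        constructor
        · simp only [suppF, Finset.mem_filter, Finset.mem_univ, true_and]
          have hne0 : O 0 l ≠ 0 := fun h => hlne (h.trans hb0.symm)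
          exact lt_of_le_of_ne (hafeas l).1 (Ne.symm hne0)
        · simp only [suppF, Finset.mem_filter, Finset.mem_univ, true_and, not_lt]
          rw [hb0]
      · have hbv : F 0 l = v l := by
          rcases hpure l hlj0 with h | h
          · exact absurd h hb0
          · exact h
        rw [if_neg hb0]
        constructor
        · simp only [suppF, Finset.mem_filter, Finset.mem_univ, true_and]
          have h1 : O 1 l = v l - O 0 l := by have := hOcol2 l; linarith
          have h2 : O 0 l < v l := by
            rcases lt_or_eq_of_le (hafeas l).2 with h | h
            · exact h
            · exact absurd (h.trans hbv.symm) hlne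
          rw [h1]; linarith
        · simp only [suppF, Finset.mem_filter, Finset.mem_univ, true_and, not_lt]
          have : F 1 l = v l - F 0 l := by have := hFcol2 l; linarith
          rw [this, hbv]; linarith
    have hinj : Set.InjOn (fun l => if F 0 l = 0 then ((0 : Fin 2), l) else ((1 : Fin 2), l))
        (D.erase j0) := by
      intro l _ l' _ heq
      have h2 : ∀ c : Fin n, ((if F 0 c = 0 then ((0 : Fin 2), c) else ((1 : Fin 2), c)) :
          Fin 2 × Fin n).2 = c := by
        intro c; by_cases h : F 0 c = 0 <;> simp [h]
      have := congrArg Prod.snd heq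
      simp only at this
      rw [h2 l, h2 l'] at this
      exact this
    have hle := Finset.card_le_card_of_injOn _ hmaps hinj
    by_cases hj0 : j0 ∈ D
    · have := Finset.card_erase_of_mem hj0
      omega
    · rw [Finset.erase_eq_of_notMem hj0] at hle
      omega
  refine ⟨k, by omega, fun i => ![x i, fun l => v l - x i l], ?_, ?_, ?_, ?_⟩
  · funext ii l
    rcases fin2_cases ii with h | h <;> subst h
    · simp only [Matrix.cons_val_zero]
      exact congrFun hx0 l
    · simp only [Matrix.cons_val_one, Matrix.cons_val_zero, Matrix.head_cons]
      have h0 : x 0 l = O 0 l := congrFun hx0 l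
      rw [h0]
      have h2 := hOcol2 l
      linarith
  · funext ii l
    rcases fin2_cases ii with h | h <;> subst h
    · simp only [Matrix.cons_val_zero]
      exact congrFun hxk l
    · simp only [Matrix.cons_val_one, Matrix.cons_val_zero, Matrix.head_cons]
      have h0 : x k l = F 0 l := congrFun hxk l
      rw [h0]
      have h2 := hFcol2 l
      linarith
  · -- feasibility
    intro i hi
    refine ⟨?_, ?_, ?_⟩
    · intro ii l
      rcases fin2_cases ii with h | h <;> subst h
      · simp only [Matrix.cons_val_zero]
        exact (hfeas i hi l).1
      · simp only [Matrix.cons_val_one, Matrix.cons_val_zero, Matrix.head_cons]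
        have := (hfeas i hi l).2; linarith
    · intro ii
      rcases fin2_cases ii with h | h <;> subst h
      · simp only [Matrix.cons_val_zero]
        exact (hsums i hi).trans (hFrow 0)
      · simp only [Matrix.cons_val_one, Matrix.cons_val_zero, Matrix.head_cons]
        rw [Finset.sum_sub_distrib]
        have hx : ∑ j, x i j = u 0 := (hsums i hi).trans (hFrow 0)
        rw [hx]
        rw [Fin.sum_univ_two] at huv
        linarith
    · intro l
      rw [Fin.sum_univ_two]
      simp only [Matrix.cons_val_zero, Matrix.cons_val_one, Matrix.head_cons]
      ring
  · -- steps
    intro i hi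
    obtain ⟨j, j', hjj', t, ht, hrel, hevent⟩ := hstep i hi
    refine ⟨cmat j j', t, cmat_circuit hjj', ht, ?_, ?_⟩
    · funext ii l
      rcases fin2_cases ii with h | h <;> subst h
      · simp only [Matrix.add_apply, Matrix.smul_apply, Pi.add_apply, Pi.smul_apply, smul_eq_mul,
          Matrix.cons_val_zero]
        show x (i+1) l = x i l + t * cmat j j' 0 l
        rw [hrel l, cmat0]
      · simp only [Matrix.add_apply, Matrix.smul_apply, Pi.add_apply, Pi.smul_apply, smul_eq_mul,
          Matrix.cons_val_one, Matrix.cons_val_zero, Matrix.head_cons]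
        show v l - x (i+1) l = (v l - x i l) + t * cmat j j' 1 l
        rw [hrel l, cmat1]
        ring
    · intro β hβ hmem
      obtain ⟨hnn', _, _⟩ := hmem
      rcases hevent with hev | hev
      · have hc : cmat j j' 1 j = -1 := by rw [cmat1]; simp
        have hxj : x (i+1) j = x i j + t := by
          have := hrel j; simpa using this
        have hval : 0 ≤ (v j - x i j) + β * cmat j j' 1 j := by
          have := hnn' 1 j
          change 0 ≤ (v j - x i j) + β * cmat j j' 1 j at this
          simpa [Matrix.add_apply, Matrix.smul_apply, Pi.add_apply, Pi.smul_apply, smul_eq_mul,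
            Matrix.cons_val_one, Matrix.cons_val_zero, Matrix.head_cons] using this
        rw [hc] at hval
        rw [hxj] at hev
        nlinarith
      · have hc : cmat j j' 0 j' = -1 := by rw [cmat0]; simp [Ne.symm hjj']
        have hxj' : x (i+1) j' = x i j' - t := by
          have := hrel j'; simp [Ne.symm hjj'] at this; linarith
        have hval : 0 ≤ x i j' + β * cmat j j' 0 j' := by
          have := hnn' 0 j'
          change 0 ≤ x i j' + β * cmat j j' 0 j' at this
          simpa [Matrix.add_apply, Matrix.smul_apply, Pi.add_apply, Pi.smul_apply, smul_eq_mul,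
            Matrix.cons_val_zero] using this
        rw [hc] at hval
        rw [hxj'] at hev
        nlinarith
end

section
/- Let O ≠ F be two vertices of a (possibly degenerate) 2×n transportation polytope P(u,v) such that |supp(F)| = n. Then there exists a feasible maximal circuit walk from O to F of length at most |supp(O) \ supp(F)| − 1. -/
namespace Stmt5Aux

def gmat (n : ℕ) (j j' : Fin n) : Matrix (Fin 2) (Fin n) ℝ :=
  fun i c => (if c = j then (if i = 0 then (-1:ℝ) else 1) else 0)
           - (if c = j' then (if i = 0 then (-1:ℝ) else 1) else 0)

lemma gmat_rowsum (n : ℕ) (j j' : Fin n) (i : Fin 2) :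
    ∑ c, gmat n j j' i c = 0 := by
  unfold gmat
  rw [Finset.sum_sub_distrib]
  simp

lemma gmat_colsum (n : ℕ) (j j' : Fin n) (c : Fin n) :
    ∑ i, gmat n j j' i c = 0 := by
  rw [Fin.sum_univ_two]
  simp only [gmat, one_ne_zero, if_true, if_false, reduceIte]
  split_ifs <;> ring

lemma gmat_apply_ne (n : ℕ) (j j' : Fin n) (i : Fin 2) (c : Fin n)
    (h1 : c ≠ j) (h2 : c ≠ j') : gmat n j j' i c = 0 := by
  simp [gmat, h1, h2]

lemma fin2_cases (i : Fin 2) : i = 0 ∨ i = 1 := by fin_cases i <;> simp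

lemma sum_two_supp {n : ℕ} (j j' : Fin n) (hjj : j ≠ j') (f : Fin n → ℝ)
    (hf : ∀ c, c ≠ j → c ≠ j' → f c = 0) : ∑ c, f c = f j + f j' := by
  have h : ∀ c, f c = (if c = j then f j else 0) + (if c = j' then f j' else 0) := by
    intro c
    by_cases h1 : c = j
    · subst h1; simp [hjj]
    · by_cases h2 : c = j'
      · subst h2; simp [h1]
      · simp [h1, h2, hf c h1 h2]
  rw [Finset.sum_congr rfl fun c _ => h c, Finset.sum_add_distrib]
  simp

lemma gmat_supp (n : ℕ) (j j' : Fin n) (hjj : j ≠ j') (i : Fin 2) (c : Fin n) :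
    gmat n j j' i c ≠ 0 ↔ (c = j ∨ c = j') := by
  constructor
  · intro h
    by_contra hc
    push_neg at hc
    exact h (gmat_apply_ne _ _ _ _ _ hc.1 hc.2)
  · rintro (rfl | rfl)
    · rcases fin2_cases i with rfl | rfl <;> simp [gmat, hjj]
    · rcases fin2_cases i with rfl | rfl <;> simp [gmat, hjj.symm]

lemma gmat_circuit (n : ℕ) (j j' : Fin n) (hjj : j ≠ j') :
    IsCircuit 2 n (gmat n j j') := by
  refine ⟨?_, gmat_rowsum n j j', gmat_colsum n j j', ?_⟩
  · intro h
    have h0 := congrFun (congrFun h 0) j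
    simp [gmat, hjj] at h0
  · intro h hne hrow hcol hsub
    have hz : ∀ (i : Fin 2) (c : Fin n), c ≠ j → c ≠ j' → h i c = 0 := by
      intro i c h1 h2
      by_contra hc
      have hm : ((i, c) : Fin 2 × Fin n) ∈ {p : Fin 2 × Fin n | h p.1 p.2 ≠ 0} := hc
      exact (hsub hm : gmat n j j' i c ≠ 0) (gmat_apply_ne n j j' i c h1 h2)
    have hr : ∀ i : Fin 2, h i j + h i j' = 0 := by
      intro i
      have hri := hrow i
      rwa [sum_two_supp j j' hjj (h i) (hz i)] at hri
    have hc1 : h 0 j + h 1 j = 0 := by have := hcol j; rwa [Fin.sum_univ_two] at this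
    have hc2 : h 0 j' + h 1 j' = 0 := by have := hcol j'; rwa [Fin.sum_univ_two] at this
    have hr0 := hr 0
    have hr1 := hr 1
    have hne0 : h 0 j ≠ 0 := by
      intro h00
      apply hne
      have e1 : h 1 j = 0 := by linarith
      have e2 : h 0 j' = 0 := by linarith
      have e3 : h 1 j' = 0 := by linarith
      funext i c
      show h i c = 0
      by_cases hcj : c = j
      · subst hcj; rcases fin2_cases i with rfl | rfl <;> assumption
      · by_cases hcj' : c = j'
        · subst hcj'; rcases fin2_cases i with rfl | rfl <;> assumption
        · exact hz i c hcj hcj'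
    have v1 : h 1 j ≠ 0 := by intro hx; apply hne0; linarith
    have v2 : h 0 j' ≠ 0 := by intro hx; apply hne0; linarith
    have v3 : h 1 j' ≠ 0 := by intro hx; apply hne0; linarith
    ext p
    simp only [Set.mem_setOf_eq]
    constructor
    · intro hp; exact hsub hp
    · intro hp
      obtain ⟨i, c⟩ := p
      rcases (gmat_supp n j j' hjj i c).mp hp with rfl | rfl
      · rcases fin2_cases i with rfl | rfl
        · exact hne0
        · exact v1
      · rcases fin2_cases i with rfl | rfl
        · exact v2
        · exact v3



lemma col_struct (n : ℕ) (u : Fin 2 → ℝ) (v : Fin n → ℝ) (hv : ∀ j, 0 < v j)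
    (F : Matrix (Fin 2) (Fin n) ℝ) (hFmem : F ∈ TP 2 n u v)
    (hsF : (suppF 2 n F).card = n) (j : Fin n) :
    (F 0 j = v j ∧ F 1 j = 0) ∨ (F 0 j = 0 ∧ F 1 j = v j) := by
  obtain ⟨hpos, hrow, hcol⟩ := hFmem
  have hcolsum : ∀ c, F 0 c + F 1 c = v c := by
    intro c; have := hcol c; rwa [Fin.sum_univ_two] at this
  have hex : ∀ c, ∃ i, 0 < F i c := by
    intro c
    by_contra hc
    push_neg at hc
    have h0 : F 0 c = 0 := le_antisymm (hc 0) (hpos 0 c)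
    have h1 : F 1 c = 0 := le_antisymm (hc 1) (hpos 1 c)
    have := hcolsum c
    have := hv c
    linarith
  have hcnt : ∀ c, 1 ≤ (Finset.univ.filter (fun i : Fin 2 => 0 < F i c)).card := by
    intro c
    rw [Finset.one_le_card]
    obtain ⟨i, hi⟩ := hex c
    exact ⟨i, by simp [hi]⟩
  have htot : (suppF 2 n F).card
      = ∑ c : Fin n, (Finset.univ.filter (fun i : Fin 2 => 0 < F i c)).card := by
    rw [Finset.card_eq_sum_card_fiberwise
      (f := fun p : Fin 2 × Fin n => p.2) (t := Finset.univ) (fun x _ => Finset.mem_univ _)]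
    refine Finset.sum_congr rfl fun c _ => ?_
    refine Finset.card_bij' (fun p _ => p.1) (fun i _ => (i, c)) ?_ ?_ ?_ ?_
    · intro p hp
      simp only [suppF, Finset.mem_filter, Finset.mem_univ, true_and] at hp ⊢
      rw [← hp.2]; exact hp.1
    · intro i hi
      simp only [suppF, Finset.mem_filter, Finset.mem_univ, true_and] at hi
      simp [suppF, hi]
    · intro p hp
      simp only [suppF, Finset.mem_filter, Finset.mem_univ, true_and] at hp
      exact Prod.ext rfl hp.2.symm
    · intro i _
      rfl
  have hone : ∀ c : Fin n, (Finset.univ.filter (fun i : Fin 2 => 0 < F i c)).card = 1 := by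
    have hsum : ∑ c : Fin n, (1 : ℕ)
        = ∑ c : Fin n, (Finset.univ.filter (fun i : Fin 2 => 0 < F i c)).card := by
      rw [← htot, hsF]; simp
    have := (Finset.sum_eq_sum_iff_of_le (fun c _ => hcnt c)).mp hsum
    intro c
    exact (this c (Finset.mem_univ c)).symm
  have hnb : ¬ (0 < F 0 j ∧ 0 < F 1 j) := by
    rintro ⟨h0, h1⟩
    have hsubs : ({0, 1} : Finset (Fin 2)) ⊆ Finset.univ.filter (fun i : Fin 2 => 0 < F i j) := by
      intro i hi
      fin_cases hi <;> simp [h0, h1]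
    have := Finset.card_le_card hsubs
    rw [hone j] at this
    simp at this
  by_cases h0 : 0 < F 0 j
  · left
    have h1 : F 1 j = 0 := by
      by_contra h1
      exact hnb ⟨h0, lt_of_le_of_ne (hpos 1 j) (Ne.symm h1)⟩
    exact ⟨by linarith [hcolsum j], h1⟩
  · right
    have h0' : F 0 j = 0 := le_antisymm (not_lt.mp h0) (hpos 0 j)
    exact ⟨h0', by linarith [hcolsum j]⟩


lemma eq_of_row0 {n : ℕ} {u : Fin 2 → ℝ} {v : Fin n → ℝ}
    {y F : Matrix (Fin 2) (Fin n) ℝ} (hy : y ∈ TP 2 n u v) (hF : F ∈ TP 2 n u v)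
    (h : ∀ c, y 0 c = F 0 c) : y = F := by
  funext i c
  have hy1 := hy.2.2 c
  have hF1 := hF.2.2 c
  rw [Fin.sum_univ_two] at hy1 hF1
  rcases fin2_cases i with rfl | rfl
  · exact h c
  · have := h c; linarith

lemma walk_ex (n : ℕ) (u : Fin 2 → ℝ) (v : Fin n → ℝ) (hv : ∀ j, 0 < v j)
    (F : Matrix (Fin 2) (Fin n) ℝ) (hF : F ∈ TP 2 n u v)
    (hcol : ∀ j, (F 0 j = v j ∧ F 1 j = 0) ∨ (F 0 j = 0 ∧ F 1 j = v j)) :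
    ∀ d (y : Matrix (Fin 2) (Fin n) ℝ), y ∈ TP 2 n u v →
      (Finset.univ.filter (fun c => y 0 c ≠ F 0 c)).card ≤ d →
      ∃ k ≤ (Finset.univ.filter (fun c => y 0 c ≠ F 0 c)).card - 1,
        ∃ w : ℕ → Matrix (Fin 2) (Fin n) ℝ, w 0 = y ∧ w k = F ∧ FMCircuitWalk 2 n u v k w := by
  intro d
  induction d with
  | zero =>
    intro y hy hcard
    have hemp : (Finset.univ.filter (fun c => y 0 c ≠ F 0 c)) = ∅ :=
      Finset.card_eq_zero.mp (Nat.le_zero.mp hcard)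
    have heq : y = F := by
      apply eq_of_row0 hy hF
      intro c
      by_contra hc
      have : c ∈ Finset.univ.filter (fun c => y 0 c ≠ F 0 c) := by simp [hc]
      rw [hemp] at this
      exact absurd this (Finset.notMem_empty c)
    subst heq
    exact ⟨0, Nat.zero_le _, fun _ => y, rfl, rfl,
      fun i _ => hy, fun i hi => absurd hi (Nat.not_lt_zero i)⟩
  | succ d ih =>
    intro y hy hcard
    by_cases hyF : y = F
    · subst hyF
      exact ⟨0, Nat.zero_le _, fun _ => y, rfl, rfl,
        fun i _ => hy, fun i hi => absurd hi (Nat.not_lt_zero i)⟩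
    obtain ⟨hynn, hyrow, hycol⟩ := id hy
    obtain ⟨hFnn, hFrow, hFcol⟩ := id hF
    have hy1 : ∀ c, y 1 c = v c - y 0 c := by
      intro c; have := hycol c; rw [Fin.sum_univ_two] at this; linarith
    have hF1 : ∀ c, F 1 c = v c - F 0 c := by
      intro c; have := hFcol c; rw [Fin.sum_univ_two] at this; linarith
    have hyle : ∀ c, y 0 c ≤ v c := by
      intro c; have := hynn 1 c; rw [hy1 c] at this; linarith
    -- A and B nonempty
    have hAne : ∃ j, F 0 j < y 0 j := by
      by_contra hA
      push_neg at hA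
      apply hyF
      apply eq_of_row0 hy hF
      have hsum : ∑ c, (F 0 c - y 0 c) = 0 := by
        rw [Finset.sum_sub_distrib, hyrow 0, hFrow 0]; ring
      have hall := (Finset.sum_eq_zero_iff_of_nonneg
        (fun c _ => by linarith [hA c] : ∀ c ∈ Finset.univ, 0 ≤ F 0 c - y 0 c)).mp hsum
      intro c
      have := hall c (Finset.mem_univ c)
      linarith
    have hBne : ∃ j', y 0 j' < F 0 j' := by
      by_contra hB
      push_neg at hB
      apply hyF
      apply eq_of_row0 hy hF
      have hsum : ∑ c, (y 0 c - F 0 c) = 0 := by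
        rw [Finset.sum_sub_distrib, hyrow 0, hFrow 0]; ring
      have hall := (Finset.sum_eq_zero_iff_of_nonneg
        (fun c _ => by linarith [hB c] : ∀ c ∈ Finset.univ, 0 ≤ y 0 c - F 0 c)).mp hsum
      intro c
      have := hall c (Finset.mem_univ c)
      linarith
    obtain ⟨j, hj⟩ := hAne
    obtain ⟨j', hj'⟩ := hBne
    have hjj : j ≠ j' := by intro h; subst h; linarith
    have hFj : F 0 j = 0 := by
      rcases hcol j with ⟨h1, _⟩ | ⟨h1, _⟩
      · exfalso; have := hyle j; linarith
      · exact h1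
    have hFj' : F 0 j' = v j' := by
      rcases hcol j' with ⟨h1, _⟩ | ⟨h1, _⟩
      · exact h1
      · exfalso; have := hynn 0 j'; linarith
    set α := min (y 0 j) (y 1 j') with hα
    have hα1 : α ≤ y 0 j := min_le_left _ _
    have hα2 : α ≤ y 1 j' := min_le_right _ _
    have hy1j' : y 1 j' = v j' - y 0 j' := hy1 j'
    have hα0 : 0 < α := by
      apply lt_min
      · linarith
      · rw [hy1j']; linarith
    -- entries of the new point
    have happ : ∀ (β : ℝ) (i : Fin 2) (c : Fin n),
        (y + β • gmat n j j') i c = y i c + β * gmat n j j' i c := by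
      intro β i c
      simp [Matrix.add_apply, Matrix.smul_apply, smul_eq_mul]
    have hg0j : gmat n j j' 0 j = -1 := by simp [gmat, hjj]
    have hg1j : gmat n j j' 1 j = 1 := by simp [gmat, hjj]
    have hg0j' : gmat n j j' 0 j' = 1 := by simp [gmat, (Ne.symm hjj)]
    have hg1j' : gmat n j j' 1 j' = -1 := by simp [gmat, (Ne.symm hjj)]
    have hy'mem : y + α • gmat n j j' ∈ TP 2 n u v := by
      refine ⟨?_, ?_, ?_⟩
      · intro i c
        rw [happ]
        by_cases h1 : c = j
        · rw [h1]
          rcases fin2_cases i with rfl | rfl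
          · rw [hg0j]; linarith
          · rw [hg1j]; have := hynn 1 j; linarith
        · by_cases h2 : c = j'
          · rw [h2]
            rcases fin2_cases i with rfl | rfl
            · rw [hg0j']; have := hynn 0 j'; linarith
            · rw [hg1j']; linarith
          · rw [gmat_apply_ne n j j' i c h1 h2]
            have := hynn i c; linarith
      · intro i
        have : ∀ c, (y + α • gmat n j j') i c = y i c + α * gmat n j j' i c :=
          fun c => happ α i c
        rw [Finset.sum_congr rfl fun c _ => this c, Finset.sum_add_distrib,
          ← Finset.mul_sum, gmat_rowsum, hyrow i]
        ring
      · intro c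
        have : ∀ i, (y + α • gmat n j j') i c = y i c + α * gmat n j j' i c :=
          fun i => happ α i c
        rw [Finset.sum_congr rfl fun i _ => this i, Finset.sum_add_distrib,
          ← Finset.mul_sum, gmat_colsum, hycol c]
        ring
    have hmax : ∀ β : ℝ, α < β → y + β • gmat n j j' ∉ TP 2 n u v := by
      intro β hβ hmem
      rcases le_total (y 0 j) (y 1 j') with hle | hle
      · have h0 := hmem.1 0 j
        rw [happ, hg0j] at h0
        have : α = y 0 j := min_eq_left hle
        linarith
      · have h0 := hmem.1 1 j'
        rw [happ, hg1j'] at h0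
        have : α = y 1 j' := min_eq_right hle
        linarith
    -- the differing set decreases strictly
    have hsubset : (Finset.univ.filter (fun c => (y + α • gmat n j j') 0 c ≠ F 0 c))
        ⊆ Finset.univ.filter (fun c => y 0 c ≠ F 0 c) := by
      intro c hc
      simp only [Finset.mem_filter, Finset.mem_univ, true_and] at hc ⊢
      by_cases h1 : c = j
      · subst h1; rw [hFj]; linarith
      · by_cases h2 : c = j'
        · subst h2; linarith
        · rw [happ, gmat_apply_ne n j j' 0 c h1 h2] at hc
          intro he; apply hc; rw [he]; ring
    have hwit : ∃ c0, c0 ∈ Finset.univ.filter (fun c => y 0 c ≠ F 0 c) ∧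
        c0 ∉ Finset.univ.filter (fun c => (y + α • gmat n j j') 0 c ≠ F 0 c) := by
      rcases le_total (y 0 j) (y 1 j') with hle | hle
      · refine ⟨j, ?_, ?_⟩
        · simp only [Finset.mem_filter, Finset.mem_univ, true_and]
          rw [hFj]; linarith
        · simp only [Finset.mem_filter, Finset.mem_univ, true_and, not_not]
          rw [happ, hg0j, hFj]
          have hαe : α = y 0 j := min_eq_left hle
          rw [hαe]; ring
      · refine ⟨j', ?_, ?_⟩
        · simp only [Finset.mem_filter, Finset.mem_univ, true_and]
          intro h; linarith
        · simp only [Finset.mem_filter, Finset.mem_univ, true_and, not_not]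
          rw [happ, hg0j', hFj']
          have hαe : α = y 1 j' := min_eq_right hle
          rw [hαe, hy1j']; ring
    obtain ⟨c0, hc0mem, hc0not⟩ := hwit
    have hlt : (Finset.univ.filter (fun c => (y + α • gmat n j j') 0 c ≠ F 0 c)).card
        < (Finset.univ.filter (fun c => y 0 c ≠ F 0 c)).card :=
      Finset.card_lt_card ((Finset.ssubset_iff_of_subset hsubset).mpr ⟨c0, hc0mem, hc0not⟩)
    have h2le : 2 ≤ (Finset.univ.filter (fun c => y 0 c ≠ F 0 c)).card := by
      apply Finset.one_lt_card.mpr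
      refine ⟨j, ?_, j', ?_, hjj⟩
      · simp only [Finset.mem_filter, Finset.mem_univ, true_and]; rw [hFj]; linarith
      · simp only [Finset.mem_filter, Finset.mem_univ, true_and]; intro h; linarith
    obtain ⟨k', hk', w', hw0, hwk, hwalk⟩ :=
      ih (y + α • gmat n j j') hy'mem (by omega)
    refine ⟨k' + 1, by omega, fun i => if i = 0 then y else w' (i - 1), by simp, ?_, ?_, ?_⟩
    · simp only [Nat.succ_ne_zero, if_false, Nat.add_sub_cancel]
      exact hwk
    · intro i hi
      cases i with
      | zero => simpa using hy
      | succ m =>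
        simp only [Nat.succ_ne_zero, if_false, Nat.add_sub_cancel]
        exact hwalk.1 m (by omega)
    · intro i hi
      cases i with
      | zero =>
        refine ⟨gmat n j j', α, gmat_circuit n j j' hjj, hα0, ?_, hmax⟩
        show (if 0 + 1 = 0 then y else w' (0 + 1 - 1))
            = (if 0 = 0 then y else w' (0 - 1)) + α • gmat n j j'
        norm_num [hw0]
      | succ m =>
        obtain ⟨g2, α2, hc2, hp2, he2, hm2⟩ := hwalk.2 m (by omega)
        refine ⟨g2, α2, hc2, hp2, ?_, ?_⟩
        · simp only [Nat.succ_ne_zero, if_false, Nat.add_sub_cancel]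
          exact he2
        · simp only [Nat.succ_ne_zero, if_false, Nat.add_sub_cancel]
          exact hm2

end Stmt5Aux

/-- if O ≠ F are vertices of a (possibly degenerate) 2×n transportation
polytope with |supp(F)| = n, then there is a feasible maximal circuit walk from O to F of
length at most |supp(O) \ supp(F)| − 1. -/
theorem stmt_5 (n : ℕ) (hn : 0 < n) (u : Fin 2 → ℝ) (v : Fin n → ℝ)
    (hu : ∀ i, 0 < u i) (hv : ∀ j, 0 < v j) (huv : ∑ i, u i = ∑ j, v j)
    (O F : Matrix (Fin 2) (Fin n) ℝ)
    (hO : O ∈ Set.extremePoints ℝ (TP 2 n u v))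
    (hF : F ∈ Set.extremePoints ℝ (TP 2 n u v))
    (hOF : O ≠ F)
    (hsF : (suppF 2 n F).card = n) :
    ∃ k ≤ (suppF 2 n O \ suppF 2 n F).card - 1, ∃ y : ℕ → Matrix (Fin 2) (Fin n) ℝ,
      y 0 = O ∧ y k = F ∧ FMCircuitWalk 2 n u v k y := by
  have hFmem := hF.1
  have hOmem := hO.1
  have hcol := Stmt5Aux.col_struct n u v hv F hFmem hsF
  obtain ⟨k, hk, w, hw0, hwk, hwalk⟩ := Stmt5Aux.walk_ex n u v hv F hFmem hcol
    (Finset.univ.filter (fun c => O 0 c ≠ F 0 c)).card O hOmem le_rfl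
  refine ⟨k, ?_, w, hw0, hwk, hwalk⟩
  refine le_trans hk (Nat.sub_le_sub_right ?_ 1)
  obtain ⟨hOnn, hOrow, hOcol⟩ := hOmem
  have hOcolsum : ∀ c, O 0 c + O 1 c = v c := fun c => by
    have := hOcol c; rwa [Fin.sum_univ_two] at this
  apply Finset.card_le_card_of_injOn (fun c => ((if F 0 c = 0 then (0 : Fin 2) else 1), c))
  · intro c hc
    rw [Finset.mem_coe] at hc ⊢
    beta_reduce
    simp only [Finset.mem_filter, Finset.mem_univ, true_and] at hc
    rcases hcol c with ⟨h1, h2⟩ | ⟨h1, h2⟩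
    · have hne : F 0 c ≠ 0 := by rw [h1]; exact (hv c).ne'
      rw [if_neg hne]
      simp only [suppF, Finset.mem_sdiff, Finset.mem_filter, Finset.mem_univ, true_and]
      rw [h1] at hc
      constructor
      · have hle : O 0 c ≤ v c := by have := hOnn 1 c; linarith [hOcolsum c]
        have hlt : O 0 c < v c := lt_of_le_of_ne hle hc
        have : 0 < O 1 c := by linarith [hOcolsum c]
        exact this
      · rw [h2]; simp
    · rw [if_pos h1]
      simp only [suppF, Finset.mem_sdiff, Finset.mem_filter, Finset.mem_univ, true_and]
      rw [h1] at hc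
      constructor
      · exact lt_of_le_of_ne (hOnn 0 c) (Ne.symm hc)
      · rw [h1]; simp
  · intro a _ b _ hab
    exact congrArg Prod.snd hab
end

section
/- Let O and F be two vertices of a (possibly degenerate) 2×n transportation polytope P(u,v). Then either |supp(O) \ supp(F)| ≤ n − 1, or |supp(O) \ supp(F)| = n and |supp(F)| = n. -/
lemma mem_suppF {m n : ℕ} {y : Matrix (Fin m) (Fin n) ℝ} {p : Fin m × Fin n} :
    p ∈ suppF m n y ↔ 0 < y p.1 p.2 := by simp [suppF]

lemma colpos {n : ℕ} {u : Fin 2 → ℝ} {v : Fin n → ℝ} (hv : ∀ j, 0 < v j)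
    {y : Matrix (Fin 2) (Fin n) ℝ} (hy : y ∈ TP 2 n u v) (j : Fin n) :
    ∃ i, 0 < y i j := by
  by_contra h
  push_neg at h
  have h0 : ∀ i, y i j = 0 := fun i => le_antisymm (h i) (hy.1 i j)
  have := hy.2.2 j
  rw [Fin.sum_univ_two, h0 0, h0 1] at this
  linarith [hv j]

lemma nodouble_card {n : ℕ} {S : Finset (Fin 2 × Fin n)}
    (h : ∀ j, ¬((0, j) ∈ S ∧ (1, j) ∈ S)) : S.card ≤ n := by
  have hinj : Set.InjOn Prod.snd (S : Set (Fin 2 × Fin n)) := by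
    intro p hp q hq hpq
    have hp1 : p.1 = 0 ∨ p.1 = 1 := by omega
    have hq1 : q.1 = 0 ∨ q.1 = 1 := by omega
    have hpe : p = (p.1, p.2) := rfl
    have hqe : q = (q.1, q.2) := rfl
    rcases hp1 with h1 | h1 <;> rcases hq1 with h2 | h2
    · ext <;> simp [h1, h2, hpq]
    · exfalso; exact h p.2 ⟨by rw [← h1, ← hpe]; exact hp, by rw [hpq, ← h2, ← hqe]; exact hq⟩
    · exfalso; exact h p.2 ⟨by rw [hpq, ← h2, ← hqe]; exact hq, by rw [← h1, ← hpe]; exact hp⟩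
    · ext <;> simp [h1, h2, hpq]
  have := Finset.card_le_card_of_injOn (f := Prod.snd) (fun p _ => Finset.mem_univ _) hinj
  simpa using this

/-- An extreme point of a 2×n transportation polytope cannot have two distinct
columns with both entries positive. -/
lemma extreme_one_double {n : ℕ} {u : Fin 2 → ℝ} {v : Fin n → ℝ}
    {y : Matrix (Fin 2) (Fin n) ℝ} (hy : y ∈ Set.extremePoints ℝ (TP 2 n u v))
    {j k : Fin n} (hjk : j ≠ k)
    (hj0 : 0 < y 0 j) (hj1 : 0 < y 1 j) (hk0 : 0 < y 0 k) (hk1 : 0 < y 1 k) : False := by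
  set ε := min (min (y 0 j) (y 1 j)) (min (y 0 k) (y 1 k)) with hεdef
  have hε : 0 < ε := by positivity
  have hεj0 : ε ≤ y 0 j := le_trans (min_le_left _ _) (min_le_left _ _)
  have hεj1 : ε ≤ y 1 j := le_trans (min_le_left _ _) (min_le_right _ _)
  have hεk0 : ε ≤ y 0 k := le_trans (min_le_right _ _) (min_le_left _ _)
  have hεk1 : ε ≤ y 1 k := le_trans (min_le_right _ _) (min_le_right _ _)
  set w : Matrix (Fin 2) (Fin n) ℝ :=
    fun i l => (if i = 0 then ε else -ε) * ((if l = j then 1 else 0) - (if l = k then 1 else 0))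
    with hw
  have hyTP := hy.1
  have hrow : ∀ i, ∑ l, w i l = 0 := by
    intro i
    simp [hw, ← Finset.mul_sum, Finset.sum_sub_distrib]
  have hcol : ∀ l, ∑ i, w i l = 0 := by
    intro l
    rw [Fin.sum_univ_two]
    simp only [hw]
    norm_num
  have hb : ∀ i l, w i l = 0 ∨ ((w i l = ε ∨ w i l = -ε) ∧ ε ≤ y i l) := by
    intro i l
    have hi : i = 0 ∨ i = 1 := by omega
    by_cases h1 : l = j
    · right
      constructor
      · rcases hi with hi | hi
        · left; simp [hw, hi, h1, hjk]
        · right; simp [hw, hi, h1, hjk]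
      · rcases hi with hi | hi <;> subst hi <;> rw [h1] <;> assumption
    · by_cases h2 : l = k
      · right
        constructor
        · rcases hi with hi | hi
          · right; simp [hw, hi, h1, h2, Ne.symm hjk]
          · left; simp [hw, hi, h1, h2, Ne.symm hjk]
        · rcases hi with hi | hi <;> subst hi <;> rw [h2] <;> assumption
      · left; simp [hw, h1, h2]
  have hmem : ∀ (s : ℝ), s = 1 ∨ s = -1 → (y + s • w) ∈ TP 2 n u v := by
    intro s hs
    refine ⟨?_, ?_, ?_⟩
    · intro i l
      have hyil := hyTP.1 i l
      simp only [Matrix.add_apply, Matrix.smul_apply, smul_eq_mul]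
      rcases hb i l with h | ⟨h, hle⟩
      · rcases hs with hs | hs <;> subst hs <;> rw [h] <;> simpa using hyil
      · rcases hs with hs | hs <;> subst hs <;> rcases h with h | h <;> rw [h] <;> linarith
    · intro i
      have heq : ∑ l, (y i l + s * w i l) = ∑ l, y i l + s * ∑ l, w i l := by
        rw [Finset.mul_sum, ← Finset.sum_add_distrib]
      simp only [Matrix.add_apply, Matrix.smul_apply, smul_eq_mul]
      rw [heq, hrow i, hyTP.2.1 i]; ring
    · intro l
      have heq : ∑ i, (y i l + s * w i l) = ∑ i, y i l + s * ∑ i, w i l := by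
        rw [Finset.mul_sum, ← Finset.sum_add_distrib]
      simp only [Matrix.add_apply, Matrix.smul_apply, smul_eq_mul]
      rw [heq, hcol l, hyTP.2.2 l]; ring
  have h1 : (y + (1:ℝ) • w) ∈ TP 2 n u v := hmem 1 (Or.inl rfl)
  have h2 : (y + (-1:ℝ) • w) ∈ TP 2 n u v := hmem (-1) (Or.inr rfl)
  have hseg : y ∈ openSegment ℝ (y + (1:ℝ) • w) (y + (-1:ℝ) • w) :=
    ⟨1/2, 1/2, by norm_num, by norm_num, by norm_num, by module⟩
  have heq := hy.2 h1 h2 hseg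
  have : w 0 j = 0 := by
    have := congrFun (congrFun heq 0) j
    simp only [Matrix.add_apply, Matrix.smul_apply, smul_eq_mul, one_mul] at this
    linarith
  rw [hw] at this
  simp [hjk] at this
  linarith

/-- for vertices O, F of a (possibly degenerate) 2×n transportation
polytope, either |supp(O) \ supp(F)| ≤ n − 1, or |supp(O) \ supp(F)| = n and
|supp(F)| = n. -/
theorem stmt_6 (n : ℕ) (hn : 0 < n) (u : Fin 2 → ℝ) (v : Fin n → ℝ)
    (hu : ∀ i, 0 < u i) (hv : ∀ j, 0 < v j) (huv : ∑ i, u i = ∑ j, v j)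
    (O F : Matrix (Fin 2) (Fin n) ℝ)
    (hO : O ∈ Set.extremePoints ℝ (TP 2 n u v))
    (hF : F ∈ Set.extremePoints ℝ (TP 2 n u v)) :
    (suppF 2 n O \ suppF 2 n F).card ≤ n - 1 ∨
      ((suppF 2 n O \ suppF 2 n F).card = n ∧ (suppF 2 n F).card = n) := by
  set SO := suppF 2 n O with hSO
  set SF := suppF 2 n F with hSF
  have hOTP := hO.1
  have hFTP := hF.1
  have colO : ∀ j, ∃ i, (i, j) ∈ SO := fun j => (colpos hv hOTP j).imp fun i h => mem_suppF.2 h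
  have colF : ∀ j, ∃ i, (i, j) ∈ SF := fun j => (colpos hv hFTP j).imp fun i h => mem_suppF.2 h
  have dblO : ∀ j k : Fin n, j ≠ k → ((0, j) ∈ SO ∧ (1, j) ∈ SO) →
      ((0, k) ∈ SO ∧ (1, k) ∈ SO) → False := by
    intro j k hjk ⟨a, b⟩ ⟨c, d⟩
    exact extreme_one_double hO hjk (mem_suppF.1 a) (mem_suppF.1 b)
      (mem_suppF.1 c) (mem_suppF.1 d)
  have dblF : ∀ j k : Fin n, j ≠ k → ((0, j) ∈ SF ∧ (1, j) ∈ SF) →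
      ((0, k) ∈ SF ∧ (1, k) ∈ SF) → False := by
    intro j k hjk ⟨a, b⟩ ⟨c, d⟩
    exact extreme_one_double hF hjk (mem_suppF.1 a) (mem_suppF.1 b)
      (mem_suppF.1 c) (mem_suppF.1 d)
  have hcards : (SO \ SF).card + (SO ∩ SF).card = SO.card :=
    Finset.card_sdiff_add_card_inter SO SF
  -- n ≤ SF.card
  have colF' := colF
  choose iF hiF using colF'
  have hFn : n ≤ SF.card := by
    have := Finset.card_le_card_of_injOn (s := (Finset.univ : Finset (Fin n))) (t := SF) (f := fun j => (iF j, j)) (fun j _ => hiF j)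
      (fun a _ b _ h => (Prod.ext_iff.1 h).2)
    simpa using this
  by_cases hdO : ∃ j0, (0, j0) ∈ SO ∧ (1, j0) ∈ SO
  · -- O has a doubled column j0 (unique)
    obtain ⟨j0, hj00, hj01⟩ := hdO
    have hOcard : SO.card ≤ n + 1 := by
      have herased : ∀ j, ¬((0, j) ∈ SO.erase (0, j0) ∧ (1, j) ∈ SO.erase (0, j0)) := by
        rintro j ⟨h0, h1⟩
        by_cases hj : j = j0
        · subst hj; exact (Finset.ne_of_mem_erase h0) rfl
        · exact dblO j j0 hj ⟨Finset.mem_of_mem_erase h0, Finset.mem_of_mem_erase h1⟩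
            ⟨hj00, hj01⟩
      have h1 := nodouble_card herased
      have h2 := Finset.card_erase_of_mem hj00
      omega
    obtain ⟨i0, hi0⟩ : ∃ i, (i, j0) ∈ SF := ⟨iF j0, hiF j0⟩
    have hi0O : (i0, j0) ∈ SO := by
      have : i0 = 0 ∨ i0 = 1 := by omega
      rcases this with h | h <;> subst h <;> assumption
    have hk1 : 1 ≤ (SO ∩ SF).card :=
      Finset.card_pos.2 ⟨(i0, j0), Finset.mem_inter.2 ⟨hi0O, hi0⟩⟩
    by_cases hd : (SO \ SF).card ≤ n - 1
    · exact Or.inl hd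
    · right
      have hdn : (SO \ SF).card = n ∧ (SO ∩ SF).card = 1 := by omega
      -- show F has no doubled column
      have hFno : ∀ j, ¬((0, j) ∈ SF ∧ (1, j) ∈ SF) := by
        rintro j ⟨h0, h1⟩
        have h2le : 2 ≤ (SO ∩ SF).card := by
          by_cases hj : j = j0
          · refine Finset.one_lt_card.2 ⟨(0, j0), Finset.mem_inter.2 ⟨hj00, hj ▸ h0⟩,
              (1, j0), Finset.mem_inter.2 ⟨hj01, hj ▸ h1⟩, ?_⟩
            simp
          · obtain ⟨i, hi⟩ := colO j
            have hiF' : (i, j) ∈ SF := by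
              have : i = 0 ∨ i = 1 := by omega
              rcases this with h | h <;> subst h <;> assumption
            refine Finset.one_lt_card.2 ⟨(i, j), Finset.mem_inter.2 ⟨hi, hiF'⟩,
              (i0, j0), Finset.mem_inter.2 ⟨hi0O, hi0⟩, ?_⟩
            simp [hj]
        omega
      have : SF.card ≤ n := nodouble_card hFno
      exact ⟨hdn.1, le_antisymm this hFn⟩
  · -- O has no doubled column
    push_neg at hdO
    have hOcard : SO.card ≤ n := nodouble_card (fun j h => (hdO j h.1) h.2)
    have hdle : (SO \ SF).card ≤ n := le_trans (Finset.card_le_card (Finset.sdiff_subset)) hOcard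
    by_cases hd : (SO \ SF).card ≤ n - 1
    · exact Or.inl hd
    · right
      have hdn : (SO \ SF).card = n ∧ (SO ∩ SF).card = 0 := by omega
      have hempty : SO ∩ SF = ∅ := Finset.card_eq_zero.1 hdn.2
      have hFno : ∀ j, ¬((0, j) ∈ SF ∧ (1, j) ∈ SF) := by
        rintro j ⟨h0, h1⟩
        obtain ⟨i, hi⟩ := colO j
        have hiF' : (i, j) ∈ SF := by
          have : i = 0 ∨ i = 1 := by omega
          rcases this with h | h <;> subst h <;> assumption
        have : (i, j) ∈ SO ∩ SF := Finset.mem_inter.2 ⟨hi, hiF'⟩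
        rw [hempty] at this
        exact absurd this (Finset.notMem_empty _)
      have : SF.card ≤ n := nodouble_card hFno
      exact ⟨hdn.1, le_antisymm this hFn⟩
end

section
/- For every 2×n transportation polytope P(u,v) (n ≥ 1, positive margins) and any two vertices O and F of P(u,v), there exists a feasible maximal circuit walk from O to F of length at most n − 1. In other words, the circuit diameter CD_fm of every 2×n transportation polytope is at most n − 1. -/
namespace Stmt7

variable {n : ℕ}

/-- matrix with row 0 equal to `a`, row 1 equal to `v - a`. -/
def mat (v a : Fin n → ℝ) : Matrix (Fin 2) (Fin n) ℝ :=
  fun i l => if i = 0 then a l else v l - a l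

/-- the circuit supported on columns j, k. -/
def gm (j k : Fin n) : Matrix (Fin 2) (Fin n) ℝ :=
  fun i l => (if i = 0 then (1 : ℝ) else -1) *
    ((if l = j then 1 else 0) - (if l = k then 1 else 0))

lemma gm_row (j k : Fin n) (i : Fin 2) : ∑ l, gm j k i l = 0 := by
  simp [gm, ← Finset.mul_sum, Finset.sum_sub_distrib]

lemma gm_col (j k : Fin n) (l : Fin n) : ∑ i, gm j k i l = 0 := by
  rw [Fin.sum_univ_two]; simp [gm]

lemma gm_ne (j k : Fin n) (hjk : j ≠ k) (i : Fin 2) (l : Fin n) :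
    gm j k i l ≠ 0 ↔ (l = j ∨ l = k) := by
  rcases eq_or_ne l j with h | h
  · subst h; simp [gm, hjk]
    fin_cases i <;> norm_num
  · rcases eq_or_ne l k with h2 | h2
    · subst h2; simp [gm, h]
      fin_cases i <;> norm_num
    · simp [gm, h, h2]

lemma gm_circuit (j k : Fin n) (hjk : j ≠ k) : IsCircuit 2 n (gm j k) := by
  refine ⟨?_, gm_row j k, gm_col j k, ?_⟩
  · intro h0
    have : gm j k 0 j = 0 := by rw [h0]; rfl
    simp [gm, hjk] at this
  · intro h hne hrow hcol hsub
    have hzero : ∀ i l, l ≠ j → l ≠ k → h i l = 0 := by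
      intro i l h1 h2
      by_contra hc
      have := hsub (show (i, l) ∈ {p : Fin 2 × Fin n | h p.1 p.2 ≠ 0} from hc)
      rw [Set.mem_setOf_eq] at this
      rcases (gm_ne j k hjk i l).mp this with rfl | rfl
      · exact h1 rfl
      · exact h2 rfl
    have hcol' : ∀ l, h 1 l = - h 0 l := by
      intro l
      have := hcol l
      rw [Fin.sum_univ_two] at this
      linarith
    have hrow0 : h 0 j + h 0 k = 0 := by
      have h1 := hrow 0
      rw [← Finset.sum_subset (Finset.subset_univ ({j, k} : Finset (Fin n)))
        (by intro x _ hx; simp at hx; exact hzero 0 x hx.1 hx.2)] at h1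
      rwa [Finset.sum_pair hjk] at h1
    have hj0 : h 0 j ≠ 0 := by
      intro hc
      apply hne
      have hk0 : h 0 k = 0 := by linarith
      funext i l
      have h1 : h 1 j = 0 := by rw [hcol' j, hc, neg_zero]
      have h2 : h 1 k = 0 := by rw [hcol' k, hk0, neg_zero]
      rcases eq_or_ne l j with rfl | hlj
      · fin_cases i <;> simpa
      rcases eq_or_ne l k with rfl | hlk
      · fin_cases i <;> simpa
      · simpa using hzero i l hlj hlk
    have hk0 : h 0 k = - h 0 j := by linarith
    ext ⟨i, l⟩
    simp only [Set.mem_setOf_eq]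
    constructor
    · intro hil
      exact hsub (show (i, l) ∈ {p : Fin 2 × Fin n | h p.1 p.2 ≠ 0} from hil)
    · intro hil
      have hl := (gm_ne j k hjk i l).mp hil
      have e1 : h i l = h 0 j ∨ h i l = -(h 0 j) := by
        fin_cases i <;> rcases hl with h5 | h5 <;> subst h5
        · exact Or.inl rfl
        · exact Or.inr hk0
        · exact Or.inr (hcol' _)
        · exact Or.inl ((hcol' _).trans (by rw [hk0, neg_neg]))
      rcases e1 with e | e <;> rw [e] <;> simpa using hj0


lemma mat_mem (u : Fin 2 → ℝ) (v : Fin n → ℝ) (huv : ∑ i, u i = ∑ j, v j)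
    (a : Fin n → ℝ) (h0 : ∀ l, 0 ≤ a l) (hv : ∀ l, a l ≤ v l) (hs : ∑ l, a l = u 0) :
    mat v a ∈ TP 2 n u v := by
  have hu1 : ∑ l, (v l - a l) = u 1 := by
    rw [Fin.sum_univ_two] at huv
    rw [Finset.sum_sub_distrib, hs]
    linarith
  refine ⟨?_, ?_, ?_⟩
  · intro i l
    fin_cases i
    · simpa [mat] using h0 l
    · simp only [mat]
      have := hv l
      norm_num
      linarith
  · intro i
    fin_cases i
    · simpa [mat] using hs
    · simpa [mat] using hu1
  · intro l
    rw [Fin.sum_univ_two]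
    simp [mat]

/-- one circuit step on the row-0 vector. -/
def stepv (a : Fin n → ℝ) (j k : Fin n) (α : ℝ) : Fin n → ℝ :=
  fun l => if l = j then a l + α else if l = k then a l - α else a l

lemma mat_step (v a : Fin n → ℝ) (j k : Fin n) (hjk : j ≠ k) (α : ℝ) :
    mat v (stepv a j k α) = mat v a + α • gm j k := by
  funext i l
  have : (mat v a + α • gm j k) i l = mat v a i l + α * gm j k i l := rfl
  rw [this]
  rcases eq_or_ne l j with rfl | h1
  · fin_cases i <;> simp [mat, stepv, gm, hjk] <;> ring
  · rcases eq_or_ne l k with rfl | h2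
    · fin_cases i <;> simp [mat, stepv, gm, h1] <;> ring
    · fin_cases i <;> simp [mat, stepv, gm, h1, h2]

lemma stepv_sum (a : Fin n → ℝ) (j k : Fin n) (hjk : j ≠ k) (α : ℝ) :
    ∑ l, stepv a j k α l = ∑ l, a l := by
  have hj : ({j} : Finset (Fin n)) ⊆ Finset.univ := Finset.subset_univ _
  classical
  have : ∑ l, stepv a j k α l = ∑ l, (a l + (if l = j then α else 0) - (if l = k then α else 0)) := by
    apply Finset.sum_congr rfl
    intro l _
    rcases eq_or_ne l j with rfl | h1
    · simp [stepv, hjk]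
    · rcases eq_or_ne l k with rfl | h2
      · simp [stepv, h1]
      · simp [stepv, h1, h2]
  rw [this]
  rw [Finset.sum_sub_distrib, Finset.sum_add_distrib]
  simp

lemma maximality (u : Fin 2 → ℝ) (v a : Fin n → ℝ) (j k : Fin n) (hjk : j ≠ k)
    (β : ℝ) (hβ : min (v j - a j) (a k) < β) :
    mat v a + β • gm j k ∉ TP 2 n u v := by
  intro hmem
  obtain ⟨hpos, -, -⟩ := hmem
  rcases min_lt_iff.mp hβ with hlt | hlt
  · have h1 := hpos 1 j
    have : (mat v a + β • gm j k) 1 j = v j - a j - β := by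
      show mat v a 1 j + β * gm j k 1 j = _
      simp [mat, gm, hjk]
      ring
    rw [this] at h1
    linarith
  · have h1 := hpos 0 k
    have : (mat v a + β • gm j k) 0 k = a k - β := by
      show mat v a 0 k + β * gm j k 0 k = _
      simp [mat, gm, (Ne.symm hjk : k ≠ j)]
      ring
    rw [this] at h1
    linarith

/-- the set of mismatched columns. -/
noncomputable def msk (b a : Fin n → ℝ) : Finset (Fin n) :=
  Finset.univ.filter (fun l => a l ≠ b l)

lemma card_msk_ne_one (b a : Fin n → ℝ) (hsum : ∑ l, a l = ∑ l, b l) :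
    (msk b a).card ≠ 1 := by
  intro hc
  obtain ⟨l₀, hl₀⟩ := Finset.card_eq_one.mp hc
  have hz : ∀ l, l ≠ l₀ → a l - b l = 0 := by
    intro l hl
    have : l ∉ msk b a := by rw [hl₀]; simp [hl]
    simp only [msk, Finset.mem_filter, Finset.mem_univ, true_and, not_not] at this
    linarith [this]
  have h1 : ∑ l, (a l - b l) = a l₀ - b l₀ := by
    rw [Finset.sum_eq_single l₀]
    · intro x _ hx; exact hz x hx
    · intro hx; exact absurd (Finset.mem_univ l₀) hx
  have h2 : ∑ l, (a l - b l) = 0 := by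
    rw [Finset.sum_sub_distrib, hsum]; ring
  have : a l₀ = b l₀ := by linarith
  have : l₀ ∉ msk b a := by
    simp [msk, this]
  rw [hl₀] at this
  simp at this

lemma exists_pair (v b a : Fin n → ℝ)
    (hb0 : ∀ l, 0 ≤ b l) (hbv : ∀ l, b l ≤ v l)
    (ha0 : ∀ l, 0 ≤ a l) (hav : ∀ l, a l ≤ v l)
    (hsum : ∑ l, a l = ∑ l, b l)
    (hnice : ∀ j k, 0 < b j → b j < v j → 0 < b k → b k < v k → j = k)
    (hne : a ≠ b) :
    ∃ j k, j ≠ k ∧ a j < b j ∧ b k < a k ∧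
      min (v j - a j) (a k) = min (b j - a j) (a k - b k) := by
  classical
  set J : Finset (Fin n) := Finset.univ.filter (fun l => a l < b l) with hJ
  set K : Finset (Fin n) := Finset.univ.filter (fun l => b l < a l) with hK
  obtain ⟨l₁, hl₁⟩ : ∃ l, a l ≠ b l := by
    by_contra hc
    push_neg at hc
    exact hne (funext hc)
  have hJne : J.Nonempty := by
    by_contra hc
    rw [Finset.not_nonempty_iff_eq_empty] at hc
    have hle : ∀ l ∈ Finset.univ, b l ≤ a l := by
      intro l _
      by_contra h
      push_neg at h
      have : l ∈ J := by simp [hJ, h]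
      rw [hc] at this; simp at this
    have hlt : ∑ l, b l < ∑ l, a l := by
      apply Finset.sum_lt_sum hle
      refine ⟨l₁, Finset.mem_univ l₁, ?_⟩
      rcases lt_or_gt_of_ne hl₁ with h | h
      · have : l₁ ∈ J := by simp [hJ, h]
        rw [hc] at this; simp at this
      · exact h
    linarith
  have hKne : K.Nonempty := by
    by_contra hc
    rw [Finset.not_nonempty_iff_eq_empty] at hc
    have hle : ∀ l ∈ Finset.univ, a l ≤ b l := by
      intro l _
      by_contra h
      push_neg at h
      have : l ∈ K := by simp [hK, h]
      rw [hc] at this; simp at this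
    have hlt : ∑ l, a l < ∑ l, b l := by
      apply Finset.sum_lt_sum hle
      refine ⟨l₁, Finset.mem_univ l₁, ?_⟩
      rcases lt_or_gt_of_ne hl₁ with h | h
      · exact h
      · have : l₁ ∈ K := by simp [hK, h]
        rw [hc] at this; simp at this
    linarith
  have hsum0 : ∑ l, (b l - a l) = 0 := by
    rw [Finset.sum_sub_distrib, hsum]; ring
  by_cases hKg : ∃ k ∈ K, b k = 0
  · obtain ⟨k, hkK, hbk⟩ := hKg
    have hak : b k < a k := by simpa [hK] using hkK
    by_cases hJg : ∃ j ∈ J, b j = v j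
    · obtain ⟨j, hjJ, hbj⟩ := hJg
      have haj : a j < b j := by simpa [hJ] using hjJ
      refine ⟨j, k, ?_, haj, hak, by rw [hbj, hbk, sub_zero]⟩
      intro h; subst h; linarith
    · -- all of J is split; J = {s}; pair s with the good k
      push_neg at hJg
      obtain ⟨s, hsJ⟩ := hJne
      have has : a s < b s := by simpa [hJ] using hsJ
      have hsplit : ∀ j ∈ J, 0 < b j ∧ b j < v j := by
        intro j hjJ
        have haj : a j < b j := by simpa [hJ] using hjJ
        exact ⟨lt_of_le_of_lt (ha0 j) haj, lt_of_le_of_ne (hbv j) (hJg j hjJ)⟩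
      have hJs : J = {s} := by
        apply Finset.eq_singleton_iff_unique_mem.mpr
        refine ⟨hsJ, ?_⟩
        intro x hx
        obtain ⟨h1, h2⟩ := hsplit x hx
        obtain ⟨h3, h4⟩ := hsplit s hsJ
        exact hnice x s h1 h2 h3 h4
      -- b s - a s = ∑ over Jᶜ of (a - b) ≥ a k - b k = a k
      have key : a k ≤ b s - a s := by
        have hsplit2 := Finset.sum_filter_add_sum_filter_not Finset.univ
          (fun l => a l < b l) (fun l => b l - a l)
        rw [hsum0] at hsplit2
        have hJsum : ∑ l ∈ J, (b l - a l) = b s - a s := by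
          rw [hJs, Finset.sum_singleton]
        have hcompl : ∑ l ∈ Finset.univ.filter (fun l => ¬ a l < b l), (a l - b l)
            = b s - a s := by
          have : ∑ l ∈ Finset.univ.filter (fun l => ¬ a l < b l), (a l - b l)
              = - ∑ l ∈ Finset.univ.filter (fun l => ¬ a l < b l), (b l - a l) := by
            rw [← Finset.sum_neg_distrib]
            apply Finset.sum_congr rfl
            intro x _; ring
          rw [this]
          rw [hJ] at hJsum
          linarith [hsplit2, hJsum]
        have hkmem : k ∈ Finset.univ.filter (fun l => ¬ a l < b l) := by
          simp only [Finset.mem_filter, Finset.mem_univ, true_and, not_lt]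
          linarith
        have hsingle : a k - b k ≤ ∑ l ∈ Finset.univ.filter (fun l => ¬ a l < b l), (a l - b l) := by
          apply Finset.single_le_sum (f := fun l => a l - b l) ?_ hkmem
          intro x hx
          simp only [Finset.mem_filter, Finset.mem_univ, true_and, not_lt] at hx
          show (0:ℝ) ≤ a x - b x
          linarith
        rw [hbk] at hsingle
        simp only [sub_zero] at hsingle
        linarith [hcompl]
      refine ⟨s, k, ?_, has, hak, ?_⟩
      · intro h; subst h; linarith
      · obtain ⟨-, h4⟩ := hsplit s hsJ
        rw [hbk, sub_zero]
        rw [min_eq_right (by linarith), min_eq_right (by linarith)]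
  · -- all of K is split; K = {s}; pair a good j with s
    push_neg at hKg
    obtain ⟨s, hsK⟩ := hKne
    have has : b s < a s := by simpa [hK] using hsK
    have hsplit : ∀ k ∈ K, 0 < b k ∧ b k < v k := by
      intro k hkK
      have hak : b k < a k := by simpa [hK] using hkK
      exact ⟨lt_of_le_of_ne (hb0 k) (Ne.symm (hKg k hkK)), lt_of_lt_of_le hak (hav k)⟩
    have hKs : K = {s} := by
      apply Finset.eq_singleton_iff_unique_mem.mpr
      refine ⟨hsK, ?_⟩
      intro x hx
      obtain ⟨h1, h2⟩ := hsplit x hx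
      obtain ⟨h3, h4⟩ := hsplit s hsK
      exact hnice x s h1 h2 h3 h4
    obtain ⟨j, hjJ⟩ := hJne
    have haj : a j < b j := by simpa [hJ] using hjJ
    have hbj : b j = v j := by
      by_contra hne2
      have h1 : 0 < b j := lt_of_le_of_lt (ha0 j) haj
      have h2 : b j < v j := lt_of_le_of_ne (hbv j) hne2
      obtain ⟨h3, h4⟩ := hsplit s hsK
      have : j = s := hnice j s h1 h2 h3 h4
      subst this
      linarith
    have key : b j - a j ≤ a s - b s := by
      have hsplit2 := Finset.sum_filter_add_sum_filter_not Finset.univ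
        (fun l => b l < a l) (fun l => a l - b l)
      have hsum0' : ∑ l, (a l - b l) = 0 := by
        rw [Finset.sum_sub_distrib, hsum]; ring
      rw [hsum0'] at hsplit2
      have hKsum : ∑ l ∈ K, (a l - b l) = a s - b s := by
        rw [hKs, Finset.sum_singleton]
      have hcompl : ∑ l ∈ Finset.univ.filter (fun l => ¬ b l < a l), (b l - a l)
          = a s - b s := by
        have : ∑ l ∈ Finset.univ.filter (fun l => ¬ b l < a l), (b l - a l)
            = - ∑ l ∈ Finset.univ.filter (fun l => ¬ b l < a l), (a l - b l) := by
          rw [← Finset.sum_neg_distrib]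
          apply Finset.sum_congr rfl
          intro x _; ring
        rw [this]
        rw [hK] at hKsum
        linarith [hsplit2, hKsum]
      have hjmem : j ∈ Finset.univ.filter (fun l => ¬ b l < a l) := by
        simp only [Finset.mem_filter, Finset.mem_univ, true_and, not_lt]
        linarith
      have hsingle : b j - a j ≤ ∑ l ∈ Finset.univ.filter (fun l => ¬ b l < a l), (b l - a l) := by
        apply Finset.single_le_sum (f := fun l => b l - a l) ?_ hjmem
        intro x hx
        simp only [Finset.mem_filter, Finset.mem_univ, true_and, not_lt] at hx
        show (0:ℝ) ≤ b x - a x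
        linarith
      linarith [hcompl]
    refine ⟨j, s, ?_, haj, has, ?_⟩
    · intro h; subst h; linarith
    · have hbs0 : 0 ≤ b s := hb0 s
      rw [hbj]
      rw [min_eq_left (by linarith), min_eq_left (by linarith)]

def FMW (u : Fin 2 → ℝ) (v : Fin n → ℝ) (k : ℕ) (y : ℕ → Matrix (Fin 2) (Fin n) ℝ) : Prop :=
  (∀ i ≤ k, y i ∈ TP 2 n u v) ∧
  ∀ i < k, ∃ g : Matrix (Fin 2) (Fin n) ℝ, ∃ α : ℝ,
    IsCircuit 2 n g ∧ 0 < α ∧ y (i + 1) = y i + α • g ∧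
    ∀ β : ℝ, α < β → y i + β • g ∉ TP 2 n u v

lemma walk_lemma (u : Fin 2 → ℝ) (v : Fin n → ℝ)
    (huv : ∑ i, u i = ∑ j, v j)
    (b : Fin n → ℝ) (hb0 : ∀ l, 0 ≤ b l) (hbv : ∀ l, b l ≤ v l) (hbs : ∑ l, b l = u 0)
    (hnice : ∀ j k, 0 < b j → b j < v j → 0 < b k → b k < v k → j = k) :
    ∀ c : ℕ, ∀ a : Fin n → ℝ, (∀ l, 0 ≤ a l) → (∀ l, a l ≤ v l) → (∑ l, a l = u 0) →
      (msk b a).card ≤ c →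
      ∃ k ≤ c - 1, ∃ y : ℕ → Matrix (Fin 2) (Fin n) ℝ,
        y 0 = mat v a ∧ y k = mat v b ∧ FMW u v k y := by
  intro c
  induction c with
  | zero =>
    intro a ha0 hav has hcard
    have hab : a = b := by
      funext l
      by_contra hc
      have hm : l ∈ msk b a := by simp [msk, hc]
      have := Finset.card_pos.mpr ⟨l, hm⟩
      omega
    subst hab
    exact ⟨0, Nat.zero_le _, fun _ => mat v a, rfl, rfl,
      fun i _ => mat_mem u v huv a ha0 hav has, fun i hi => absurd hi (Nat.not_lt_zero i)⟩
  | succ c ih =>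
    intro a ha0 hav has hcard
    by_cases hab : a = b
    · subst hab
      exact ⟨0, Nat.zero_le _, fun _ => mat v a, rfl, rfl,
        fun i _ => mat_mem u v huv a ha0 hav has, fun i hi => absurd hi (Nat.not_lt_zero i)⟩
    · have hsum : ∑ l, a l = ∑ l, b l := by rw [has, hbs]
      obtain ⟨j, k, hjk, hj, hk, heq⟩ := exists_pair v b a hb0 hbv ha0 hav hsum hnice hab
      set α := min (b j - a j) (a k - b k) with hα
      have hαpos : 0 < α := lt_min (by linarith) (by linarith)
      set a' := stepv a j k α with ha'
      have ha'j : a' j = a j + α := by simp [ha', stepv]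
      have ha'k : a' k = a k - α := by simp [ha', stepv, Ne.symm hjk]
      have ha'l : ∀ l, l ≠ j → l ≠ k → a' l = a l := by
        intro l h1 h2; simp [ha', stepv, h1, h2]
      have hαj : α ≤ b j - a j := min_le_left _ _
      have hαk : α ≤ a k - b k := min_le_right _ _
      have ha'0 : ∀ l, 0 ≤ a' l := by
        intro l
        rcases eq_or_ne l j with rfl | h1
        · rw [ha'j]; linarith [ha0 l]
        rcases eq_or_ne l k with rfl | h2
        · rw [ha'k]; linarith [hb0 l]
        · rw [ha'l l h1 h2]; exact ha0 l
      have ha'v : ∀ l, a' l ≤ v l := by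
        intro l
        rcases eq_or_ne l j with rfl | h1
        · rw [ha'j]; linarith [hbv l]
        rcases eq_or_ne l k with rfl | h2
        · rw [ha'k]; linarith [hav l]
        · rw [ha'l l h1 h2]; exact hav l
      have ha's : ∑ l, a' l = u 0 := by rw [ha', stepv_sum a j k hjk α, has]
      have hfix : a' j = b j ∨ a' k = b k := by
        rcases min_cases (b j - a j) (a k - b k) with ⟨h1, -⟩ | ⟨h1, -⟩
        · left; rw [ha'j, hα, h1]; ring
        · right; rw [ha'k, hα, h1]; ring
      have hsub : msk b a' ⊂ msk b a := by
        constructor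
        · intro l hl
          simp only [msk, Finset.mem_filter, Finset.mem_univ, true_and] at hl ⊢
          rcases eq_or_ne l j with rfl | h1
          · exact ne_of_lt hj
          rcases eq_or_ne l k with rfl | h2
          · exact ne_of_gt hk
          · rwa [ha'l l h1 h2] at hl
        · intro hcon
          rcases hfix with h | h
          · have hjm : j ∈ msk b a := by
              simp only [msk, Finset.mem_filter, Finset.mem_univ, true_and]
              exact ne_of_lt hj
            have := hcon hjm
            simp only [msk, Finset.mem_filter, Finset.mem_univ, true_and] at this
            exact this h
          · have hkm : k ∈ msk b a := by
              simp only [msk, Finset.mem_filter, Finset.mem_univ, true_and]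
              exact ne_of_gt hk
            have := hcon hkm
            simp only [msk, Finset.mem_filter, Finset.mem_univ, true_and] at this
            exact this h
      have hcard' : (msk b a').card ≤ c := by
        have := Finset.card_lt_card hsub
        omega
      obtain ⟨k', hk', y', hy0, hyk, hw⟩ := ih a' ha'0 ha'v ha's hcard'
      have hc1 : 1 ≤ c := by
        by_contra hcc
        have hcz : c = 0 := by omega
        subst hcz
        have h0 : (msk b a).card ≠ 0 := by
          intro h0
          apply hab
          funext l
          by_contra hcl
          have hm : l ∈ msk b a := by simp [msk, hcl]
          rw [Finset.card_eq_zero] at h0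
          rw [h0] at hm
          simp at hm
        have := card_msk_ne_one b a hsum
        omega
      refine ⟨k' + 1, by omega, fun i => if i = 0 then mat v a else y' (i - 1), by simp, ?_, ?_, ?_⟩
      · simpa using hyk
      · intro i hi
        rcases i with _ | i'
        · simpa using mat_mem u v huv a ha0 hav has
        · have hii : i' ≤ k' := by omega
          simpa using hw.1 i' hii
      · intro i hi
        rcases i with _ | i'
        · refine ⟨gm j k, α, gm_circuit j k hjk, hαpos, ?_, ?_⟩
          · show (if (0+1 : ℕ) = 0 then mat v a else y' (0+1-1)) = _
            simp only [Nat.zero_add, if_neg (Nat.one_ne_zero), if_pos rfl]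
            rw [show (1-1 : ℕ) = 0 from rfl, hy0, ha', mat_step v a j k hjk α]
            simp
          · intro β hβ
            simp only [if_pos rfl]
            apply maximality u v a j k hjk β
            rw [heq]
            exact hβ
        · obtain ⟨g, α', hcir, hp, he, hm⟩ := hw.2 i' (by omega)
          refine ⟨g, α', hcir, hp, ?_, ?_⟩
          · show (if (i'+1+1 : ℕ) = 0 then mat v a else y' (i'+1+1-1)) = _
            simp only [if_neg (Nat.succ_ne_zero _), Nat.add_sub_cancel]
            exact he
          · intro β hβ
            have := hm β hβ
            simpa using this

lemma pert_mem (u : Fin 2 → ℝ) (v : Fin n → ℝ) (F : Matrix (Fin 2) (Fin n) ℝ)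
    (hTP : F ∈ TP 2 n u v) (j k : Fin n) (hjk : j ≠ k) (t : ℝ)
    (h1 : 0 ≤ F 0 j + t) (h2 : t ≤ F 1 j) (h3 : t ≤ F 0 k) (h4 : 0 ≤ F 1 k + t) :
    F + t • gm j k ∈ TP 2 n u v := by
  obtain ⟨hpos, hrow, hcol⟩ := hTP
  have happ : ∀ i l, (F + t • gm j k) i l = F i l + t * gm j k i l := fun i l => rfl
  refine ⟨?_, ?_, ?_⟩
  · intro i l
    rw [happ]
    rcases eq_or_ne l j with rfl | hl1
    · fin_cases i <;> simp [gm, hjk] <;> linarith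
    rcases eq_or_ne l k with rfl | hl2
    · fin_cases i <;> simp [gm, Ne.symm hjk] <;> linarith
    · simp [gm, hl1, hl2]
      exact hpos i l
  · intro i
    simp only [happ]
    rw [Finset.sum_add_distrib, ← Finset.mul_sum, gm_row j k i, mul_zero, add_zero]
    exact hrow i
  · intro l
    simp only [happ]
    rw [Finset.sum_add_distrib, ← Finset.mul_sum, gm_col j k l, mul_zero, add_zero]
    exact hcol l

lemma nice_of_extreme (u : Fin 2 → ℝ) (v : Fin n → ℝ) (F : Matrix (Fin 2) (Fin n) ℝ)
    (hF : F ∈ Set.extremePoints ℝ (TP 2 n u v))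
    (hcolF : ∀ l, F 0 l + F 1 l = v l) :
    ∀ j k, 0 < F 0 j → F 0 j < v j → 0 < F 0 k → F 0 k < v k → j = k := by
  intro j k h1 h2 h3 h4
  by_contra hjk
  obtain ⟨hTP, hext⟩ := hF
  have hpos := hTP.1
  set ε := min (min (F 0 j) (v j - F 0 j)) (min (F 0 k) (v k - F 0 k)) with hε
  have hεpos : 0 < ε := lt_min (lt_min h1 (by linarith)) (lt_min h3 (by linarith))
  have hε1 : ε ≤ F 0 j := le_trans (min_le_left _ _) (min_le_left _ _)
  have hε2 : ε ≤ v j - F 0 j := le_trans (min_le_left _ _) (min_le_right _ _)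
  have hε3 : ε ≤ F 0 k := le_trans (min_le_right _ _) (min_le_left _ _)
  have hε4 : ε ≤ v k - F 0 k := le_trans (min_le_right _ _) (min_le_right _ _)
  have hF1j : F 1 j = v j - F 0 j := by linarith [hcolF j]
  have hF1k : F 1 k = v k - F 0 k := by linarith [hcolF k]
  have hm1 : F + ε • gm j k ∈ TP 2 n u v := by
    apply pert_mem u v F hTP j k hjk ε
    · linarith
    · rw [hF1j]; linarith
    · linarith
    · linarith [hpos 1 k]
  have hm2 : F + (-ε) • gm j k ∈ TP 2 n u v := by
    apply pert_mem u v F hTP j k hjk (-ε)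
    · linarith
    · linarith [hpos 1 j]
    · linarith
    · rw [hF1k]; linarith
  have hseg : F ∈ openSegment ℝ (F + ε • gm j k) (F + (-ε) • gm j k) := by
    refine ⟨1/2, 1/2, by norm_num, by norm_num, by norm_num, ?_⟩
    module
  obtain ⟨heq1, -⟩ := (mem_extremePoints.mp ⟨hTP, hext⟩).2 _ hm1 _ hm2 hseg
  have hent := congrFun (congrFun heq1 0) j
  have : F 0 j + ε * gm j k 0 j = F 0 j := hent
  simp [gm, hjk] at this
  linarith

end Stmt7


/-- the circuit diameter CD_fm of every 2×n transportation polytope is at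
most n − 1: between any two vertices there is a feasible maximal circuit walk of
length at most n − 1. -/
theorem stmt_7 (n : ℕ) (hn : 0 < n) (u : Fin 2 → ℝ) (v : Fin n → ℝ)
    (hu : ∀ i, 0 < u i) (hv : ∀ j, 0 < v j) (huv : ∑ i, u i = ∑ j, v j)
    (O F : Matrix (Fin 2) (Fin n) ℝ)
    (hO : O ∈ Set.extremePoints ℝ (TP 2 n u v))
    (hF : F ∈ Set.extremePoints ℝ (TP 2 n u v)) :
    ∃ k ≤ n - 1, ∃ y : ℕ → Matrix (Fin 2) (Fin n) ℝ,
      y 0 = O ∧ y k = F ∧ FMCircuitWalk 2 n u v k y := by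
  classical
  obtain ⟨hOpos, hOrow, hOcol⟩ := hO.1
  obtain ⟨hFpos, hFrow, hFcol⟩ := hF.1
  have hcolO : ∀ l, O 0 l + O 1 l = v l := by
    intro l; have := hOcol l; rwa [Fin.sum_univ_two] at this
  have hcolF : ∀ l, F 0 l + F 1 l = v l := by
    intro l; have := hFcol l; rwa [Fin.sum_univ_two] at this
  set a : Fin n → ℝ := fun l => O 0 l with ha
  set b : Fin n → ℝ := fun l => F 0 l with hb
  have hOmat : O = Stmt7.mat v a := by
    funext i l
    fin_cases i
    · rfl
    · show O 1 l = v l - a l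
      have := hcolO l
      simp only [ha]
      linarith
  have hFmat : F = Stmt7.mat v b := by
    funext i l
    fin_cases i
    · rfl
    · show F 1 l = v l - b l
      have := hcolF l
      simp only [hb]
      linarith
  have ha0 : ∀ l, 0 ≤ a l := fun l => hOpos 0 l
  have hav : ∀ l, a l ≤ v l := fun l => by have := hOpos 1 l; have := hcolO l; simp only [ha]; linarith
  have has : ∑ l, a l = u 0 := hOrow 0
  have hb0 : ∀ l, 0 ≤ b l := fun l => hFpos 0 l
  have hbv : ∀ l, b l ≤ v l := fun l => by have := hFpos 1 l; have := hcolF l; simp only [hb]; linarith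
  have hbs : ∑ l, b l = u 0 := hFrow 0
  have hnice : ∀ j k, 0 < b j → b j < v j → 0 < b k → b k < v k → j = k :=
    Stmt7.nice_of_extreme u v F hF hcolF
  have hcard : (Stmt7.msk b a).card ≤ n := by
    refine le_trans (Finset.card_filter_le _ _) ?_
    simp
  obtain ⟨k, hkle, y, h0, hk, hwalk⟩ :=
    Stmt7.walk_lemma u v huv b hb0 hbv hbs hnice n a ha0 hav has hcard
  exact ⟨k, hkle, y, by rw [h0, ← hOmat], by rw [hk, ← hFmat], hwalk⟩
end

section
/- Let n ≥ 2 and consider the 2×n transportation polytope P(u,v) with margins u_1 = u_2 = 2n − 1, v_1 = 2n, and v_j = 2 for j = 2, …, n. Let O ∈ P(u,v) be the matrix with O_{11} = 2n − 1, O_{21} = 1, O_{2j} = 2 for j = 2, …, n and all other entries 0, and let F ∈ P(u,v) be the matrix with F_{21} = 2n − 1, F_{11} = 1, F_{1j} = 2 for j = 2, …, n and all other entries 0. Then O and F are vertices of P(u,v) and every feasible circuit walk from O to F has length at least n − 1. -/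
lemma sum_if_aux (n : ℕ) [NeZero n] (c d : ℝ) :
    ∑ j : Fin n, (if (j : ℕ) = 0 then c else d) = c + d * (n - 1) := by
  rw [← Finset.sum_erase_add _ _ (Finset.mem_univ (0 : Fin n))]
  have h1 : ∀ j ∈ Finset.univ.erase (0 : Fin n),
      (if (j : ℕ) = 0 then c else d) = d := by
    intro j hj
    have := Finset.ne_of_mem_erase hj
    rw [Ne, Fin.ext_iff, Fin.val_zero] at this
    simp [this]
  rw [Finset.sum_congr rfl h1, Finset.sum_const, Finset.card_erase_of_mem (Finset.mem_univ _)]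
  have hn : 1 ≤ n := Nat.one_le_iff_ne_zero.mpr (NeZero.ne n)
  simp [Finset.card_univ]
  push_cast [hn]
  ring

lemma sum_single_aux (n : ℕ) [NeZero n] (f : Fin n → ℝ) (h : ∀ j : Fin n, (j : ℕ) ≠ 0 → f j = 0) :
    ∑ j, f j = f 0 := by
  apply Finset.sum_eq_single
  · intro j _ hj
    exact h j (fun h0 => hj (Fin.ext (by rw [h0, Fin.val_zero])))
  · simp

lemma circuit_struct (n : ℕ) (g : Matrix (Fin 2) (Fin n) ℝ) (hg : IsCircuit 2 n g) :
    ∃ p q : Fin n, p ≠ q ∧ g 0 p ≠ 0 ∧ g 0 q = - g 0 p ∧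
      ∀ j, j ≠ p → j ≠ q → g 0 j = 0 := by
  obtain ⟨hne, hrow, hcol, hmin⟩ := hg
  have hneg : ∀ j, g 1 j = - g 0 j := by
    intro j
    have := hcol j
    rw [Fin.sum_univ_two] at this
    linarith
  have hex : ∃ p, g 0 p ≠ 0 := by
    by_contra h
    push_neg at h
    apply hne
    ext i j
    fin_cases i <;> simp [h, hneg]
  obtain ⟨p, hp⟩ := hex
  have hex2 : ∃ q, q ≠ p ∧ g 0 q ≠ 0 := by
    by_contra h
    push_neg at h
    have : ∑ j, g 0 j = g 0 p := by
      apply Finset.sum_eq_single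
      · intro j _ hj
        by_contra hc
        exact hc (h j hj)
      · simp
    rw [hrow 0] at this
    exact hp this.symm
  obtain ⟨q, hqp, hq⟩ := hex2
  set h : Matrix (Fin 2) (Fin n) ℝ := Matrix.of (fun i j =>
    if j = p then (if i = 0 then 1 else -1)
    else if j = q then (if i = 0 then -1 else 1) else 0) with hhdef
  have happ : ∀ i j, h i j = if j = p then (if i = 0 then (1:ℝ) else -1)
      else if j = q then (if i = 0 then -1 else 1) else 0 := fun i j => rfl
  have hsupp : ∀ i j, h i j ≠ 0 ↔ (j = p ∨ j = q) := by
    intro i j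
    rw [happ]
    by_cases h1 : j = p <;> by_cases h2 : j = q <;> fin_cases i <;> simp [h1, h2, hqp]
  have hhne : h ≠ 0 := by
    intro hz
    have : h 0 p ≠ 0 := (hsupp 0 p).mpr (Or.inl rfl)
    rw [hz] at this
    exact this rfl
  have hhrow : ∀ i, ∑ j, h i j = 0 := by
    intro i
    have hs : ∑ j, h i j = ∑ j ∈ ({p, q} : Finset (Fin n)), h i j := by
      symm
      apply Finset.sum_subset (Finset.subset_univ _)
      intro x _ hx
      simp at hx
      rw [happ]
      simp [hx.1, hx.2]
    rw [hs, Finset.sum_insert (by simpa using Ne.symm hqp), Finset.sum_singleton]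
    rw [happ, happ]
    fin_cases i <;> simp [hqp, Ne.symm hqp]
  have hhcol : ∀ j, ∑ i, h i j = 0 := by
    intro j
    rw [Fin.sum_univ_two, happ, happ]
    by_cases h1 : j = p <;> by_cases h2 : j = q <;> simp [h1, h2, hqp]
  have hsub : {x : Fin 2 × Fin n | h x.1 x.2 ≠ 0} ⊆ {x : Fin 2 × Fin n | g x.1 x.2 ≠ 0} := by
    rintro ⟨i, j⟩ hx
    have := (hsupp i j).mp hx
    simp only [Set.mem_setOf_eq]
    rcases this with h1 | h1 <;> subst h1 <;> fin_cases i <;> simp [hneg, hp, hq]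
  have heq := hmin h hhne hhrow hhcol hsub
  have hz : ∀ j, j ≠ p → j ≠ q → g 0 j = 0 := by
    intro j h1 h2
    by_contra hc
    have : ((0 : Fin 2), j) ∈ {x : Fin 2 × Fin n | h x.1 x.2 ≠ 0} := by
      rw [heq]; exact hc
    have := (hsupp 0 j).mp this
    tauto
  refine ⟨p, q, Ne.symm hqp, hp, ?_, hz⟩
  have hs : ∑ j, g 0 j = ∑ j ∈ ({p, q} : Finset (Fin n)), g 0 j := by
    symm
    apply Finset.sum_subset (Finset.subset_univ _)
    intro x _ hx
    simp at hx
    exact hz x hx.1 hx.2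
  rw [hrow 0, Finset.sum_insert (by simpa using Ne.symm hqp), Finset.sum_singleton] at hs
  linarith

lemma tp_eq (n : ℕ) [NeZero n] (u : Fin 2 → ℝ) (v : Fin n → ℝ)
    (x y : Matrix (Fin 2) (Fin n) ℝ) (hx : x ∈ TP 2 n u v) (hy : y ∈ TP 2 n u v)
    (i₀ i₁ : Fin 2) (hi : i₀ ≠ i₁)
    (hxz : ∀ j : Fin n, (j : ℕ) ≠ 0 → x i₀ j = 0)
    (hyz : ∀ j : Fin n, (j : ℕ) ≠ 0 → y i₀ j = 0) : x = y := by
  obtain ⟨hx0, hx1, hx2⟩ := hx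
  obtain ⟨hy0, hy1, hy2⟩ := hy
  have hx00 : x i₀ 0 = u i₀ := by rw [← hx1 i₀, sum_single_aux n _ hxz]
  have hy00 : y i₀ 0 = u i₀ := by rw [← hy1 i₀, sum_single_aux n _ hyz]
  have hrow0 : ∀ j, x i₀ j = y i₀ j := by
    intro j
    by_cases hj : (j : ℕ) = 0
    · have : j = (0 : Fin n) := by rwa [Fin.ext_iff, Fin.val_zero]
      subst this
      rw [hx00, hy00]
    · rw [hxz j hj, hyz j hj]
  have hswap : ∀ (z : Matrix (Fin 2) (Fin n) ℝ) (j : Fin n),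
      z i₀ j + z i₁ j = z 0 j + z 1 j := by
    intro z j
    fin_cases i₀ <;> fin_cases i₁ <;>
      first | (exact absurd rfl hi) | rfl | (exact add_comm _ _)
  have hrow1 : ∀ j, x i₁ j = y i₁ j := by
    intro j
    have h1 := hx2 j
    have h2 := hy2 j
    rw [Fin.sum_univ_two] at h1 h2
    have e1 := hswap x j
    have e2 := hswap y j
    have := hrow0 j
    linarith
  ext i j
  have : i = i₀ ∨ i = i₁ := by
    have h2 : (i₀ : ℕ) < 2 := i₀.isLt
    have h3 : (i₁ : ℕ) < 2 := i₁.isLt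
    have h4 : (i : ℕ) < 2 := i.isLt
    have h5 : (i₀ : ℕ) ≠ (i₁ : ℕ) := fun h => hi (Fin.ext h)
    rw [Fin.ext_iff, Fin.ext_iff]
    omega
  rcases this with h | h <;> subst h
  · exact hrow0 j
  · exact hrow1 j

lemma vertex_aux (n : ℕ) (hn : 2 ≤ n) (u : Fin 2 → ℝ) (v : Fin n → ℝ)
    (hu : ∀ i, u i = 2 * n - 1)
    (hv0 : ∀ j : Fin n, (j : ℕ) = 0 → v j = 2 * n)
    (hv1 : ∀ j : Fin n, (j : ℕ) ≠ 0 → v j = 2)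
    (i₀ i₁ : Fin 2) (hi : i₀ ≠ i₁)
    (X : Matrix (Fin 2) (Fin n) ℝ)
    (hX0 : ∀ j, X i₀ j = if (j : ℕ) = 0 then (2 * n - 1 : ℝ) else 0)
    (hX1 : ∀ j, X i₁ j = if (j : ℕ) = 0 then (1 : ℝ) else 2) :
    X ∈ Set.extremePoints ℝ (TP 2 n u v) := by
  haveI : NeZero n := ⟨by omega⟩
  have hn' : (2 : ℝ) ≤ n := by exact_mod_cast hn
  have hcases : ∀ i : Fin 2, i = i₀ ∨ i = i₁ := by
    intro i
    have h2 : (i₀ : ℕ) < 2 := i₀.isLt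
    have h3 : (i₁ : ℕ) < 2 := i₁.isLt
    have h4 : (i : ℕ) < 2 := i.isLt
    have h5 : (i₀ : ℕ) ≠ (i₁ : ℕ) := fun h => hi (Fin.ext h)
    rw [Fin.ext_iff, Fin.ext_iff]
    omega
  have hswap : ∀ (z : Matrix (Fin 2) (Fin n) ℝ) (j : Fin n),
      z i₀ j + z i₁ j = z 0 j + z 1 j := by
    intro z j
    fin_cases i₀ <;> fin_cases i₁ <;>
      first | (exact absurd rfl hi) | rfl | (exact add_comm _ _)
  have hmem : X ∈ TP 2 n u v := by
    refine ⟨?_, ?_, ?_⟩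
    · intro i j
      rcases hcases i with h | h <;> subst h
      · rw [hX0]; split <;> linarith
      · rw [hX1]; split <;> linarith
    · intro i
      rcases hcases i with h | h <;> subst h
      · rw [Finset.sum_congr rfl (fun j _ => hX0 j), sum_if_aux, hu]; ring
      · rw [Finset.sum_congr rfl (fun j _ => hX1 j), sum_if_aux, hu]; ring
    · intro j
      rw [Fin.sum_univ_two, ← hswap X j, hX0, hX1]
      by_cases hj : (j : ℕ) = 0
      · rw [if_pos hj, if_pos hj, hv0 j hj]; ring
      · rw [if_neg hj, if_neg hj, hv1 j hj]; norm_num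
  rw [mem_extremePoints]
  refine ⟨hmem, ?_⟩
  intro x₁ hx₁ x₂ hx₂ hseg
  obtain ⟨a, b, ha, hb, hab, heq⟩ := hseg
  have hpt : ∀ i j, a * x₁ i j + b * x₂ i j = X i j := by
    intro i j
    have := congrFun (congrFun heq i) j
    simpa [Matrix.add_apply, Matrix.smul_apply, smul_eq_mul] using this
  have hz : ∀ (j : Fin n), (j : ℕ) ≠ 0 → x₁ i₀ j = 0 ∧ x₂ i₀ j = 0 := by
    intro j hj
    have h1 := hpt i₀ j
    rw [hX0, if_neg hj] at h1
    have h2 := hx₁.1 i₀ j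
    have h3 := hx₂.1 i₀ j
    constructor <;> nlinarith
  have e1 : x₁ = X := tp_eq n u v x₁ X hx₁ hmem i₀ i₁ hi
    (fun j hj => (hz j hj).1) (fun j hj => by rw [hX0, if_neg hj])
  have e2 : x₂ = X := tp_eq n u v x₂ X hx₂ hmem i₀ i₁ hi
    (fun j hj => (hz j hj).2) (fun j hj => by rw [hX0, if_neg hj])
  exact ⟨e1, e2⟩

/-- for the 2×n transportation polytope with margins
u₁ = u₂ = 2n − 1, v₁ = 2n, vⱼ = 2 (j ≥ 2), the two specific assignments O and F are
vertices and every feasible circuit walk from O to F has length at least n − 1. -/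
theorem stmt_8 (n : ℕ) (hn : 2 ≤ n)
    (u : Fin 2 → ℝ) (v : Fin n → ℝ) (O F : Matrix (Fin 2) (Fin n) ℝ)
    (hu : ∀ i, u i = 2 * n - 1)
    (hv : ∀ j, v j = if (j : ℕ) = 0 then 2 * n else 2)
    (hO : ∀ i j, O i j = if (i : ℕ) = 0 then (if (j : ℕ) = 0 then 2 * n - 1 else 0)
        else (if (j : ℕ) = 0 then 1 else 2))
    (hF : ∀ i j, F i j = if (i : ℕ) = 1 then (if (j : ℕ) = 0 then 2 * n - 1 else 0)
        else (if (j : ℕ) = 0 then 1 else 2)) :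
    O ∈ Set.extremePoints ℝ (TP 2 n u v) ∧
    F ∈ Set.extremePoints ℝ (TP 2 n u v) ∧
    ∀ (k : ℕ) (y : ℕ → Matrix (Fin 2) (Fin n) ℝ),
      y 0 = O → y k = F →
      (∀ i ≤ k, y i ∈ TP 2 n u v) →
      (∀ i < k, ∃ g : Matrix (Fin 2) (Fin n) ℝ, ∃ α : ℝ,
        IsCircuit 2 n g ∧ 0 < α ∧ y (i + 1) = y i + α • g) →
      n - 1 ≤ k := by
  haveI : NeZero n := ⟨by omega⟩
  have hcast : ((2 * n - 1 : ℕ) : ℝ) = 2 * (n : ℝ) - 1 := by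
    rw [Nat.cast_sub (by omega : 1 ≤ 2 * n)]
    push_cast
    ring
  have hv0 : ∀ j : Fin n, (j : ℕ) = 0 → v j = 2 * n := by
    intro j hj; rw [hv j, if_pos hj]; push_cast; ring
  have hv1 : ∀ j : Fin n, (j : ℕ) ≠ 0 → v j = 2 := by
    intro j hj; rw [hv j, if_neg hj]; norm_num
  have hOext : O ∈ Set.extremePoints ℝ (TP 2 n u v) := by
    apply vertex_aux n hn u v hu hv0 hv1 0 1 (by decide) O
    · intro j; rw [hO 0 j]; norm_num [hcast]
    · intro j; rw [hO 1 j]; norm_num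
  have hFext : F ∈ Set.extremePoints ℝ (TP 2 n u v) := by
    apply vertex_aux n hn u v hu hv0 hv1 1 0 (by decide) F
    · intro j; rw [hF 1 j]; norm_num [hcast]
    · intro j; rw [hF 0 j]; norm_num
  refine ⟨hOext, hFext, ?_⟩
  intro k y h0 hk hfeas hstep
  set d : ℕ → ℝ := fun i => y i 0 0 with hd
  have hstepb : ∀ i < k, |d (i + 1) - d i| ≤ 2 := by
    intro i hi
    obtain ⟨g, α, hg, hα, hyi⟩ := hstep i hi
    obtain ⟨p, q, hpq, hgp, hgq, hgz⟩ := circuit_struct n g hg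
    have hdiff : ∀ j : Fin n, y (i + 1) 0 j - y i 0 j = α * g 0 j := by
      intro j
      rw [hyi]
      simp [Matrix.add_apply, Matrix.smul_apply, smul_eq_mul]
    have hbound : ∀ j : Fin n, (j : ℕ) ≠ 0 → |α * g 0 j| ≤ 2 := by
      intro j hj
      rw [← hdiff j]
      have h1 := hfeas i (le_of_lt hi)
      have h2 := hfeas (i + 1) (Nat.succ_le_of_lt hi)
      have c1 := h1.2.2 j
      have c2 := h2.2.2 j
      rw [Fin.sum_univ_two, hv1 j hj] at c1 c2
      have n1 := h1.1 0 j
      have n2 := h1.1 1 j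
      have n3 := h2.1 0 j
      have n4 := h2.1 1 j
      rw [abs_le]
      constructor <;> linarith
    have hdd : d (i + 1) - d i = α * g 0 0 := hdiff 0
    by_cases hp0 : p = (0 : Fin n)
    · have hq0 : (q : ℕ) ≠ 0 := by
        intro h
        exact hpq (by rw [hp0]; exact (Fin.ext (by rw [h, Fin.val_zero])).symm)
      have := hbound q hq0
      rw [hgq, mul_neg, abs_neg] at this
      rw [hdd, ← hp0]
      exact this
    · by_cases hq0 : q = (0 : Fin n)
      · have hp0' : (p : ℕ) ≠ 0 := by
          intro h
          exact hp0 (Fin.ext (by rw [h, Fin.val_zero]))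
        have := hbound p hp0'
        rw [hdd, ← hq0, hgq, mul_neg, abs_neg]
        exact this
      · rw [hdd, hgz 0 (fun h => hp0 h.symm) (fun h => hq0 h.symm)]
        simp
  have htel : ∀ m, m ≤ k → |d m - d 0| ≤ 2 * m := by
    intro m
    induction m with
    | zero => simp
    | succ m ih =>
      intro hm
      have h1 := ih (by omega)
      have h2 := hstepb m (by omega)
      have h3 : |d (m + 1) - d 0| ≤ |d (m + 1) - d m| + |d m - d 0| := abs_sub_le _ _ _
      push_cast
      linarith
  have hd0 : d 0 = 2 * n - 1 := by
    rw [hd]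
    simp only [h0, hO]
    norm_num [hcast]
  have hdk : d k = 1 := by
    rw [hd]
    simp only [hk, hF]
    norm_num
  have := htel k le_rfl
  rw [hd0, hdk] at this
  have hle := (abs_le.mp this).1
  have hnk : (n : ℝ) ≤ (k : ℝ) + 1 := by linarith
  have : n ≤ k + 1 := by exact_mod_cast hnk
  omega
end

section
/- Let n ≥ 3 and consider the 2×n transportation polytope P(u,v) with margins u_1 = u_2 = 2n − 3, v_1 = 2n − 4, and v_j = 2 for j = 2, …, n. Let O ∈ P(u,v) be the matrix with O_{11} = 2n − 4, O_{12} = 1, O_{22} = 1, O_{2j} = 2 for j = 3, …, n and all other entries 0, and let F ∈ P(u,v) be the matrix with F_{21} = 2n − 4, F_{22} = 1, F_{12} = 1, F_{1j} = 2 for j = 3, …, n and all other entries 0. Then O and F are vertices of P(u,v) and every edge walk from O to F in P(u,v) has length at least n; in particular this polytope has graph diameter at least n. -/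
/-- Two distinct vertices are adjacent if the segment between them is extreme in P. -/
def AdjVert (m n : ℕ) (u : Fin m → ℝ) (v : Fin n → ℝ)
    (y z : Matrix (Fin m) (Fin n) ℝ) : Prop :=
  y ≠ z ∧ y ∈ Set.extremePoints ℝ (TP m n u v) ∧ z ∈ Set.extremePoints ℝ (TP m n u v) ∧
    IsExtreme ℝ (TP m n u v) (segment ℝ y z)

section Aux
open Finset

lemma sum_pair {n : ℕ} {c1 c2 : Fin n} (h : c1 ≠ c2) (a b : ℝ) :
    ∑ l : Fin n, (if l = c1 then a else if l = c2 then b else 0) = a + b := by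
  have h1 : ∀ l : Fin n, (if l = c1 then a else if l = c2 then b else 0)
      = (if l = c1 then a else 0) + (if l = c2 then b else 0) := by
    intro l
    by_cases e1 : l = c1
    · subst e1; simp [h]
    · by_cases e2 : l = c2 <;> simp [e1, e2, Ne.symm h]
  simp only [h1]
  rw [Finset.sum_add_distrib]
  simp [Finset.sum_ite_eq']

lemma sum_split_two {n : ℕ} {j k : Fin n} (h : j ≠ k) (g : Fin n → ℝ) :
    ∑ l : Fin n, g l = g j + g k + ∑ l ∈ (Finset.univ.erase j).erase k, g l := by
  rw [← Finset.add_sum_erase _ g (Finset.mem_univ j),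
      ← Finset.add_sum_erase _ g (Finset.mem_erase.mpr ⟨Ne.symm h, Finset.mem_univ k⟩)]
  ring

lemma card_rest {n : ℕ} {j k : Fin n} (h : j ≠ k) :
    ((Finset.univ.erase j).erase k).card = n - 2 := by
  rw [Finset.card_erase_of_mem (Finset.mem_erase.mpr ⟨Ne.symm h, Finset.mem_univ k⟩),
      Finset.card_erase_of_mem (Finset.mem_univ j)]
  simp [Finset.card_univ]
  omega

lemma sum_zero_two {n : ℕ} (s : Finset (Fin n)) (g : Fin n → ℝ)
    (h : ∀ j ∈ s, g j = 0 ∨ g j = 2) :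
    ∃ c : ℕ, c ≤ s.card ∧ ∑ l ∈ s, g l = 2 * c := by
  refine ⟨(s.filter (fun j => g j = 2)).card, Finset.card_filter_le _ _, ?_⟩
  rw [← Finset.sum_filter_add_sum_filter_not s (fun j => g j = 2)]
  have h1 : ∑ l ∈ s.filter (fun j => g j = 2), g l
      = 2 * (s.filter (fun j => g j = 2)).card := by
    rw [Finset.sum_congr rfl (fun x hx => (Finset.mem_filter.mp hx).2)]
    simp [mul_comm]
  have h2 : ∑ l ∈ s.filter (fun j => ¬ g j = 2), g l = 0 := by
    apply Finset.sum_eq_zero; intro x hx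
    rcases h x (Finset.mem_filter.mp hx).1 with h0 | h2'
    · exact h0
    · exact absurd h2' (Finset.mem_filter.mp hx).2
  rw [h1, h2, add_zero]

def pert {n : ℕ} (w : Matrix (Fin 2) (Fin n) ℝ) (c1 c2 : Fin n) (ε : ℝ) :
    Matrix (Fin 2) (Fin n) ℝ :=
  Matrix.of fun i l => w i l +
    (if l = c1 then (if i = 0 then ε else -ε)
     else if l = c2 then (if i = 0 then -ε else ε) else 0)

lemma col_sum {n : ℕ} {u : Fin 2 → ℝ} {v : Fin n → ℝ} {w : Matrix (Fin 2) (Fin n) ℝ}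
    (hw : w ∈ TP 2 n u v) (l : Fin n) : w 0 l + w 1 l = v l := by
  have := hw.2.2 l
  rwa [Fin.sum_univ_two] at this

lemma pert_mem {n : ℕ} {u : Fin 2 → ℝ} {v : Fin n → ℝ} {w : Matrix (Fin 2) (Fin n) ℝ}
    (hw : w ∈ TP 2 n u v) {c1 c2 : Fin n} (hne : c1 ≠ c2) {ε : ℝ}
    (h1 : ε ≤ w 1 c1) (h2 : -ε ≤ w 0 c1)
    (h3 : ε ≤ w 0 c2) (h4 : -ε ≤ w 1 c2) :
    pert w c1 c2 ε ∈ TP 2 n u v := by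
  obtain ⟨hpos, hrow, hcol⟩ := hw
  refine ⟨?_, ?_, ?_⟩
  · intro i l
    simp only [pert, Matrix.of_apply]
    fin_cases i <;> by_cases e1 : l = c1 <;> by_cases e2 : l = c2 <;>
      simp only [e1, e2, if_true, if_false, eq_self_iff_true] <;>
      simp_all <;> linarith [hpos.1 l, hpos.2 l]
  · intro i
    simp only [pert, Matrix.of_apply]
    rw [Finset.sum_add_distrib, hrow i, _root_.sum_pair hne]
    fin_cases i <;> simp
  · intro l
    rw [Fin.sum_univ_two]
    have hc := col_sum ⟨hpos, hrow, hcol⟩ l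
    simp only [pert, Matrix.of_apply]
    split_ifs <;> first | linarith | simp_all

lemma mem_openSeg_pert {n : ℕ} (w : Matrix (Fin 2) (Fin n) ℝ) (c1 c2 : Fin n) {ε : ℝ} (_hε : 0 < ε) :
    w ∈ openSegment ℝ (pert w c1 c2 ε) (pert w c1 c2 (-ε)) := by
  refine ⟨1/2, 1/2, by norm_num, by norm_num, by norm_num, ?_⟩
  ext i l
  simp only [pert, Matrix.add_apply, Matrix.smul_apply, Matrix.of_apply, smul_eq_mul]
  split_ifs <;> ring

lemma mid_mem {n : ℕ} {u : Fin 2 → ℝ} {v : Fin n → ℝ} {y z : Matrix (Fin 2) (Fin n) ℝ}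
    (hy : y ∈ TP 2 n u v) (hz : z ∈ TP 2 n u v) :
    ((1/2 : ℝ) • (y + z)) ∈ TP 2 n u v := by
  obtain ⟨hy1, hy2, hy3⟩ := hy
  obtain ⟨hz1, hz2, hz3⟩ := hz
  refine ⟨?_, ?_, ?_⟩
  · intro i l
    simp only [Matrix.smul_apply, Matrix.add_apply, smul_eq_mul]
    linarith [hy1 i l, hz1 i l]
  · intro i
    simp only [Matrix.smul_apply, Matrix.add_apply, smul_eq_mul]
    rw [← Finset.mul_sum, Finset.sum_add_distrib, hy2 i, hz2 i]
    ring
  · intro l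
    simp only [Matrix.smul_apply, Matrix.add_apply, smul_eq_mul]
    rw [← Finset.mul_sum, Finset.sum_add_distrib, hy3 l, hz3 l]
    ring

lemma mid_mem_seg {n : ℕ} (y z : Matrix (Fin 2) (Fin n) ℝ) :
    ((1/2 : ℝ) • (y + z)) ∈ segment ℝ y z := by
  exact ⟨1/2, 1/2, by norm_num, by norm_num, by norm_num, by module⟩

lemma eq_of_row0 {n : ℕ} {u : Fin 2 → ℝ} {v : Fin n → ℝ} {y z : Matrix (Fin 2) (Fin n) ℝ}
    (hy : y ∈ TP 2 n u v) (hz : z ∈ TP 2 n u v) (h : ∀ l, y 0 l = z 0 l) : y = z := by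
  ext i l
  fin_cases i
  · exact h l
  · have h1 := col_sum hy l
    have h2 := col_sum hz l
    have := h l
    simp only [Fin.mk_one]
    linarith

lemma adj_struct {n : ℕ} {u : Fin 2 → ℝ} {v : Fin n → ℝ} {y z : Matrix (Fin 2) (Fin n) ℝ}
    (h : AdjVert 2 n u v y z) :
    ∃ j k : Fin n, j ≠ k ∧ ∀ l, l ≠ j → l ≠ k →
      (y 0 l = z 0 l ∧ (y 0 l = 0 ∨ y 0 l = v l)) := by
  obtain ⟨hyz, hyE, hzE, hSeg⟩ := h
  have hyP : y ∈ TP 2 n u v := hyE.1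
  have hzP : z ∈ TP 2 n u v := hzE.1
  set md := (1/2 : ℝ) • (y + z) with hmddef
  have hmdP : md ∈ TP 2 n u v := mid_mem hyP hzP
  have hmdseg : md ∈ segment ℝ y z := mid_mem_seg y z
  have hmd : ∀ i l, md i l = (y i l + z i l)/2 := by
    intro i l
    simp only [hmddef, Matrix.smul_apply, Matrix.add_apply, smul_eq_mul]
    ring
  have hint : ∀ c, y 0 c ≠ z 0 c → 0 < md 0 c ∧ 0 < md 1 c := by
    intro c hc
    have h1 := hyP.1 0 c; have h2 := hzP.1 0 c
    have h3 := hyP.1 1 c; have h4 := hzP.1 1 c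
    have h5 := col_sum hyP c; have h6 := col_sum hzP c
    constructor
    · rw [hmd]
      rcases h1.lt_or_eq with h | h
      · linarith
      · have : z 0 c ≠ 0 := fun e => hc (by rw [e, ← h])
        have : 0 < z 0 c := lt_of_le_of_ne h2 (Ne.symm this)
        linarith
    · rw [hmd]
      have hc' : y 1 c ≠ z 1 c := fun e => hc (by linarith)
      rcases h3.lt_or_eq with h | h
      · linarith
      · have : z 1 c ≠ 0 := fun e => hc' (by rw [e, ← h])
        have : 0 < z 1 c := lt_of_le_of_ne h4 (Ne.symm this)
        linarith
  have key : ∀ c1 c2 : Fin n, c1 ≠ c2 → (0 < md 0 c1 ∧ 0 < md 1 c1) →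
      (0 < md 0 c2 ∧ 0 < md 1 c2) →
      ∃ ε : ℝ, 0 < ε ∧ pert md c1 c2 ε ∈ segment ℝ y z := by
    intro c1 c2 hne hi1 hi2
    set ε := min (min (md 0 c1) (md 1 c1)) (min (md 0 c2) (md 1 c2)) with hεdef
    have hε : 0 < ε := lt_min (lt_min hi1.1 hi1.2) (lt_min hi2.1 hi2.2)
    have e1 : ε ≤ md 0 c1 := le_trans (min_le_left _ _) (min_le_left _ _)
    have e2 : ε ≤ md 1 c1 := le_trans (min_le_left _ _) (min_le_right _ _)
    have e3 : ε ≤ md 0 c2 := le_trans (min_le_right _ _) (min_le_left _ _)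
    have e4 : ε ≤ md 1 c2 := le_trans (min_le_right _ _) (min_le_right _ _)
    have memX : pert md c1 c2 ε ∈ TP 2 n u v :=
      pert_mem hmdP hne e2 (by linarith) e3 (by linarith)
    have memX' : pert md c1 c2 (-ε) ∈ TP 2 n u v :=
      pert_mem hmdP hne (by linarith) (by linarith) (by linarith) (by linarith)
    exact ⟨ε, hε, (hSeg.2 memX memX' hmdseg (mem_openSeg_pert md c1 c2 hε))⟩
  have hjex : ∃ j, y 0 j ≠ z 0 j := by
    by_contra hno
    push_neg at hno
    exact hyz (eq_of_row0 hyP hzP hno)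
  obtain ⟨j, hj⟩ := hjex
  have hkex : ∃ k, y 0 k ≠ z 0 k ∧ k ≠ j := by
    by_contra hno
    push_neg at hno
    have hsum : ∑ l, y 0 l = ∑ l, z 0 l := by
      rw [hyP.2.1 0, hzP.2.1 0]
    rw [← Finset.add_sum_erase _ _ (Finset.mem_univ j),
        ← Finset.add_sum_erase _ _ (Finset.mem_univ j)] at hsum
    have : ∑ l ∈ Finset.univ.erase j, y 0 l = ∑ l ∈ Finset.univ.erase j, z 0 l := by
      apply Finset.sum_congr rfl
      intro x hx
      by_contra hne
      exact (Finset.mem_erase.mp hx).1 (hno x hne)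
    rw [this] at hsum
    exact hj (by linarith)
  obtain ⟨k, hk, hkj⟩ := hkex
  refine ⟨j, k, Ne.symm hkj, ?_⟩
  intro l hlj hlk
  have hjint := hint j hj
  have hkint := hint k hk
  have heql : y 0 l = z 0 l := by
    by_contra hne
    obtain ⟨ε, hε, a, b, ha, hb, hab, heq⟩ := key j k (Ne.symm hkj) hjint hkint
    have e1 : a * y 0 l + b * z 0 l = (y 0 l + z 0 l)/2 := by
      have := congrFun (congrFun heq 0) l
      simp only [pert, Matrix.add_apply, Matrix.smul_apply, Matrix.of_apply, smul_eq_mul,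
        if_neg hlj, if_neg hlk, add_zero] at this
      rw [this, hmd]
    have hprod : (a - 1/2) * (y 0 l - z 0 l) = 0 := by
      linear_combination e1 - (z 0 l) * hab
    rcases mul_eq_zero.mp hprod with h | h
    · have ha2 : a = 1/2 := by linarith
      have hb2 : b = 1/2 := by linarith
      have e2 : a * y 0 j + b * z 0 j = md 0 j + ε := by
        have := congrFun (congrFun heq 0) j
        simp only [pert, Matrix.add_apply, Matrix.smul_apply, Matrix.of_apply, smul_eq_mul,
          if_pos rfl] at this
        rw [this]
        norm_num
      rw [hmd, ha2, hb2] at e2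
      linarith
    · exact hne (by linarith)
  refine ⟨heql, ?_⟩
  by_contra hbd
  push_neg at hbd
  have h1 := hyP.1 0 l
  have h2 := hyP.1 1 l
  have h5 := col_sum hyP l
  have h6 := col_sum hzP l
  have hlint : 0 < md 0 l ∧ 0 < md 1 l := by
    constructor
    · rw [hmd]
      have := lt_of_le_of_ne h1 (Ne.symm hbd.1)
      linarith
    · rw [hmd]
      have hvl : y 0 l < v l := lt_of_le_of_ne (by linarith) hbd.2
      linarith
  obtain ⟨ε, hε, a, b, ha, hb, hab, heq⟩ := key l j hlj hlint hjint
  have e1 : a * y 0 l + b * z 0 l = md 0 l + ε := by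
    have := congrFun (congrFun heq 0) l
    simp only [pert, Matrix.add_apply, Matrix.smul_apply, Matrix.of_apply, smul_eq_mul,
      if_pos rfl] at this
    rw [this]
    norm_num
  rw [hmd] at e1
  have : (a + b) * y 0 l = y 0 l + ε := by
    rw [← heql] at e1
    ring_nf
    ring_nf at e1
    linarith [e1]
  rw [hab, one_mul] at this
  linarith

lemma val_ne {m : ℕ} {j : Fin (m+3)} (h : j ≠ 0) : (j:ℕ) ≠ 0 := by
  intro hc
  exact h (Fin.ext (by simp [hc]))

lemma v_ne0 {m : ℕ} {v : Fin (m+3) → ℝ}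
    (hv : ∀ j, v j = if (j:ℕ) = 0 then 2*((m:ℝ)+3) - 4 else 2)
    {j : Fin (m+3)} (h : j ≠ 0) : v j = 2 := by
  rw [hv, if_neg (val_ne h)]

lemma v_eq0 {m : ℕ} {v : Fin (m+3) → ℝ}
    (hv : ∀ j, v j = if (j:ℕ) = 0 then 2*((m:ℝ)+3) - 4 else 2) :
    v 0 = 2*((m:ℝ)+3) - 4 := by
  rw [hv]; simp

lemma classify {m : ℕ} {u : Fin 2 → ℝ} {v : Fin (m+3) → ℝ}
    (hu : ∀ i, u i = 2*((m:ℝ)+3) - 3)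
    (hv : ∀ j, v j = if (j:ℕ) = 0 then 2*((m:ℝ)+3) - 4 else 2)
    {y : Matrix (Fin 2) (Fin (m+3)) ℝ} (hy : y ∈ Set.extremePoints ℝ (TP 2 (m+3) u v)) :
    (y 0 0 = 2*((m:ℝ)+3) - 4 ∧ ∃ f, f ≠ 0 ∧ y 0 f = 1 ∧ ∀ j, j ≠ 0 → j ≠ f → y 0 j = 0)
    ∨ (y 0 0 = 0 ∧ ∃ f, f ≠ 0 ∧ y 0 f = 1 ∧ ∀ j, j ≠ 0 → j ≠ f → y 0 j = 2)
    ∨ (0 < y 0 0 ∧ y 0 0 < 2*((m:ℝ)+3) - 4 ∧ ∀ j, j ≠ 0 → (y 0 j = 0 ∨ y 0 j = 2)) := by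
  have hyP : y ∈ TP 2 (m+3) u v := hy.1
  have hnn := hyP.1
  have hrow0 : ∑ l, y 0 l = 2*((m:ℝ)+3) - 3 := by rw [hyP.2.1 0, hu]
  have hub : ∀ l, y 0 l ≤ v l := fun l => by
    have := col_sum hyP l; linarith [hnn 1 l]
  have atmost : ∀ j k : Fin (m+3), j ≠ k → 0 < y 0 j → y 0 j < v j →
      0 < y 0 k → y 0 k < v k → False := by
    intro j k hjk hj1 hj2 hk1 hk2
    have hj1' : 0 < y 1 j := by have := col_sum hyP j; linarith
    have hk1' : 0 < y 1 k := by have := col_sum hyP k; linarith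
    set ε := min (min (y 0 j) (y 1 j)) (min (y 0 k) (y 1 k)) with hεdef
    have hε : 0 < ε := lt_min (lt_min hj1 hj1') (lt_min hk1 hk1')
    have e1 : ε ≤ y 0 j := le_trans (min_le_left _ _) (min_le_left _ _)
    have e2 : ε ≤ y 1 j := le_trans (min_le_left _ _) (min_le_right _ _)
    have e3 : ε ≤ y 0 k := le_trans (min_le_right _ _) (min_le_left _ _)
    have e4 : ε ≤ y 1 k := le_trans (min_le_right _ _) (min_le_right _ _)
    have memX : pert y j k ε ∈ TP 2 (m+3) u v :=
      pert_mem hyP hjk e2 (by linarith) e3 (by linarith)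
    have memX' : pert y j k (-ε) ∈ TP 2 (m+3) u v :=
      pert_mem hyP hjk (by linarith) (by linarith) (by linarith) (by linarith)
    have hfix := hy.2 memX memX' (mem_openSeg_pert y j k hε)
    have := congrFun (congrFun hfix 0) j
    simp only [pert, Matrix.of_apply, if_pos rfl] at this
    norm_num at this
    exact absurd this (by linarith)
  by_cases h0 : 0 < y 0 0 ∧ y 0 0 < v 0
  · right; right
    refine ⟨h0.1, by rw [← v_eq0 hv]; exact h0.2, ?_⟩
    intro j hj0
    by_contra hne
    push_neg at hne
    have hvj : v j = 2 := v_ne0 hv hj0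
    exact atmost 0 j (Ne.symm hj0) h0.1 h0.2
      (lt_of_le_of_ne (hnn 0 j) (Ne.symm hne.1)) (by rw [hvj]; exact lt_of_le_of_ne (by rw [← hvj]; exact hub j) hne.2)
  · have hb0 : y 0 0 = 0 ∨ y 0 0 = v 0 := by
      rcases not_and_or.mp h0 with h | h
      · left; linarith [hnn 0 0, not_lt.mp h]
      · right; linarith [hub 0, not_lt.mp h]
    by_cases hf : ∃ f, f ≠ 0 ∧ 0 < y 0 f ∧ y 0 f < v f
    · obtain ⟨f, hf0, hf1, hf2⟩ := hf
      have hvf : v f = 2 := v_ne0 hv hf0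
      have hrest : ∀ j ∈ (Finset.univ.erase (0 : Fin (m+3))).erase f,
          (y 0 j = 0 ∨ y 0 j = 2) := by
        intro j hj
        have hjf : j ≠ f := (Finset.mem_erase.mp hj).1
        have hj0 : j ≠ 0 := (Finset.mem_erase.mp (Finset.mem_erase.mp hj).2).1
        by_contra hne
        push_neg at hne
        have hvj : v j = 2 := v_ne0 hv hj0
        exact atmost f j (Ne.symm hjf) hf1 hf2
          (lt_of_le_of_ne (hnn 0 j) (Ne.symm hne.1))
          (by rw [hvj]; exact lt_of_le_of_ne (by rw [← hvj]; exact hub j) hne.2)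
      have hsplit := sum_split_two (show (0:Fin (m+3)) ≠ f from Ne.symm hf0) (y 0)
      obtain ⟨c, hc, hcsum⟩ := sum_zero_two _ _ hrest
      have hcard : ((Finset.univ.erase (0:Fin (m+3))).erase f).card = m + 1 := by
        rw [card_rest (show (0:Fin (m+3)) ≠ f from Ne.symm hf0)]
        omega
      have hcle : c ≤ m + 1 := hcard ▸ hc
      rw [hsplit, hcsum] at hrow0
      rcases hb0 with h00 | h00
      · right; left
        have hfval : y 0 f = 1 := by
          have b1 : 2*(c:ℝ) < 2*((m:ℝ)+3) - 3 := by rw [h00] at hrow0; linarith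
          have b2 : 2*((m:ℝ)+3) - 3 < 2*(c:ℝ) + 2 := by
            rw [h00] at hrow0; rw [hvf] at hf2; linarith
          have b1' : 2*c + 3 < 2*(m+3) := by exact_mod_cast (by push_cast; linarith : (2*c + 3 : ℝ) < 2*(m+3))
          have b2' : 2*(m+3) < 2*c + 5 := by exact_mod_cast (by push_cast; linarith : (2*(m+3) : ℝ) < 2*c + 5)
          have : c = m + 1 := by omega
          rw [h00] at hrow0
          rw [this] at hrow0
          push_cast at hrow0
          linarith
        refine ⟨h00, f, hf0, hfval, ?_⟩
        have hcval : (c:ℝ) = m + 1 := by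
          rw [h00, hfval] at hrow0; push_cast; linarith
        have hzero : ∑ l ∈ (Finset.univ.erase (0:Fin (m+3))).erase f, (2 - y 0 l) = 0 := by
          rw [Finset.sum_sub_distrib, Finset.sum_const, hcard, hcsum, hcval]
          push_cast; ring
        have hall := (Finset.sum_eq_zero_iff_of_nonneg ?_).mp hzero
        · intro j hj0 hjf
          have hj : j ∈ (Finset.univ.erase (0:Fin (m+3))).erase f :=
            Finset.mem_erase.mpr ⟨hjf, Finset.mem_erase.mpr ⟨hj0, Finset.mem_univ j⟩⟩
          have := hall j hj
          linarith
        · intro j hj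
          have hj0 : j ≠ 0 := (Finset.mem_erase.mp (Finset.mem_erase.mp hj).2).1
          have := hub j
          rw [v_ne0 hv hj0] at this
          linarith
      · left
        rw [v_eq0 hv] at h00
        have hfval : y 0 f = 1 := by
          have b1 : (0:ℝ) < 1 - 2*c := by rw [h00] at hrow0; linarith
          have : c = 0 := by
            by_contra hc0
            have : (1:ℝ) ≤ c := by exact_mod_cast Nat.one_le_iff_ne_zero.mpr hc0
            linarith
          rw [h00, this] at hrow0
          push_cast at hrow0
          linarith
        refine ⟨h00, f, hf0, hfval, ?_⟩
        have hcval : (c:ℝ) = 0 := by rw [h00, hfval] at hrow0; linarith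
        have hzero : ∑ l ∈ (Finset.univ.erase (0:Fin (m+3))).erase f, y 0 l = 0 := by
          rw [hcsum, hcval]; ring
        have hall := (Finset.sum_eq_zero_iff_of_nonneg ?_).mp hzero
        · intro j hj0 hjf
          exact hall j (Finset.mem_erase.mpr ⟨hjf, Finset.mem_erase.mpr ⟨hj0, Finset.mem_univ j⟩⟩)
        · intro j _; exact hnn 0 j
    · exfalso
      push_neg at hf
      have hrest : ∀ j ∈ Finset.univ.erase (0 : Fin (m+3)), (y 0 j = 0 ∨ y 0 j = 2) := by
        intro j hj
        have hj0 : j ≠ 0 := (Finset.mem_erase.mp hj).1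
        have hvj : v j = 2 := v_ne0 hv hj0
        rcases (hnn 0 j).lt_or_eq with h | h
        · right; rw [← hvj]; exact le_antisymm (hub j) (hf j hj0 h)
        · left; exact h.symm
      obtain ⟨c, hc, hcsum⟩ := sum_zero_two _ _ hrest
      rw [← Finset.add_sum_erase _ _ (Finset.mem_univ (0:Fin (m+3))), hcsum] at hrow0
      rcases hb0 with h00 | h00
      · rw [h00] at hrow0
        have hcr : (2*(c:ℝ)) = 2*((m:ℝ)+3) - 3 := by push_cast at hrow0 ⊢; linarith
        have h3 : 2*c + 3 = 2*(m+3) := by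
          have : ((2*c + 3 : ℕ) : ℝ) = ((2*(m+3) : ℕ) : ℝ) := by push_cast; linarith
          exact_mod_cast this
        omega
      · rw [v_eq0 hv] at h00
        rw [h00] at hrow0
        have : (2*c : ℝ) = 1 := by push_cast; linarith
        have : (2*c : ℕ) = 1 := by exact_mod_cast this
        omega

def TyO (m : ℕ) (y : Matrix (Fin 2) (Fin (m+3)) ℝ) : Prop :=
  y 0 0 = 2*((m:ℝ)+3) - 4 ∧ ∃ f, f ≠ 0 ∧ y 0 f = 1 ∧ ∀ j, j ≠ 0 → j ≠ f → y 0 j = 0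

def TyF (m : ℕ) (y : Matrix (Fin 2) (Fin (m+3)) ℝ) : Prop :=
  y 0 0 = 0 ∧ ∃ f, f ≠ 0 ∧ y 0 f = 1 ∧ ∀ j, j ≠ 0 → j ≠ f → y 0 j = 2

def TyV (m : ℕ) (y : Matrix (Fin 2) (Fin (m+3)) ℝ) : Prop :=
  0 < y 0 0 ∧ y 0 0 < 2*((m:ℝ)+3) - 4 ∧ ∀ j, j ≠ 0 → (y 0 j = 0 ∨ y 0 j = 2)

noncomputable def phi (m : ℕ) (y : Matrix (Fin 2) (Fin (m+3)) ℝ) : ℝ :=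
  (2*((m:ℝ)+3) - 3 - y 0 0)/2 +
    (if y 0 0 = 2*((m:ℝ)+3) - 4 then (if y 0 1 = 0 then 1/2 else -1/2)
     else if y 0 0 = 0 then (if y 0 1 = 1 then 3/2 else 1/2)
     else (if y 0 1 = 0 then 1 else 0))

lemma fin_one_ne_zero {m : ℕ} : (1 : Fin (m+3)) ≠ 0 := by
  intro h
  have := congrArg Fin.val h
  simp [Fin.val_one] at this

lemma mcast_nonneg (m : ℕ) : (0:ℝ) ≤ (m:ℝ) := Nat.cast_nonneg m

lemma phi_O_val {m : ℕ} {y : Matrix (Fin 2) (Fin (m+3)) ℝ} (h : TyO m y) :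
    phi m y = 0 ∨ phi m y = 1 := by
  obtain ⟨h0, f, hf0, hf1, hrest⟩ := h
  unfold phi
  rw [if_pos h0]
  by_cases hf : f = 1
  · left
    rw [if_neg (by rw [← hf, hf1]; norm_num), h0]
    ring
  · right
    rw [if_pos (hrest 1 fin_one_ne_zero (fun h => hf h.symm)), h0]
    ring

lemma phi_F_val {m : ℕ} {y : Matrix (Fin 2) (Fin (m+3)) ℝ} (h : TyF m y) :
    phi m y = ((m:ℝ)+3) ∨ phi m y = ((m:ℝ)+3) - 1 := by
  obtain ⟨h0, f, hf0, hf1, hrest⟩ := h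
  unfold phi
  rw [if_neg (by rw [h0]; intro h; have := mcast_nonneg m; linarith), if_pos h0]
  by_cases hf : f = 1
  · left
    rw [if_pos (by rw [← hf]; exact hf1), h0]
    ring
  · right
    rw [if_neg (by rw [hrest 1 fin_one_ne_zero (fun h => hf h.symm)]; norm_num), h0]
    ring

lemma reduce_out {n : ℕ} {v : Fin n → ℝ} {y z : Matrix (Fin 2) (Fin n) ℝ} {j k c : Fin n}
    (hjk : j ≠ k)
    (hout : ∀ l, l ≠ j → l ≠ k → (y 0 l = z 0 l ∧ (y 0 l = 0 ∨ y 0 l = v l)))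
    (hc : y 0 c ≠ z 0 c) :
    ∃ o, o ≠ c ∧ ∀ l, l ≠ c → l ≠ o → (y 0 l = z 0 l ∧ (y 0 l = 0 ∨ y 0 l = v l)) := by
  by_cases h1 : c = j
  · subst h1
    exact ⟨k, Ne.symm hjk, fun l hl1 hl2 => hout l hl1 hl2⟩
  · by_cases h2 : c = k
    · subst h2
      exact ⟨j, fun h => h1 h.symm, fun l hl1 hl2 => hout l hl2 hl1⟩
    · exact absurd (hout c h1 h2).1 hc

lemma case_OV {m : ℕ} {u : Fin 2 → ℝ} {v : Fin (m+3) → ℝ}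
    (hu : ∀ i, u i = 2*((m:ℝ)+3) - 3)
    (hv : ∀ j, v j = if (j:ℕ) = 0 then 2*((m:ℝ)+3) - 4 else 2)
    {y z : Matrix (Fin 2) (Fin (m+3)) ℝ}
    (hyP : y ∈ TP 2 (m+3) u v) (hzP : z ∈ TP 2 (m+3) u v)
    {j k : Fin (m+3)} (hjk : j ≠ k)
    (hout : ∀ l, l ≠ j → l ≠ k → (y 0 l = z 0 l ∧ (y 0 l = 0 ∨ y 0 l = v l)))
    (hO : TyO m y) (hV : TyV m z) : phi m z = phi m y + 1 := by
  obtain ⟨hy0, f, hf0, hyf, hyrest⟩ := hO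
  obtain ⟨hz0a, hz0b, hzmem⟩ := hV
  have hc0 : y 0 0 ≠ z 0 0 := by rw [hy0]; intro h; rw [← h] at hz0b; linarith
  obtain ⟨o, ho0, hout'⟩ := reduce_out hjk hout hc0
  have hfo : f = o := by
    by_contra hne
    have hb := hout' f hf0 hne
    rcases hb.2 with h | h
    · rw [hyf] at h; norm_num at h
    · rw [hyf, v_ne0 hv hf0] at h; norm_num at h
  subst hfo
  have hrest2 : ∀ l, l ≠ 0 → l ≠ f → z 0 l = 0 := fun l h1 h2 => by
    rw [← (hout' l h1 h2).1]; exact hyrest l h1 h2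
  have hzrow : ∑ l, z 0 l = 2*((m:ℝ)+3) - 3 := by rw [hzP.2.1 0, hu]
  rw [sum_split_two (Ne.symm hf0) (z 0)] at hzrow
  have hrest0 : ∑ l ∈ (Finset.univ.erase 0).erase f, z 0 l = 0 :=
    Finset.sum_eq_zero (fun x hx => hrest2 x
      (Finset.mem_erase.mp (Finset.mem_erase.mp hx).2).1 (Finset.mem_erase.mp hx).1)
  rw [hrest0, add_zero] at hzrow
  have hzf2 : z 0 f = 2 := by
    rcases hzmem f hf0 with h | h
    · rw [h, add_zero] at hzrow; rw [hzrow] at hz0b; linarith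
    · exact h
  have hz00 : z 0 0 = 2*((m:ℝ)+3) - 5 := by linarith
  have hm := mcast_nonneg m
  have hbz1 : ¬ (z 0 0 = 2*((m:ℝ)+3) - 4) := by rw [hz00]; intro h; linarith
  have hbz2 : ¬ (z 0 0 = 0) := by rw [hz00]; intro h; linarith
  unfold phi
  rw [if_pos hy0, if_neg hbz1, if_neg hbz2]
  by_cases hf : f = 1
  · have hy1 : y 0 1 = 1 := by rw [← hf]; exact hyf
    have hz1 : z 0 1 = 2 := by rw [← hf]; exact hzf2
    rw [if_neg (show ¬ y 0 1 = 0 by rw [hy1]; norm_num),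
        if_neg (show ¬ z 0 1 = 0 by rw [hz1]; norm_num), hy0, hz00]
    ring
  · have h1f : (1 : Fin (m+3)) ≠ f := fun h => hf h.symm
    have hy01 : y 0 1 = 0 := hyrest 1 fin_one_ne_zero h1f
    have hz01 : z 0 1 = 0 := by rw [← (hout' 1 fin_one_ne_zero h1f).1]; exact hy01
    rw [if_pos hy01, if_pos hz01, hy0, hz00]
    ring

lemma case_FV {m : ℕ} {u : Fin 2 → ℝ} {v : Fin (m+3) → ℝ}
    (hu : ∀ i, u i = 2*((m:ℝ)+3) - 3)
    (hv : ∀ j, v j = if (j:ℕ) = 0 then 2*((m:ℝ)+3) - 4 else 2)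
    {y z : Matrix (Fin 2) (Fin (m+3)) ℝ}
    (hyP : y ∈ TP 2 (m+3) u v) (hzP : z ∈ TP 2 (m+3) u v)
    {j k : Fin (m+3)} (hjk : j ≠ k)
    (hout : ∀ l, l ≠ j → l ≠ k → (y 0 l = z 0 l ∧ (y 0 l = 0 ∨ y 0 l = v l)))
    (hF : TyF m y) (hV : TyV m z) : phi m z = phi m y - 1 := by
  obtain ⟨hy0, f, hf0, hyf, hyrest⟩ := hF
  obtain ⟨hz0a, hz0b, hzmem⟩ := hV
  have hc0 : y 0 0 ≠ z 0 0 := by rw [hy0]; intro h; rw [← h] at hz0a; linarith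
  obtain ⟨o, ho0, hout'⟩ := reduce_out hjk hout hc0
  have hfo : f = o := by
    by_contra hne
    have hb := hout' f hf0 hne
    rcases hb.2 with h | h
    · rw [hyf] at h; norm_num at h
    · rw [hyf, v_ne0 hv hf0] at h; norm_num at h
  subst hfo
  have hrest2 : ∀ l, l ≠ 0 → l ≠ f → z 0 l = 2 := fun l h1 h2 => by
    rw [← (hout' l h1 h2).1]; exact hyrest l h1 h2
  have hzrow : ∑ l, z 0 l = 2*((m:ℝ)+3) - 3 := by rw [hzP.2.1 0, hu]
  rw [sum_split_two (Ne.symm hf0) (z 0)] at hzrow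
  have hcard : ((Finset.univ.erase (0:Fin (m+3))).erase f).card = m + 1 := by
    rw [Finset.card_erase_of_mem (Finset.mem_erase.mpr ⟨hf0, Finset.mem_univ f⟩),
        Finset.card_erase_of_mem (Finset.mem_univ (0:Fin (m+3)))]
    simp [Finset.card_univ]
  have hrest0 : ∑ l ∈ (Finset.univ.erase 0).erase f, z 0 l = 2*((m:ℝ)+1) := by
    rw [Finset.sum_congr rfl (fun x hx => hrest2 x
      (Finset.mem_erase.mp (Finset.mem_erase.mp hx).2).1 (Finset.mem_erase.mp hx).1)]
    rw [Finset.sum_const, hcard]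
    push_cast
    ring
  rw [hrest0] at hzrow
  have hzf2 : z 0 f = 0 := by
    rcases hzmem f hf0 with h | h
    · exact h
    · rw [h] at hzrow; linarith
  have hz00 : z 0 0 = 1 := by linarith
  have hm := mcast_nonneg m
  have hbz1 : ¬ (z 0 0 = 2*((m:ℝ)+3) - 4) := by rw [hz00]; intro h; linarith
  have hbz2 : ¬ (z 0 0 = 0) := by rw [hz00]; intro h; linarith
  have hby1 : ¬ (y 0 0 = 2*((m:ℝ)+3) - 4) := by rw [hy0]; intro h; linarith
  unfold phi
  rw [if_neg hby1, if_pos hy0, if_neg hbz1, if_neg hbz2]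
  by_cases hf : f = 1
  · have hy1 : y 0 1 = 1 := by rw [← hf]; exact hyf
    have hz1 : z 0 1 = 0 := by rw [← hf]; exact hzf2
    rw [if_pos (show y 0 1 = 1 from hy1), if_pos (show z 0 1 = 0 from hz1), hy0, hz00]
    ring
  · have h1f : (1 : Fin (m+3)) ≠ f := fun h => hf h.symm
    have hy01 : y 0 1 = 2 := hyrest 1 fin_one_ne_zero h1f
    have hz01 : z 0 1 = 2 := by rw [← (hout' 1 fin_one_ne_zero h1f).1]; exact hy01
    rw [if_neg (show ¬ y 0 1 = 1 by rw [hy01]; norm_num),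
        if_neg (show z 0 1 ≠ 0 by rw [hz01]; norm_num), hy0, hz00]
    ring

lemma case_OF {m : ℕ} {u : Fin 2 → ℝ} {v : Fin (m+3) → ℝ}
    (hu : ∀ i, u i = 2*((m:ℝ)+3) - 3)
    (hv : ∀ j, v j = if (j:ℕ) = 0 then 2*((m:ℝ)+3) - 4 else 2)
    {y z : Matrix (Fin 2) (Fin (m+3)) ℝ}
    (hyP : y ∈ TP 2 (m+3) u v) (hzP : z ∈ TP 2 (m+3) u v)
    {j k : Fin (m+3)} (hjk : j ≠ k)
    (hout : ∀ l, l ≠ j → l ≠ k → (y 0 l = z 0 l ∧ (y 0 l = 0 ∨ y 0 l = v l)))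
    (hO : TyO m y) (hF : TyF m z) : False := by
  obtain ⟨hy0, f, hf0, hyf, hyrest⟩ := hO
  obtain ⟨hz0, g, hg0, hzg, hzrest⟩ := hF
  have hm := mcast_nonneg m
  have hc0 : y 0 0 ≠ z 0 0 := by rw [hy0, hz0]; intro h; linarith
  obtain ⟨o, ho0, hout'⟩ := reduce_out hjk hout hc0
  by_cases hfo : f = o
  · subst hfo
    have final : ∀ l : Fin (m+3), l ≠ 0 → l ≠ f → False := by
      intro l hl0 hlf
      have heq := (hout' l hl0 hlf).1
      have hyl : y 0 l = 0 := hyrest l hl0 hlf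
      by_cases hlg : l = g
      · rw [hyl, hlg, hzg] at heq
        norm_num at heq
      · have hzl : z 0 l = 2 := hzrest l hl0 hlg
        rw [hyl, hzl] at heq
        norm_num at heq
    by_cases hf1 : f = 1
    · refine final ⟨2, by omega⟩ ?_ ?_
      · intro h; have := congrArg Fin.val h; simp at this
      · rw [hf1]; intro h; have := congrArg Fin.val h; simp [Fin.val_one] at this
    · exact final 1 fin_one_ne_zero (fun h => hf1 h.symm)
  · have hb := hout' f hf0 hfo
    rcases hb.2 with h | h
    · rw [hyf] at h; norm_num at h
    · rw [hyf, v_ne0 hv hf0] at h; norm_num at h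

lemma case_VV {m : ℕ} {u : Fin 2 → ℝ} {v : Fin (m+3) → ℝ}
    (hu : ∀ i, u i = 2*((m:ℝ)+3) - 3)
    (hv : ∀ j, v j = if (j:ℕ) = 0 then 2*((m:ℝ)+3) - 4 else 2)
    {y z : Matrix (Fin 2) (Fin (m+3)) ℝ} (hyz : y ≠ z)
    (hyP : y ∈ TP 2 (m+3) u v) (hzP : z ∈ TP 2 (m+3) u v)
    {j k : Fin (m+3)} (hjk : j ≠ k)
    (hout : ∀ l, l ≠ j → l ≠ k → (y 0 l = z 0 l ∧ (y 0 l = 0 ∨ y 0 l = v l)))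
    (hVy : TyV m y) (hVz : TyV m z) : |phi m z - phi m y| ≤ 1 := by
  obtain ⟨hya, hyb, hymem⟩ := hVy
  obtain ⟨hza, hzb, hzmem⟩ := hVz
  have hrep : ∃ o, o ≠ 0 ∧ ∀ l, l ≠ 0 → l ≠ o →
      (y 0 l = z 0 l ∧ (y 0 l = 0 ∨ y 0 l = v l)) := by
    by_cases h1 : j = 0
    · subst h1
      exact ⟨k, Ne.symm hjk, fun l hl1 hl2 => hout l hl1 hl2⟩
    · by_cases h2 : k = 0
      · subst h2
        exact ⟨j, h1, fun l hl1 hl2 => hout l hl2 hl1⟩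
      · exfalso
        have hb := (hout 0 (fun h => h1 h.symm) (fun h => h2 h.symm)).2
        rw [v_eq0 hv] at hb
        rcases hb with h | h
        · linarith
        · linarith
  obtain ⟨o, ho0, hout'⟩ := hrep
  have hyrow : ∑ l, y 0 l = 2*((m:ℝ)+3) - 3 := by rw [hyP.2.1 0, hu]
  have hzrow : ∑ l, z 0 l = 2*((m:ℝ)+3) - 3 := by rw [hzP.2.1 0, hu]
  rw [sum_split_two (Ne.symm ho0) (y 0)] at hyrow
  rw [sum_split_two (Ne.symm ho0) (z 0)] at hzrow
  have hre : ∑ l ∈ (Finset.univ.erase 0).erase o, y 0 l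
      = ∑ l ∈ (Finset.univ.erase 0).erase o, z 0 l :=
    Finset.sum_congr rfl (fun x hx => (hout' x
      (Finset.mem_erase.mp (Finset.mem_erase.mp hx).2).1 (Finset.mem_erase.mp hx).1).1)
  have hsum : y 0 0 + y 0 o = z 0 0 + z 0 o := by
    rw [hre] at hyrow; linarith
  have hboy1 : ¬ (y 0 0 = 2*((m:ℝ)+3) - 4) := by intro h; rw [h] at hyb; linarith
  have hboy2 : ¬ (y 0 0 = 0) := by intro h; rw [h] at hya; linarith
  have hboz1 : ¬ (z 0 0 = 2*((m:ℝ)+3) - 4) := by intro h; rw [h] at hzb; linarith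
  have hboz2 : ¬ (z 0 0 = 0) := by intro h; rw [h] at hza; linarith
  have hneq : y 0 o ≠ z 0 o := by
    intro h
    apply hyz
    apply eq_of_row0 hyP hzP
    intro l
    by_cases hl0 : l = 0
    · rw [hl0]; linarith
    · by_cases hlo : l = o
      · rw [hlo]; exact h
      · exact (hout' l hl0 hlo).1
  unfold phi
  rw [if_neg hboy1, if_neg hboy2, if_neg hboz1, if_neg hboz2]
  by_cases ho1 : o = 1
  · subst ho1
    rcases hymem 1 ho0 with hy1 | hy1 <;> rcases hzmem 1 ho0 with hz1 | hz1
    · exact absurd (hy1.trans hz1.symm) hneq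
    · rw [if_pos hy1, if_neg (show ¬ z 0 1 = 0 by rw [hz1]; norm_num)]
      rw [hy1, hz1] at hsum
      rw [abs_le]; constructor <;> linarith
    · rw [if_neg (show ¬ y 0 1 = 0 by rw [hy1]; norm_num), if_pos hz1]
      rw [hy1, hz1] at hsum
      rw [abs_le]; constructor <;> linarith
    · exact absurd (hy1.trans hz1.symm) hneq
  · have h1o : (1 : Fin (m+3)) ≠ o := fun h => ho1 h.symm
    have h11 : y 0 1 = z 0 1 := (hout' 1 fin_one_ne_zero h1o).1
    have hyo2 : y 0 o = 0 ∨ y 0 o = 2 := hymem o ho0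
    have hzo2 : z 0 o = 0 ∨ z 0 o = 2 := hzmem o ho0
    rw [h11]
    rcases hyo2 with h | h <;> rcases hzo2 with h' | h'
    · exact absurd (by rw [h, h']) hneq
    · rw [h, h'] at hsum
      rcases eq_or_ne (z 0 1) 0 with hz1 | hz1
      · rw [if_pos hz1]; rw [abs_le]; constructor <;> linarith
      · rw [if_neg hz1]; rw [abs_le]; constructor <;> linarith
    · rw [h, h'] at hsum
      rcases eq_or_ne (z 0 1) 0 with hz1 | hz1
      · rw [if_pos hz1]; rw [abs_le]; constructor <;> linarith
      · rw [if_neg hz1]; rw [abs_le]; constructor <;> linarith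
    · exact absurd (by rw [h, h']) hneq

lemma val_ne1 {m : ℕ} {j : Fin (m+3)} (h : j ≠ 1) : (j:ℕ) ≠ 1 := by
  intro hc
  exact h (Fin.ext (by simp [hc, Fin.val_one]))

lemma fin_zero_ne_one {m : ℕ} : (0 : Fin (m+3)) ≠ 1 := Ne.symm fin_one_ne_zero

lemma O_extreme {m : ℕ} {u : Fin 2 → ℝ} {v : Fin (m+3) → ℝ}
    (hu : ∀ i, u i = 2*((m:ℝ)+3) - 3)
    (hv : ∀ j, v j = if (j:ℕ) = 0 then 2*((m:ℝ)+3) - 4 else 2)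
    {O : Matrix (Fin 2) (Fin (m+3)) ℝ}
    (hO : ∀ i j, O i j = if (i:ℕ) = 0 then
        (if (j:ℕ) = 0 then 2*((m:ℝ)+3) - 4 else if (j:ℕ) = 1 then 1 else 0)
      else (if (j:ℕ) = 0 then 0 else if (j:ℕ) = 1 then 1 else 2)) :
    O ∈ Set.extremePoints ℝ (TP 2 (m+3) u v) := by
  have hm := mcast_nonneg m
  have hO00 : O 0 0 = 2*((m:ℝ)+3) - 4 := by rw [hO]; norm_num
  have hO01 : O 0 1 = 1 := by rw [hO]; norm_num [Fin.val_one]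
  have hO0l : ∀ l, l ≠ 0 → l ≠ 1 → O 0 l = 0 := by
    intro l h1 h2
    rw [hO]; norm_num [val_ne h1, val_ne1 h2]
  have hO10 : O 1 0 = 0 := by rw [hO]; norm_num
  have hO11 : O 1 1 = 1 := by rw [hO]; norm_num [Fin.val_one]
  have hO1l : ∀ l, l ≠ 0 → l ≠ 1 → O 1 l = 2 := by
    intro l h1 h2
    rw [hO]; norm_num [val_ne h1, val_ne1 h2]
  have hcard : ((Finset.univ.erase (0:Fin (m+3))).erase 1).card = m + 1 := by
    rw [Finset.card_erase_of_mem (Finset.mem_erase.mpr ⟨fin_one_ne_zero, Finset.mem_univ _⟩),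
        Finset.card_erase_of_mem (Finset.mem_univ (0:Fin (m+3)))]
    simp [Finset.card_univ]
  have hOP : O ∈ TP 2 (m+3) u v := by
    refine ⟨?_, ?_, ?_⟩
    · intro i l
      fin_cases i
      · show 0 ≤ O 0 l
        by_cases h1 : l = 0
        · subst h1; rw [hO00]; linarith
        · by_cases h2 : l = 1
          · subst h2; rw [hO01]; norm_num
          · rw [hO0l l h1 h2]
      · show 0 ≤ O 1 l
        by_cases h1 : l = 0
        · subst h1; rw [hO10]
        · by_cases h2 : l = 1
          · subst h2; rw [hO11]; norm_num
          · rw [hO1l l h1 h2]; norm_num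
    · intro i
      fin_cases i
      · show ∑ l, O 0 l = u 0
        rw [sum_split_two fin_zero_ne_one (O 0), hu,
            Finset.sum_eq_zero (fun x hx => hO0l x
              (Finset.mem_erase.mp (Finset.mem_erase.mp hx).2).1 (Finset.mem_erase.mp hx).1),
            hO00, hO01]
        ring
      · show ∑ l, O 1 l = u 1
        rw [sum_split_two fin_zero_ne_one (O 1), hu,
            Finset.sum_congr rfl (fun x hx => hO1l x
              (Finset.mem_erase.mp (Finset.mem_erase.mp hx).2).1 (Finset.mem_erase.mp hx).1),
            Finset.sum_const, hcard, hO10, hO11]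
        push_cast
        ring
    · intro l
      rw [Fin.sum_univ_two]
      by_cases h1 : l = 0
      · subst h1; rw [hO00, hO10, v_eq0 hv]; ring
      · by_cases h2 : l = 1
        · subst h2; rw [hO01, hO11, v_ne0 hv fin_one_ne_zero]; ring
        · rw [hO0l l h1 h2, hO1l l h1 h2, v_ne0 hv h1]; ring
  refine ⟨hOP, ?_⟩
  intro x1 hx1 x2 hx2 hseg
  obtain ⟨a, b, ha, hb, hab, heq⟩ := hseg
  have hent : ∀ i l, a * x1 i l + b * x2 i l = O i l := by
    intro i l
    have := congrFun (congrFun heq i) l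
    simpa [Matrix.add_apply, Matrix.smul_apply, smul_eq_mul] using this
  have hzz : ∀ i l, O i l = 0 → x1 i l = 0 ∧ x2 i l = 0 := by
    intro i l h0
    have he := hent i l
    rw [h0] at he
    have p1 : 0 ≤ a * x1 i l := mul_nonneg ha.le (hx1.1 i l)
    have p2 : 0 ≤ b * x2 i l := mul_nonneg hb.le (hx2.1 i l)
    have e1 : a * x1 i l = 0 := by linarith
    have e2 : b * x2 i l = 0 := by linarith
    exact ⟨(mul_eq_zero.mp e1).resolve_left (ne_of_gt ha),
           (mul_eq_zero.mp e2).resolve_left (ne_of_gt hb)⟩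
  have claim : ∀ w, w ∈ TP 2 (m+3) u v → (∀ i l, O i l = 0 → w i l = 0) → w = O := by
    intro w hw hwz
    have hw10 : w 1 0 = 0 := hwz 1 0 hO10
    have hw0l : ∀ l, l ≠ 0 → l ≠ 1 → w 0 l = 0 := fun l h1 h2 => hwz 0 l (hO0l l h1 h2)
    have hw00 : w 0 0 = 2*((m:ℝ)+3) - 4 := by
      have := col_sum hw 0
      rw [v_eq0 hv] at this
      linarith
    have hw01 : w 0 1 = 1 := by
      have hrow := hw.2.1 0
      rw [hu, sum_split_two fin_zero_ne_one (w 0),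
        Finset.sum_eq_zero (fun x hx => hw0l x
          (Finset.mem_erase.mp (Finset.mem_erase.mp hx).2).1 (Finset.mem_erase.mp hx).1)] at hrow
      linarith
    have hw11 : w 1 1 = 1 := by
      have := col_sum hw 1
      rw [v_ne0 hv fin_one_ne_zero] at this
      linarith
    have hw1l : ∀ l, l ≠ 0 → l ≠ 1 → w 1 l = 2 := by
      intro l h1 h2
      have := col_sum hw l
      rw [v_ne0 hv h1] at this
      linarith [hw0l l h1 h2]
    ext i l
    fin_cases i
    · show w 0 l = O 0 l
      by_cases h1 : l = 0
      · subst h1; rw [hw00, hO00]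
      · by_cases h2 : l = 1
        · subst h2; rw [hw01, hO01]
        · rw [hw0l l h1 h2, hO0l l h1 h2]
    · show w 1 l = O 1 l
      by_cases h1 : l = 0
      · subst h1; rw [hw10, hO10]
      · by_cases h2 : l = 1
        · subst h2; rw [hw11, hO11]
        · rw [hw1l l h1 h2, hO1l l h1 h2]
  exact claim x1 hx1 (fun i l h0 => (hzz i l h0).1)

lemma F_extreme {m : ℕ} {u : Fin 2 → ℝ} {v : Fin (m+3) → ℝ}
    (hu : ∀ i, u i = 2*((m:ℝ)+3) - 3)
    (hv : ∀ j, v j = if (j:ℕ) = 0 then 2*((m:ℝ)+3) - 4 else 2)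
    {F : Matrix (Fin 2) (Fin (m+3)) ℝ}
    (hF : ∀ i j, F i j = if (i:ℕ) = 1 then
        (if (j:ℕ) = 0 then 2*((m:ℝ)+3) - 4 else if (j:ℕ) = 1 then 1 else 0)
      else (if (j:ℕ) = 0 then 0 else if (j:ℕ) = 1 then 1 else 2)) :
    F ∈ Set.extremePoints ℝ (TP 2 (m+3) u v) := by
  have hm := mcast_nonneg m
  have hF00 : F 0 0 = 0 := by rw [hF]; norm_num
  have hF01 : F 0 1 = 1 := by rw [hF]; norm_num [Fin.val_one]
  have hF0l : ∀ l, l ≠ 0 → l ≠ 1 → F 0 l = 2 := by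
    intro l h1 h2
    rw [hF]; norm_num [val_ne h1, val_ne1 h2]
  have hF10 : F 1 0 = 2*((m:ℝ)+3) - 4 := by rw [hF]; norm_num
  have hF11 : F 1 1 = 1 := by rw [hF]; norm_num [Fin.val_one]
  have hF1l : ∀ l, l ≠ 0 → l ≠ 1 → F 1 l = 0 := by
    intro l h1 h2
    rw [hF]; norm_num [val_ne h1, val_ne1 h2]
  have hcard : ((Finset.univ.erase (0:Fin (m+3))).erase 1).card = m + 1 := by
    rw [Finset.card_erase_of_mem (Finset.mem_erase.mpr ⟨fin_one_ne_zero, Finset.mem_univ _⟩),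
        Finset.card_erase_of_mem (Finset.mem_univ (0:Fin (m+3)))]
    simp [Finset.card_univ]
  have hFP : F ∈ TP 2 (m+3) u v := by
    refine ⟨?_, ?_, ?_⟩
    · intro i l
      fin_cases i
      · show 0 ≤ F 0 l
        by_cases h1 : l = 0
        · subst h1; rw [hF00]
        · by_cases h2 : l = 1
          · subst h2; rw [hF01]; norm_num
          · rw [hF0l l h1 h2]; norm_num
      · show 0 ≤ F 1 l
        by_cases h1 : l = 0
        · subst h1; rw [hF10]; linarith
        · by_cases h2 : l = 1
          · subst h2; rw [hF11]; norm_num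
          · rw [hF1l l h1 h2]
    · intro i
      fin_cases i
      · show ∑ l, F 0 l = u 0
        rw [sum_split_two fin_zero_ne_one (F 0), hu,
            Finset.sum_congr rfl (fun x hx => hF0l x
              (Finset.mem_erase.mp (Finset.mem_erase.mp hx).2).1 (Finset.mem_erase.mp hx).1),
            Finset.sum_const, hcard, hF00, hF01]
        push_cast
        ring
      · show ∑ l, F 1 l = u 1
        rw [sum_split_two fin_zero_ne_one (F 1), hu,
            Finset.sum_eq_zero (fun x hx => hF1l x
              (Finset.mem_erase.mp (Finset.mem_erase.mp hx).2).1 (Finset.mem_erase.mp hx).1),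
            hF10, hF11]
        ring
    · intro l
      rw [Fin.sum_univ_two]
      by_cases h1 : l = 0
      · subst h1; rw [hF00, hF10, v_eq0 hv]; ring
      · by_cases h2 : l = 1
        · subst h2; rw [hF01, hF11, v_ne0 hv fin_one_ne_zero]; ring
        · rw [hF0l l h1 h2, hF1l l h1 h2, v_ne0 hv h1]; ring
  refine ⟨hFP, ?_⟩
  intro x1 hx1 x2 hx2 hseg
  obtain ⟨a, b, ha, hb, hab, heq⟩ := hseg
  have hent : ∀ i l, a * x1 i l + b * x2 i l = F i l := by
    intro i l
    have := congrFun (congrFun heq i) l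
    simpa [Matrix.add_apply, Matrix.smul_apply, smul_eq_mul] using this
  have hzz : ∀ i l, F i l = 0 → x1 i l = 0 ∧ x2 i l = 0 := by
    intro i l h0
    have he := hent i l
    rw [h0] at he
    have p1 : 0 ≤ a * x1 i l := mul_nonneg ha.le (hx1.1 i l)
    have p2 : 0 ≤ b * x2 i l := mul_nonneg hb.le (hx2.1 i l)
    have e1 : a * x1 i l = 0 := by linarith
    have e2 : b * x2 i l = 0 := by linarith
    exact ⟨(mul_eq_zero.mp e1).resolve_left (ne_of_gt ha),
           (mul_eq_zero.mp e2).resolve_left (ne_of_gt hb)⟩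
  have claim : ∀ w, w ∈ TP 2 (m+3) u v → (∀ i l, F i l = 0 → w i l = 0) → w = F := by
    intro w hw hwz
    have hw00 : w 0 0 = 0 := hwz 0 0 hF00
    have hw1l : ∀ l, l ≠ 0 → l ≠ 1 → w 1 l = 0 := fun l h1 h2 => hwz 1 l (hF1l l h1 h2)
    have hw10 : w 1 0 = 2*((m:ℝ)+3) - 4 := by
      have := col_sum hw 0
      rw [v_eq0 hv] at this
      linarith
    have hw0l : ∀ l, l ≠ 0 → l ≠ 1 → w 0 l = 2 := by
      intro l h1 h2
      have := col_sum hw l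
      rw [v_ne0 hv h1] at this
      linarith [hw1l l h1 h2]
    have hw01 : w 0 1 = 1 := by
      have hrow := hw.2.1 0
      rw [hu, sum_split_two fin_zero_ne_one (w 0),
        Finset.sum_congr rfl (fun x hx => hw0l x
          (Finset.mem_erase.mp (Finset.mem_erase.mp hx).2).1 (Finset.mem_erase.mp hx).1),
        Finset.sum_const, hcard] at hrow
      simp only [nsmul_eq_mul] at hrow
      push_cast at hrow
      linarith
    have hw11 : w 1 1 = 1 := by
      have := col_sum hw 1
      rw [v_ne0 hv fin_one_ne_zero] at this
      linarith
    ext i l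
    fin_cases i
    · show w 0 l = F 0 l
      by_cases h1 : l = 0
      · subst h1; rw [hw00, hF00]
      · by_cases h2 : l = 1
        · subst h2; rw [hw01, hF01]
        · rw [hw0l l h1 h2, hF0l l h1 h2]
    · show w 1 l = F 1 l
      by_cases h1 : l = 0
      · subst h1; rw [hw10, hF10]
      · by_cases h2 : l = 1
        · subst h2; rw [hw11, hF11]
        · rw [hw1l l h1 h2, hF1l l h1 h2]
  exact claim x1 hx1 (fun i l h0 => (hzz i l h0).1)

lemma step {m : ℕ} {u : Fin 2 → ℝ} {v : Fin (m+3) → ℝ}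
    (hu : ∀ i, u i = 2*((m:ℝ)+3) - 3)
    (hv : ∀ j, v j = if (j:ℕ) = 0 then 2*((m:ℝ)+3) - 4 else 2)
    {y z : Matrix (Fin 2) (Fin (m+3)) ℝ} (h : AdjVert 2 (m+3) u v y z) :
    |phi m z - phi m y| ≤ 1 := by
  obtain ⟨j, k, hjk, hout⟩ := adj_struct h
  obtain ⟨hyz, hyE, hzE, -⟩ := h
  have hyP : y ∈ TP 2 (m+3) u v := hyE.1
  have hzP : z ∈ TP 2 (m+3) u v := hzE.1
  have houts : ∀ l, l ≠ j → l ≠ k → (z 0 l = y 0 l ∧ (z 0 l = 0 ∨ z 0 l = v l)) := by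
    intro l h1 h2
    obtain ⟨e, bd⟩ := hout l h1 h2
    exact ⟨e.symm, by rw [← e]; exact bd⟩
  have hm := mcast_nonneg m
  rcases classify hu hv hyE with hy | hy | hy <;> rcases classify hu hv hzE with hz | hz | hz
  · rcases phi_O_val hy with h1 | h1 <;> rcases phi_O_val hz with h2 | h2 <;>
      rw [h1, h2, abs_le] <;> constructor <;> linarith
  · exact (case_OF hu hv hyP hzP hjk hout hy hz).elim
  · rw [case_OV hu hv hyP hzP hjk hout hy hz,
        show phi m y + 1 - phi m y = 1 by ring]
    norm_num
  · exact (case_OF hu hv hzP hyP hjk houts hz hy).elim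
  · rcases phi_F_val hy with h1 | h1 <;> rcases phi_F_val hz with h2 | h2 <;>
      rw [h1, h2, abs_le] <;> constructor <;> linarith
  · rw [case_FV hu hv hyP hzP hjk hout hy hz,
        show phi m y - 1 - phi m y = -1 by ring]
    norm_num
  · rw [case_OV hu hv hzP hyP hjk houts hz hy,
        show phi m z - (phi m z + 1) = -1 by ring]
    norm_num
  · rw [case_FV hu hv hzP hyP hjk houts hz hy,
        show phi m z - (phi m z - 1) = 1 by ring]
    norm_num
  · exact case_VV hu hv hyz hyP hzP hjk hout hy hz

end Aux

/-- for the 2×n transportation polytope (n ≥ 3) with margins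
u₁ = u₂ = 2n − 3, v₁ = 2n − 4, vⱼ = 2 (j ≥ 2), the two specific assignments O and F are
vertices and every edge walk from O to F has length at least n; in particular the
polytope has graph diameter at least n. -/
theorem stmt_9 (n : ℕ) (hn : 3 ≤ n)
    (u : Fin 2 → ℝ) (v : Fin n → ℝ) (O F : Matrix (Fin 2) (Fin n) ℝ)
    (hu : ∀ i, u i = 2 * n - 3)
    (hv : ∀ j, v j = if (j : ℕ) = 0 then 2 * n - 4 else 2)
    (hO : ∀ i j, O i j =
      if (i : ℕ) = 0 then
        (if (j : ℕ) = 0 then 2 * n - 4 else if (j : ℕ) = 1 then 1 else 0)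
      else
        (if (j : ℕ) = 0 then 0 else if (j : ℕ) = 1 then 1 else 2))
    (hF : ∀ i j, F i j =
      if (i : ℕ) = 1 then
        (if (j : ℕ) = 0 then 2 * n - 4 else if (j : ℕ) = 1 then 1 else 0)
      else
        (if (j : ℕ) = 0 then 0 else if (j : ℕ) = 1 then 1 else 2)) :
    O ∈ Set.extremePoints ℝ (TP 2 n u v) ∧
    F ∈ Set.extremePoints ℝ (TP 2 n u v) ∧
    ∀ (k : ℕ) (w : ℕ → Matrix (Fin 2) (Fin n) ℝ),
      w 0 = O → w k = F →
      (∀ i < k, AdjVert 2 n u v (w i) (w (i + 1))) →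
      n ≤ k := by
  obtain ⟨m, rfl⟩ : ∃ m, n = m + 3 := ⟨n - 3, by omega⟩
  have hm := mcast_nonneg m
  have hu' : ∀ i, u i = 2*((m:ℝ)+3) - 3 := by
    intro i; rw [hu]; push_cast; ring
  have hv' : ∀ j, v j = if (j:ℕ) = 0 then 2*((m:ℝ)+3) - 4 else 2 := by
    intro j
    rw [hv, show (2*(m+3) - 4 : ℕ) = 2*m + 2 from by omega]
    split_ifs <;> push_cast <;> ring
  have hO' : ∀ i j, O i j = if (i:ℕ) = 0 then
      (if (j:ℕ) = 0 then 2*((m:ℝ)+3) - 4 else if (j:ℕ) = 1 then 1 else 0)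
      else (if (j:ℕ) = 0 then 0 else if (j:ℕ) = 1 then 1 else 2) := by
    intro i j
    rw [hO, show (2*(m+3) - 4 : ℕ) = 2*m + 2 from by omega]
    split_ifs <;> push_cast <;> ring
  have hF' : ∀ i j, F i j = if (i:ℕ) = 1 then
      (if (j:ℕ) = 0 then 2*((m:ℝ)+3) - 4 else if (j:ℕ) = 1 then 1 else 0)
      else (if (j:ℕ) = 0 then 0 else if (j:ℕ) = 1 then 1 else 2) := by
    intro i j
    rw [hF, show (2*(m+3) - 4 : ℕ) = 2*m + 2 from by omega]
    split_ifs <;> push_cast <;> ring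
  refine ⟨O_extreme hu' hv' hO', F_extreme hu' hv' hF', ?_⟩
  intro k w hw0 hwk hadj
  have hO00 : O 0 0 = 2*((m:ℝ)+3) - 4 := by rw [hO']; norm_num
  have hO01 : O 0 1 = 1 := by rw [hO']; norm_num [Fin.val_one]
  have hF00 : F 0 0 = 0 := by rw [hF']; norm_num
  have hF01 : F 0 1 = 1 := by rw [hF']; norm_num [Fin.val_one]
  have hphiO : phi m O = 0 := by
    unfold phi
    rw [if_pos hO00, if_neg (show ¬ O 0 1 = 0 by rw [hO01]; norm_num), hO00]
    ring
  have hphiF : phi m F = (m:ℝ) + 3 := by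
    unfold phi
    rw [if_neg (show ¬ F 0 0 = 2*((m:ℝ)+3) - 4 by rw [hF00]; intro hc; linarith),
        if_pos hF00, if_pos hF01, hF00]
    ring
  have key : ∀ i, i ≤ k → |phi m (w i) - phi m (w 0)| ≤ (i:ℝ) := by
    intro i
    induction i with
    | zero => intro _; simp
    | succ p ih =>
      intro hik
      have h1 := ih (by omega)
      have h2 := step hu' hv' (hadj p (by omega))
      calc |phi m (w (p+1)) - phi m (w 0)|
          ≤ |phi m (w (p+1)) - phi m (w p)| + |phi m (w p) - phi m (w 0)| :=
            abs_sub_le _ _ _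
        _ ≤ (↑(p+1) : ℝ) := by push_cast; linarith
  have hfin := key k le_rfl
  rw [hw0, hwk, hphiO, hphiF, sub_zero] at hfin
  have : ((m:ℝ) + 3) ≤ (k:ℝ) := le_trans (le_abs_self _) hfin
  exact_mod_cast this
end
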